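/- arXiv:math/0508434 — 4 statements merged into one kernel-verified Lean document; each statement's English description precedes it below -/
import Mathlib

section
/- Let n ≥ 3, let k be an integer with 1 < k < d/2 such that 2k divides d, and let (d_{i1}, …, d_{i m_i}) for i = 1, …, n be partitions of d with m₁ + … + mₙ = (n−2)d + 2 such that every d_{1j} is a multiple of k and every d_{2j} and every d_{3j} is even. If these n partitions are realized by permutations, then d_{ij} ≤ d/k for i = 2, 3 and all j, and d_{ij} ≤ d/(2k) for all i = 4, …, n and all j. -/
set_option linter.unusedSectionVars false
set_option linter.unusedVariables false
set_option maxHeartbeats 2000000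

/-- Multiset of cycle lengths of a permutation of a finite type, counting each
fixed point as a cycle of length 1. -/
def fullCycleType {α : Type*} [Fintype α] [DecidableEq α] (τ : Equiv.Perm α) :
    Multiset ℕ :=
  τ.cycleType + Multiset.replicate (Fintype.card α - τ.cycleType.sum) 1

/-- The `n` partitions `parts 0, …, parts (n-1)` of `d` are realized by permutations:
there are `τ₁, …, τₙ ∈ S_d` with `τ₁ ⋯ τₙ = 1`, generating a subgroup acting
transitively on `{1, …, d}`, where the multiset of cycle lengths of `τᵢ`
(fixed points counting as cycles of length 1) is `parts i`. -/
def realizable (d n : ℕ) (parts : Fin n → Multiset ℕ) : Prop :=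
  ∃ τ : Fin n → Equiv.Perm (Fin d),
    (List.ofFn τ).prod = 1 ∧
    (∀ x y : Fin d, ∃ g ∈ Subgroup.closure (Set.range τ), g x = y) ∧
    ∀ i, fullCycleType (τ i) = parts i

open Finset Equiv Equiv.Perm Relation

section Toolkit

variable {α : Type*} [Fintype α] [DecidableEq α]

/-- The equivalence class of `x` under relation `r`, as a `Finset`. -/
noncomputable def clsFin (r : α → α → Prop) (x : α) : Finset α :=
  @Finset.filter _ (r x) (Classical.decPred _) Finset.univ

/-- Number of classes of `r`. -/
noncomputable def ncls (r : α → α → Prop) : ℕ :=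
  (Finset.univ.image (clsFin r)).card

/-- number of orbits (cycles incl. fixed points) of a permutation -/
noncomputable def cOrb (σ : Equiv.Perm α) : ℕ := ncls σ.SameCycle

/-- the twisted lift of a permutation -/
def liftPerm {G : Type*} [Group G] (σ : Equiv.Perm α) (g : G) : Equiv.Perm (α × G) :=
  Equiv.prodCongr σ (Equiv.mulLeft g)

/-- one-step relation generated by a list of permutations -/
def stepRel (T : List (Equiv.Perm α)) (x y : α) : Prop := ∃ τ ∈ T, τ x = y

theorem mem_clsFin {r : α → α → Prop} {x y : α} : y ∈ clsFin r x ↔ r x y := by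
  simp [clsFin]

theorem self_mem_clsFin {r : α → α → Prop} (hr : Equivalence r) (x : α) :
    x ∈ clsFin r x := mem_clsFin.2 (hr.refl x)

theorem clsFin_eq_of_rel {r : α → α → Prop} (hr : Equivalence r) {x y : α}
    (h : r x y) : clsFin r x = clsFin r y := by
  ext z; simp only [mem_clsFin]
  exact ⟨fun hz => hr.trans (hr.symm h) hz, fun hz => hr.trans h hz⟩

theorem rel_of_mem_clsFin {r : α → α → Prop} {x y : α}
    (h : y ∈ clsFin r x) : r x y := mem_clsFin.1 h

theorem ncls_le_card (r : α → α → Prop) : ncls r ≤ Fintype.card α :=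
  le_trans (card_image_le) (by simp)

/-- the partition into classes covers `α` with disjoint pieces -/
theorem sum_card_cls {r : α → α → Prop} (hr : Equivalence r) :
    ∑ S ∈ Finset.univ.image (clsFin r), S.card = Fintype.card α := by
  classical
  rw [← Finset.card_biUnion]
  · congr 1
    apply Finset.eq_univ_iff_forall.2
    intro x
    exact Finset.mem_biUnion.2 ⟨clsFin r x, mem_image_of_mem _ (mem_univ x),
      self_mem_clsFin hr x⟩
  · intro S hS Tt hT hST
    obtain ⟨x, -, rfl⟩ := Finset.mem_image.1 hS
    obtain ⟨y, -, rfl⟩ := Finset.mem_image.1 hT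
    refine Finset.disjoint_left.2 fun z hzx hzy => hST ?_
    exact clsFin_eq_of_rel hr (hr.trans (rel_of_mem_clsFin hzx) (hr.symm (rel_of_mem_clsFin hzy)))

/-- Core counting package. -/
theorem ncls_pkg {r r' : α → α → Prop} (hr : Equivalence r) (hr' : Equivalence r') (a b : α)
    (H1 : ∀ x, a ∉ clsFin r x → b ∉ clsFin r x → clsFin r x = clsFin r' x)
    (H2 : ∀ x, a ∉ clsFin r' x → b ∉ clsFin r' x → clsFin r' x = clsFin r x) :
    ncls r ≤ ncls r' + 1 ∧ (¬ r a b → r' a b → ncls r = ncls r' + 1) := by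
  classical
  have key : ∀ (s : α → α → Prop), Equivalence s → ∀ S ∈ (Finset.univ.image (clsFin s)).filter
      (fun S => a ∈ S ∨ b ∈ S), S = clsFin s a ∨ S = clsFin s b := by
    intro s hs S hS
    rw [Finset.mem_filter] at hS
    obtain ⟨x, -, rfl⟩ := Finset.mem_image.1 hS.1
    rcases hS.2 with h | h
    · exact Or.inl (clsFin_eq_of_rel hs (mem_clsFin.1 h))
    · exact Or.inr (clsFin_eq_of_rel hs (mem_clsFin.1 h))
  have havoid : (Finset.univ.image (clsFin r)).filter (fun S => ¬ (a ∈ S ∨ b ∈ S))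
      = (Finset.univ.image (clsFin r')).filter (fun S => ¬ (a ∈ S ∨ b ∈ S)) := by
    ext S
    simp only [Finset.mem_filter, Finset.mem_image, not_or]
    constructor
    · rintro ⟨⟨x, -, rfl⟩, hnp⟩
      have heq := H1 x hnp.1 hnp.2
      exact ⟨⟨x, mem_univ x, heq.symm⟩, hnp⟩
    · rintro ⟨⟨x, -, rfl⟩, hnp⟩
      have heq := H2 x hnp.1 hnp.2
      exact ⟨⟨x, mem_univ x, heq.symm⟩, hnp⟩
  have hsplit : ∀ (s : α → α → Prop), ncls s
      = ((Finset.univ.image (clsFin s)).filter (fun S => a ∈ S ∨ b ∈ S)).card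
        + ((Finset.univ.image (clsFin s)).filter (fun S => ¬ (a ∈ S ∨ b ∈ S))).card := by
    intro s
    exact (Finset.card_filter_add_card_filter_not
      (p := fun S => a ∈ S ∨ b ∈ S)).symm
  have hmem : ∀ (s : α → α → Prop), Equivalence s →
      clsFin s a ∈ (Finset.univ.image (clsFin s)).filter (fun S => a ∈ S ∨ b ∈ S) := by
    intro s hs
    exact Finset.mem_filter.2 ⟨Finset.mem_image.2 ⟨a, mem_univ a, rfl⟩,
      Or.inl (self_mem_clsFin hs a)⟩
  have hub : ∀ (s : α → α → Prop), Equivalence s →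
      ((Finset.univ.image (clsFin s)).filter (fun S => a ∈ S ∨ b ∈ S)).card ≤ 2 := by
    intro s hs
    have hsub : (Finset.univ.image (clsFin s)).filter (fun S => a ∈ S ∨ b ∈ S)
        ⊆ {clsFin s a, clsFin s b} := by
      intro S hS
      rcases key s hs S hS with h | h <;> simp [h]
    exact le_trans (Finset.card_le_card hsub) (Finset.card_insert_le _ _ |>.trans (by simp))
  have hlb : ∀ (s : α → α → Prop), Equivalence s →
      1 ≤ ((Finset.univ.image (clsFin s)).filter (fun S => a ∈ S ∨ b ∈ S)).card :=
    fun s hs => Finset.card_pos.2 ⟨_, hmem s hs⟩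
  have hAr := congrArg Finset.card havoid
  constructor
  · rw [hsplit r, hsplit r']
    have h1 := hub r hr
    have h2 := hlb r' hr'
    omega
  · intro hnab hab'
    have hMr : ((Finset.univ.image (clsFin r)).filter (fun S => a ∈ S ∨ b ∈ S)).card = 2 := by
      have hne : clsFin r a ≠ clsFin r b := by
        intro h
        exact hnab (mem_clsFin.1 (h ▸ self_mem_clsFin hr b))
      have hsub : ({clsFin r a, clsFin r b} : Finset (Finset α))
          ⊆ (Finset.univ.image (clsFin r)).filter (fun S => a ∈ S ∨ b ∈ S) := by
        intro S hS
        simp only [Finset.mem_insert, Finset.mem_singleton] at hS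
        rcases hS with rfl | rfl
        · exact hmem r hr
        · exact Finset.mem_filter.2 ⟨Finset.mem_image.2 ⟨b, mem_univ b, rfl⟩,
            Or.inr (self_mem_clsFin hr b)⟩
      have h2 : ({clsFin r a, clsFin r b} : Finset (Finset α)).card = 2 := by
        rw [Finset.card_insert_of_notMem (by simpa using hne), Finset.card_singleton]
      have h3 := Finset.card_le_card hsub
      have h4 := hub r hr
      omega
    have hMr' : ((Finset.univ.image (clsFin r')).filter (fun S => a ∈ S ∨ b ∈ S)).card = 1 := by
      have hsub : (Finset.univ.image (clsFin r')).filter (fun S => a ∈ S ∨ b ∈ S)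
          ⊆ {clsFin r' a} := by
        intro S hS
        rcases key r' hr' S hS with h | h
        · simp [h]
        · simp [h, clsFin_eq_of_rel hr' hab']
      have h3 := Finset.card_le_card hsub
      have h4 := hlb r' hr'
      simp only [Finset.card_singleton] at h3
      omega
    rw [hsplit r, hsplit r', hMr, hMr']
    omega

theorem sameCycle_equivalence (σ : Perm α) : Equivalence σ.SameCycle :=
  ⟨SameCycle.refl σ, SameCycle.symm, SameCycle.trans⟩

theorem sc_exists_pow {σ : Perm α} {x y : α} :
    σ.SameCycle x y ↔ ∃ i : ℕ, (σ ^ i) x = y := by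
  constructor
  · intro h
    obtain ⟨i, -, hi⟩ := h.exists_pow_eq'
    exact ⟨i, hi⟩
  · rintro ⟨i, rfl⟩
    exact ⟨(i : ℤ), by rw [zpow_natCast]⟩

theorem sameCycle_of_fixed {σ : Perm α} {x y : α} (hx : σ x = x)
    (h : σ.SameCycle x y) : y = x := by
  obtain ⟨i, rfl⟩ := h
  exact zpow_apply_eq_self_of_apply_eq_self hx i

theorem walk_eq {σ : Perm α} {a b x : α}
    (hcls : ∀ y, σ.SameCycle x y → y ≠ a ∧ y ≠ b) :
    ∀ i : ℕ, ((Equiv.swap a b * σ) ^ i) x = (σ ^ i) x := by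
  intro i
  induction i with
  | zero => simp
  | succ i ih =>
    have hsc : σ.SameCycle x ((σ ^ (i + 1)) x) := ⟨((i+1 : ℕ) : ℤ), by rw [zpow_natCast]⟩
    have hne := hcls _ hsc
    rw [pow_succ', pow_succ', mul_apply, mul_apply, ih, mul_apply, ← mul_apply σ,
      ← pow_succ']
    exact Equiv.swap_apply_of_ne_of_ne hne.1 hne.2

theorem clsFin_swap_eq {σ : Perm α} {a b x : α}
    (ha : a ∉ clsFin σ.SameCycle x) (hb : b ∉ clsFin σ.SameCycle x) :
    clsFin σ.SameCycle x = clsFin (Equiv.swap a b * σ).SameCycle x := by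
  have hcls : ∀ y, σ.SameCycle x y → y ≠ a ∧ y ≠ b := by
    intro y hy
    constructor
    · rintro rfl; exact ha (mem_clsFin.2 hy)
    · rintro rfl; exact hb (mem_clsFin.2 hy)
  ext y
  rw [mem_clsFin, mem_clsFin, sc_exists_pow, sc_exists_pow]
  exact exists_congr fun i => by rw [walk_eq hcls i]

theorem swap_swap_cancel (a b : α) (σ : Perm α) :
    Equiv.swap a b * (Equiv.swap a b * σ) = σ := by
  rw [← mul_assoc, Equiv.swap_mul_self, one_mul]

theorem sameCycle_swap_merge {σ : Perm α} {a b : α}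
    (hnab : ¬ σ.SameCycle a b) : (Equiv.swap a b * σ).SameCycle a b := by
  have hex : ∃ i, 0 < i ∧ (σ ^ i) b = b :=
    ⟨orderOf σ, orderOf_pos σ, by rw [pow_orderOf_eq_one]; rfl⟩
  set m := Nat.find hex with hm
  obtain ⟨hmpos, hmfix⟩ := Nat.find_spec hex
  have hmin : ∀ j, j < m → 0 < j → (σ ^ j) b ≠ b := by
    intro j hj hjpos hfix
    exact Nat.find_min hex hj ⟨hjpos, hfix⟩
  have aux : ∀ i, i < m → ((Equiv.swap a b * σ) ^ i) b = (σ ^ i) b := by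
    intro i
    induction i with
    | zero => simp
    | succ i ih =>
      intro hi
      have hia : (σ ^ (i+1)) b ≠ a := by
        intro h
        exact hnab (SameCycle.symm ⟨((i+1 : ℕ) : ℤ), by rw [zpow_natCast]; exact h⟩)
      have hib : (σ ^ (i+1)) b ≠ b := hmin _ hi (Nat.succ_pos i)
      rw [pow_succ', pow_succ', mul_apply, mul_apply, ih (by omega), mul_apply,
        ← mul_apply σ, ← pow_succ']
      exact Equiv.swap_apply_of_ne_of_ne hia hib
  have key : ((Equiv.swap a b * σ) ^ m) b = a := by
    have hm1 : m - 1 + 1 = m := Nat.succ_pred_eq_of_pos hmpos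
    rw [← hm1, pow_succ', mul_apply, aux _ (by omega), mul_apply, ← mul_apply σ, ← pow_succ',
      hm1, hmfix]
    exact Equiv.swap_apply_right a b
  exact SameCycle.symm (show SameCycle (Equiv.swap a b * σ) b a from
    ⟨(m : ℤ), by rw [zpow_natCast]; exact key⟩)

theorem cOrb_swap_le (σ : Perm α) (a b : α) :
    cOrb σ ≤ cOrb (Equiv.swap a b * σ) + 1 := by
  refine (ncls_pkg (sameCycle_equivalence σ) (sameCycle_equivalence _) a b ?_ ?_).1
  · intro x ha hb; exact clsFin_swap_eq ha hb
  · intro x ha hb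
    have := clsFin_swap_eq (σ := Equiv.swap a b * σ) (a := a) (b := b) ha hb
    rw [swap_swap_cancel] at this
    exact this

theorem cOrb_merge {σ : Perm α} {a b : α} (hnab : ¬ σ.SameCycle a b) :
    cOrb σ = cOrb (Equiv.swap a b * σ) + 1 := by
  refine (ncls_pkg (sameCycle_equivalence σ) (sameCycle_equivalence _) a b ?_ ?_).2
    hnab (sameCycle_swap_merge hnab)
  · intro x ha hb; exact clsFin_swap_eq ha hb
  · intro x ha hb
    have := clsFin_swap_eq (σ := Equiv.swap a b * σ) (a := a) (b := b) ha hb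
    rw [swap_swap_cancel] at this
    exact this

theorem cOrb_split {σ : Perm α} {x : α} (hx : σ x ≠ x) :
    cOrb (Equiv.swap x (σ x) * σ) = cOrb σ + 1 := by
  set σ₁ := Equiv.swap x (σ x) * σ with hσ₁
  have hfix : σ₁ x = x := by
    rw [hσ₁, mul_apply]
    exact Equiv.swap_apply_right x (σ x)
  have hback : Equiv.swap x (σ x) * σ₁ = σ := swap_swap_cancel _ _ _
  refine (ncls_pkg (sameCycle_equivalence σ₁) (sameCycle_equivalence σ) x (σ x) ?_ ?_).2 ?_ ?_
  · intro z hza hzb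
    have := clsFin_swap_eq (σ := σ₁) (a := x) (b := σ x) (x := z) hza hzb
    rwa [hback] at this
  · intro z hza hzb
    have := clsFin_swap_eq (σ := σ) (a := x) (b := σ x) (x := z) hza hzb
    rwa [← hσ₁] at this
  · intro h
    exact hx (sameCycle_of_fixed hfix h)
  · exact ⟨(1 : ℤ), by simp⟩

theorem cOrb_one : cOrb (1 : Perm α) = Fintype.card α := by
  have hcls : ∀ x : α, clsFin (SameCycle (1 : Perm α)) x = {x} := by
    intro x
    ext y
    rw [mem_clsFin, sameCycle_one, Finset.mem_singleton, eq_comm]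
  unfold cOrb ncls
  calc (Finset.univ.image (clsFin (SameCycle (1 : Perm α)))).card
      = (Finset.univ.image (fun x : α => ({x} : Finset α))).card := by
        congr 1; apply Finset.image_congr; intro x _; exact hcls x
    _ = Finset.univ.card := Finset.card_image_of_injective _ fun x y h => by
        simpa using h
    _ = Fintype.card α := Finset.card_univ

theorem ncls_eq_card_of_eq {r : α → α → Prop} (h : ∀ x y, r x y ↔ x = y) :
    ncls r = Fintype.card α := by
  have hcls : ∀ x : α, clsFin r x = {x} := by
    intro x; ext y
    rw [mem_clsFin, h, Finset.mem_singleton, eq_comm]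
  unfold ncls
  calc (Finset.univ.image (clsFin r)).card
      = (Finset.univ.image (fun x : α => ({x} : Finset α))).card := by
        congr 1; apply Finset.image_congr; intro x _; exact hcls x
    _ = Finset.univ.card := Finset.card_image_of_injective _ fun x y h2 => by simpa using h2
    _ = Fintype.card α := Finset.card_univ

/-- every permutation is a product of `card α - cOrb σ` transpositions -/
theorem exists_swap_decomp (σ : Perm α) :
    ∃ T : List (Perm α), (∀ t ∈ T, t.IsSwap) ∧ T.prod = σ ∧
      T.length + cOrb σ = Fintype.card α := by
  have main : ∀ n (σ : Perm α), Fintype.card α ≤ cOrb σ + n →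
      ∃ T : List (Perm α), (∀ t ∈ T, t.IsSwap) ∧ T.prod = σ ∧
        T.length + cOrb σ = Fintype.card α := by
    intro n
    induction n with
    | zero =>
      intro σ hσ
      have h1 : σ = 1 := by
        by_contra hne
        have : ∃ x, σ x ≠ x := by
          by_contra hall
          push_neg at hall
          exact hne (Equiv.ext fun x => by rw [hall x]; rfl)
        obtain ⟨x, hx⟩ := this
        have := cOrb_split hx
        have := ncls_le_card (Equiv.swap x (σ x) * σ).SameCycle
        have := ncls_le_card σ.SameCycle
        unfold cOrb at *
        omega
      subst h1
      exact ⟨[], by simp, by simp, by simp [cOrb_one]⟩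
    | succ n ih =>
      intro σ hσ
      by_cases hne : σ = 1
      · subst hne
        exact ⟨[], by simp, by simp, by simp [cOrb_one]⟩
      · have : ∃ x, σ x ≠ x := by
          by_contra hall
          push_neg at hall
          exact hne (Equiv.ext fun x => by rw [hall x]; rfl)
        obtain ⟨x, hx⟩ := this
        have hstep := cOrb_split hx
        obtain ⟨T₁, hsw, hprod, hlen⟩ := ih (Equiv.swap x (σ x) * σ) (by omega)
        refine ⟨Equiv.swap x (σ x) :: T₁, ?_, ?_, ?_⟩
        · intro t ht
          rcases List.mem_cons.1 ht with rfl | ht'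
          · exact ⟨x, σ x, Ne.symm hx, rfl⟩
          · exact hsw t ht'
        · rw [List.prod_cons, hprod, swap_swap_cancel]
        · simp only [List.length_cons]
          omega
  exact main (Fintype.card α) σ (by have := ncls_le_card σ.SameCycle; unfold cOrb; omega)

theorem stepRel_mono {T T' : List (Perm α)} (h : ∀ τ ∈ T', τ ∈ T) {x y : α} :
    EqvGen (stepRel T') x y → EqvGen (stepRel T) x y :=
  fun hxy => EqvGen.mono (r := stepRel T') (p := stepRel T)
    (by intro a b hab; obtain ⟨τ, hτ, he⟩ := hab; exact ⟨τ, h τ hτ, he⟩) x y hxy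

theorem eqvGen_walk (T : List (Perm α)) (z : α) : EqvGen (stepRel T) z (T.prod z) := by
  induction T generalizing z with
  | nil => simpa using EqvGen.refl z
  | cons τ T' ih =>
    rw [List.prod_cons, mul_apply]
    refine EqvGen.trans _ _ _ (stepRel_mono (fun τ h => List.mem_cons_of_mem _ h) (ih z)) ?_
    exact EqvGen.rel _ _ ⟨τ, List.mem_cons_self, rfl⟩

theorem sameCycle_le_eqvGen (T : List (Perm α)) {x y : α}
    (h : T.prod.SameCycle x y) : EqvGen (stepRel T) x y := by
  obtain ⟨i, rfl⟩ := sc_exists_pow.1 h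
  clear h
  induction i with
  | zero => simpa using EqvGen.refl x
  | succ i ih =>
    rw [pow_succ', mul_apply]
    exact EqvGen.trans _ _ _ ih (eqvGen_walk T _)

/-- characterization of the effect of adding one swap generator -/
theorem eqvGen_cons_swap {T' : List (Perm α)} {a b x y : α} :
    EqvGen (stepRel (Equiv.swap a b :: T')) x y ↔
      (EqvGen (stepRel T') x y ∨
        (EqvGen (stepRel T') x a ∧ EqvGen (stepRel T') b y) ∨
        (EqvGen (stepRel T') x b ∧ EqvGen (stepRel T') a y)) := by
  set r' := EqvGen (stepRel T') with hr'
  have e' : Equivalence r' := EqvGen.is_equivalence _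
  constructor
  · intro h
    induction h with
    | rel u v huv =>
      obtain ⟨τ, hτ, rfl⟩ := huv
      rcases List.mem_cons.1 hτ with rfl | hτ'
      · by_cases hua : u = a
        · subst hua
          rw [Equiv.swap_apply_left]
          exact Or.inr (Or.inl ⟨e'.refl u, e'.refl b⟩)
        · by_cases hub : u = b
          · subst hub
            rw [Equiv.swap_apply_right]
            exact Or.inr (Or.inr ⟨e'.refl u, e'.refl a⟩)
          · rw [Equiv.swap_apply_of_ne_of_ne hua hub]
            exact Or.inl (e'.refl u)
      · exact Or.inl (EqvGen.rel _ _ ⟨τ, hτ', rfl⟩)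
    | refl u => exact Or.inl (e'.refl u)
    | symm u v _ ih =>
      rcases ih with h1 | ⟨h1, h2⟩ | ⟨h1, h2⟩
      · exact Or.inl (e'.symm h1)
      · exact Or.inr (Or.inr ⟨e'.symm h2, e'.symm h1⟩)
      · exact Or.inr (Or.inl ⟨e'.symm h2, e'.symm h1⟩)
    | trans u v w _ _ ih1 ih2 =>
      rcases ih1 with h1 | ⟨h1a, h1b⟩ | ⟨h1a, h1b⟩ <;>
        rcases ih2 with h2 | ⟨h2a, h2b⟩ | ⟨h2a, h2b⟩
      · exact Or.inl (e'.trans h1 h2)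
      · exact Or.inr (Or.inl ⟨e'.trans h1 h2a, h2b⟩)
      · exact Or.inr (Or.inr ⟨e'.trans h1 h2a, h2b⟩)
      · exact Or.inr (Or.inl ⟨h1a, e'.trans h1b h2⟩)
      · exact Or.inr (Or.inr ⟨e'.trans h1a (e'.trans (e'.symm h2a) (e'.symm h1b)),
          e'.trans (e'.symm h2a) (e'.trans (e'.symm h1b) h2b)⟩)
      · exact Or.inl (e'.trans h1a h2b)
      · exact Or.inr (Or.inr ⟨h1a, e'.trans h1b h2⟩)
      · exact Or.inl (e'.trans h1a h2b)
      · exact Or.inr (Or.inl ⟨e'.trans h1a (e'.trans (e'.symm h2a) (e'.symm h1b)),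
          e'.trans (e'.symm h2a) (e'.trans (e'.symm h1b) h2b)⟩)
  · intro h
    have hmono : ∀ {u v}, r' u v → EqvGen (stepRel (Equiv.swap a b :: T')) u v :=
      fun h => stepRel_mono (fun τ h => List.mem_cons_of_mem _ h) h
    have hab : EqvGen (stepRel (Equiv.swap a b :: T')) a b :=
      EqvGen.rel _ _ ⟨Equiv.swap a b, List.mem_cons_self, Equiv.swap_apply_left a b⟩
    rcases h with h1 | ⟨h1, h2⟩ | ⟨h1, h2⟩
    · exact hmono h1
    · exact EqvGen.trans _ _ _ (hmono h1) (EqvGen.trans _ _ _ hab (hmono h2))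
    · exact EqvGen.trans _ _ _ (hmono h1)
        (EqvGen.trans _ _ _ (EqvGen.symm _ _ hab) (hmono h2))

theorem ncls_cons_swap_collapse {T' : List (Perm α)} {a b : α}
    (hab : EqvGen (stepRel T') a b) :
    ncls (EqvGen (stepRel (Equiv.swap a b :: T'))) = ncls (EqvGen (stepRel T')) := by
  have e' : Equivalence (EqvGen (stepRel T')) := EqvGen.is_equivalence _
  have : EqvGen (stepRel (Equiv.swap a b :: T')) = EqvGen (stepRel T') := by
    funext x y
    apply propext
    rw [eqvGen_cons_swap]
    constructor
    · rintro (h | ⟨h1, h2⟩ | ⟨h1, h2⟩)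
      · exact h
      · exact e'.trans h1 (e'.trans hab h2)
      · exact e'.trans h1 (e'.trans (e'.symm hab) h2)
    · exact Or.inl
  rw [this]

theorem ncls_cons_swap_le {T' : List (Perm α)} (a b : α) :
    ncls (EqvGen (stepRel T')) ≤ ncls (EqvGen (stepRel (Equiv.swap a b :: T'))) + 1 := by
  have e' : Equivalence (EqvGen (stepRel T')) := EqvGen.is_equivalence _
  have e : Equivalence (EqvGen (stepRel (Equiv.swap a b :: T'))) := EqvGen.is_equivalence _
  refine (ncls_pkg e' e a b ?_ ?_).1
  · intro x ha hb
    ext y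
    rw [mem_clsFin, mem_clsFin]
    constructor
    · intro h; exact stepRel_mono (fun τ h => List.mem_cons_of_mem _ h) h
    · intro h
      rcases eqvGen_cons_swap.1 h with h1 | ⟨h1, h2⟩ | ⟨h1, h2⟩
      · exact h1
      · exact absurd (mem_clsFin.2 h1) ha
      · exact absurd (mem_clsFin.2 h1) hb
  · intro x ha hb
    ext y
    rw [mem_clsFin, mem_clsFin]
    constructor
    · intro h
      rcases eqvGen_cons_swap.1 h with h1 | ⟨h1, h2⟩ | ⟨h1, h2⟩
      · exact h1
      · exact absurd (mem_clsFin.2 (stepRel_mono (fun τ h => List.mem_cons_of_mem _ h) h1)) ha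
      · exact absurd (mem_clsFin.2 (stepRel_mono (fun τ h => List.mem_cons_of_mem _ h) h1)) hb
    · intro h; exact stepRel_mono (fun τ h => List.mem_cons_of_mem _ h) h

/-- KEY: genus inequality for a list of transpositions -/
theorem swap_list_bound : ∀ T : List (Perm α), (∀ t ∈ T, t.IsSwap) →
    Fintype.card α + cOrb T.prod ≤ T.length + 2 * ncls (EqvGen (stepRel T)) := by
  intro T
  induction T with
  | nil =>
    intro _
    have h1 : ncls (EqvGen (stepRel ([] : List (Perm α)))) = Fintype.card α := by
      apply ncls_eq_card_of_eq
      intro x y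
      constructor
      · intro h
        induction h with
        | rel u v huv => obtain ⟨τ, hτ, _⟩ := huv; exact absurd hτ List.not_mem_nil
        | refl u => rfl
        | symm u v _ ih => exact ih.symm
        | trans u v w _ _ ih1 ih2 => exact ih1.trans ih2
      · rintro rfl; exact EqvGen.refl x
    rw [List.prod_nil, List.length_nil, h1, cOrb_one]
    omega
  | cons t T' ih =>
    intro hsw
    obtain ⟨a, b, hab, rfl⟩ := hsw t (List.mem_cons_self)
    have ih' := ih (fun τ hτ => hsw τ (List.mem_cons_of_mem _ hτ))
    rw [List.prod_cons, List.length_cons]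
    by_cases hconn : EqvGen (stepRel T') a b
    · rw [ncls_cons_swap_collapse hconn]
      have h1 : cOrb (Equiv.swap a b * T'.prod) ≤ cOrb T'.prod + 1 := by
        have := cOrb_swap_le (Equiv.swap a b * T'.prod) a b
        rwa [swap_swap_cancel] at this
      omega
    · have hnsc : ¬ T'.prod.SameCycle a b := fun h => hconn (sameCycle_le_eqvGen T' h)
      have h1 : cOrb T'.prod = cOrb (Equiv.swap a b * T'.prod) + 1 := cOrb_merge hnsc
      have h2 := ncls_cons_swap_le (T' := T') a b
      omega

/-- class of a fixed point is a singleton -/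
theorem clsFin_fixed {σ : Perm α} {x : α} (hx : σ x = x) :
    clsFin σ.SameCycle x = {x} := by
  ext y
  rw [mem_clsFin, Finset.mem_singleton]
  exact ⟨fun h => sameCycle_of_fixed hx h, fun h => h ▸ SameCycle.refl σ x⟩

/-- class of a support point is the support of its cycle -/
theorem clsFin_support {σ : Perm α} {x : α} (hx : x ∈ σ.support) :
    clsFin σ.SameCycle x = (σ.cycleOf x).support := by
  classical
  ext y
  rw [mem_clsFin, mem_support_cycleOf_iff]
  exact ⟨fun h => ⟨h, hx⟩, fun h => h.1⟩

theorem cOrb_eq_fullCycleType_card (σ : Perm α) :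
    cOrb σ = (fullCycleType σ).card := by
  classical
  have hfct : (fullCycleType σ).card
      = σ.cycleFactorsFinset.card + (Fintype.card α - σ.support.card) := by
    unfold fullCycleType
    rw [Multiset.card_add, Multiset.card_replicate, sum_cycleType, cycleType_def,
      Multiset.card_map]
    rfl
  rw [hfct]
  have hsplit : (Finset.univ : Finset α) = σ.support ∪ σ.supportᶜ := by
    simp
  unfold cOrb ncls
  rw [hsplit, Finset.image_union]
  rw [Finset.card_union_of_disjoint]
  · congr 1
    · -- image over support has card = number of cycle factors
      have himg : σ.support.image (clsFin σ.SameCycle)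
          = σ.cycleFactorsFinset.image (fun c => c.support) := by
        ext S
        simp only [Finset.mem_image]
        constructor
        · rintro ⟨x, hx, rfl⟩
          exact ⟨σ.cycleOf x, cycleOf_mem_cycleFactorsFinset_iff.2 hx, (clsFin_support hx).symm⟩
        · rintro ⟨c, hc, rfl⟩
          have hcyc := (mem_cycleFactorsFinset_iff.1 hc).1
          obtain ⟨a, ha⟩ := hcyc.nonempty_support
          have ha' : a ∈ σ.support := by
            rw [mem_support]
            rw [← (mem_cycleFactorsFinset_iff.1 hc).2 a ha]
            exact mem_support.1 ha
          refine ⟨a, ha', ?_⟩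
          rw [clsFin_support ha', ← cycle_is_cycleOf ha hc]
      rw [himg]
      apply Finset.card_image_of_injOn
      intro c₁ h₁ c₂ h₂ he
      have hcyc := (mem_cycleFactorsFinset_iff.1 h₁).1
      obtain ⟨a, ha⟩ := hcyc.nonempty_support
      simp only at he
      have ha₂ : a ∈ c₂.support := by rw [← he]; exact ha
      rw [cycle_is_cycleOf ha h₁, cycle_is_cycleOf ha₂ h₂]
    · -- image over complement of support: singletons
      have : ∀ x ∈ σ.supportᶜ, clsFin σ.SameCycle x = {x} := by
        intro x hx
        exact clsFin_fixed (by simpa [notMem_support] using hx)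
      rw [Finset.image_congr this]
      rw [Finset.card_image_of_injOn (fun x _ y _ h => by simpa using h)]
      simp [Finset.card_compl]
  · -- disjointness
    rw [Finset.disjoint_left]
    rintro S hS hS'
    obtain ⟨x, hx, rfl⟩ := Finset.mem_image.1 hS
    obtain ⟨y, hy, hy'⟩ := Finset.mem_image.1 hS'
    have h1 : clsFin σ.SameCycle y = {y} :=
      clsFin_fixed (by simpa [notMem_support] using hy)
    have hxm : x ∈ clsFin σ.SameCycle x := mem_clsFin.2 (SameCycle.refl σ x)
    have hσxm : σ x ∈ clsFin σ.SameCycle x := mem_clsFin.2 ⟨(1 : ℤ), by simp⟩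
    rw [← hy', h1] at hxm hσxm
    rw [Finset.mem_singleton] at hxm hσxm
    exact (mem_support.1 hx) (by rw [hσxm, hxm])

/-- period of any point kills `g` -/
theorem g_pow_period {G : Type*} [Group G] (σ : Perm α) (g : G)
    (hg : ∀ ℓ ∈ fullCycleType σ, g ^ ℓ = 1) :
    ∀ (x : α) (i : ℕ), (σ ^ i) x = x → g ^ i = 1 := by
  classical
  intro x i hxi
  by_cases hx : x ∈ σ.support
  · have hcyc := isCycle_cycleOf σ (mem_support.1 hx)
    have hcx : σ.cycleOf x x ≠ x := by
      rw [cycleOf_apply_self]; exact mem_support.1 hx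
    have hpow : (σ.cycleOf x ^ i) x = x := by
      rw [cycleOf_pow_apply_self]; exact hxi
    have hone : σ.cycleOf x ^ i = 1 := (hcyc.pow_eq_one_iff' hcx).2 hpow
    have hdvd : orderOf (σ.cycleOf x) ∣ i := orderOf_dvd_of_pow_eq_one hone
    rw [hcyc.orderOf] at hdvd
    have hmem : (σ.cycleOf x).support.card ∈ fullCycleType σ := by
      unfold fullCycleType
      apply Multiset.mem_add.2
      left
      rw [cycleType_def]
      apply Multiset.mem_map.2
      refine ⟨σ.cycleOf x, ?_, rfl⟩
      rw [Finset.mem_val]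
      exact cycleOf_mem_cycleFactorsFinset_iff.2 hx
    obtain ⟨t, rfl⟩ := hdvd
    rw [pow_mul, hg _ hmem, one_pow]
  · have hsupp : σ.support.card < Fintype.card α := by
      apply Finset.card_lt_card
      rw [Finset.ssubset_iff_of_subset (Finset.subset_univ _)]
      exact ⟨x, Finset.mem_univ x, hx⟩
    have h1 : (1 : ℕ) ∈ fullCycleType σ := by
      unfold fullCycleType
      apply Multiset.mem_add.2
      right
      rw [Multiset.mem_replicate]
      refine ⟨?_, rfl⟩
      rw [sum_cycleType]
      omega
    have hg1 : g = 1 := by have := hg 1 h1; rwa [pow_one] at this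
    rw [hg1, one_pow]

theorem liftPerm_apply {G : Type*} [Group G] (σ : Perm α) (g : G) (p : α × G) :
    liftPerm σ g p = (σ p.1, g * p.2) := rfl

theorem liftPerm_pow_apply {G : Type*} [Group G] (σ : Perm α) (g : G) (j : ℕ) (p : α × G) :
    (liftPerm σ g ^ j) p = ((σ ^ j) p.1, g ^ j * p.2) := by
  induction j with
  | zero => simp
  | succ j ih =>
    rw [pow_succ', mul_apply, ih, liftPerm_apply]
    simp [pow_succ', mul_apply, mul_assoc]

theorem liftPerm_mul {G : Type*} [Group G] (σ σ' : Perm α) (g g' : G) :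
    liftPerm σ g * liftPerm σ' g' = liftPerm (σ * σ') (g * g') := by
  ext p <;> simp [liftPerm_apply, mul_apply, mul_assoc]

theorem liftPerm_one {G : Type*} [Group G] :
    liftPerm (1 : Perm α) (1 : G) = 1 := by
  ext p <;> simp [liftPerm_apply]

theorem liftPerm_list_prod {G : Type*} [Group G] {ι : Type*} (l : List ι)
    (τ : ι → Perm α) (g : ι → G) :
    (l.map fun i => liftPerm (τ i) (g i)).prod
      = liftPerm (l.map τ).prod (l.map g).prod := by
  induction l with
  | nil => simp [liftPerm_one]
  | cons i l ih =>
    simp only [List.map_cons, List.prod_cons, ih, liftPerm_mul]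

theorem cOrb_lift_ge {G : Type*} [Group G] [Fintype G] [DecidableEq G] [LinearOrder α]
    (σ : Perm α) (g : G) (hfix : ∀ (x : α) (i : ℕ), (σ ^ i) x = x → g ^ i = 1) :
    Fintype.card G * cOrb σ ≤ cOrb (liftPerm σ g) := by
  classical
  rcases isEmpty_or_nonempty α with hα | hα
  · have : cOrb σ = 0 := by
      unfold cOrb ncls
      rw [Finset.univ_eq_empty, Finset.image_empty, Finset.card_empty]
    rw [this, mul_zero]
    exact Nat.zero_le _
  · have harb : α := Classical.choice hα
    set rep : Finset α → α := fun S => if h : S.Nonempty then S.min' h else harb with hrep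
    have hrepmem : ∀ S : Finset α, S.Nonempty → rep S ∈ S := by
      intro S hS
      rw [hrep]
      simp only [dif_pos hS]
      exact S.min'_mem hS
    have key : ∀ S ∈ Finset.univ.image (clsFin σ.SameCycle),
        S = clsFin σ.SameCycle (rep S) := by
      intro S hS
      obtain ⟨x, -, rfl⟩ := Finset.mem_image.1 hS
      have hne : (clsFin σ.SameCycle x).Nonempty :=
        ⟨x, mem_clsFin.2 ((sameCycle_equivalence σ).refl x)⟩
      have := hrepmem _ hne
      exact clsFin_eq_of_rel (sameCycle_equivalence σ) (mem_clsFin.1 this)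
    have hcard : ((Finset.univ.image (clsFin σ.SameCycle)) ×ˢ (Finset.univ : Finset G)).card
        = cOrb σ * Fintype.card G := by
      rw [Finset.card_product]
      rfl
    rw [mul_comm, ← hcard]
    apply Finset.card_le_card_of_injOn
      (fun p => clsFin (liftPerm σ g).SameCycle (rep p.1, p.2))
    · intro p hp
      exact Finset.mem_image.2 ⟨(rep p.1, p.2), Finset.mem_univ _, rfl⟩
    · rintro ⟨S, h⟩ hSh ⟨S', h'⟩ hS'h' he
      simp only [Finset.mem_coe, Finset.mem_product] at hSh hS'h'
      have hS := key S hSh.1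
      have hS' := key S' hS'h'.1
      simp only at he
      have hmem : (rep S', h') ∈ clsFin (liftPerm σ g).SameCycle (rep S, h) := by
        rw [he]
        exact mem_clsFin.2 ((sameCycle_equivalence _).refl _)
      have hsc := mem_clsFin.1 hmem
      obtain ⟨i, hi⟩ := sc_exists_pow.1 hsc
      rw [liftPerm_pow_apply] at hi
      have h1 : (σ ^ i) (rep S) = rep S' := congrArg Prod.fst hi
      have h2 : g ^ i * h = h' := congrArg Prod.snd hi
      have hSeq : S = S' := by
        rw [hS, hS']
        exact clsFin_eq_of_rel (sameCycle_equivalence σ) (sc_exists_pow.2 ⟨i, h1⟩)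
      subst hSeq
      have hg1 : g ^ i = 1 := hfix _ _ h1
      rw [hg1, one_mul] at h2
      rw [h2]

end Toolkit

/-- Corollary 1.5. -/
theorem stmt6 (d n k : ℕ) (hn : 3 ≤ n) (parts : Fin n → Multiset ℕ)
    (hsum : ∀ i, (parts i).sum = d)
    (hpos : ∀ i, ∀ x ∈ parts i, 0 < x)
    (hcard : ∑ i, (parts i).card = (n - 2) * d + 2)
    (hk1 : 1 < k) (hkd : k < d / 2) (hdvd : 2 * k ∣ d)
    (h1 : ∀ x ∈ parts ⟨0, by omega⟩, k ∣ x)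
    (h2 : ∀ x ∈ parts ⟨1, by omega⟩, Even x)
    (h3 : ∀ x ∈ parts ⟨2, by omega⟩, Even x)
    (hreal : realizable d n parts) :
    (∀ x ∈ parts ⟨1, by omega⟩, x ≤ d / k) ∧
    (∀ x ∈ parts ⟨2, by omega⟩, x ≤ d / k) ∧
    (∀ i : Fin n, 3 ≤ (i : ℕ) → ∀ x ∈ parts i, x ≤ d / (2 * k)) := by
  classical
  obtain ⟨τ, hτprod, htrans, hfct⟩ := hreal
  haveI : NeZero k := ⟨by omega⟩
  have hd6 : 6 ≤ d := by omega
  -- the dihedral weights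
  set g : Fin n → DihedralGroup k := fun i =>
    if (i : ℕ) = 0 then DihedralGroup.r 1 else if (i : ℕ) = 1 then DihedralGroup.sr 0
    else if (i : ℕ) = 2 then DihedralGroup.sr (-1) else 1 with hgdef
  have hg0 : g ⟨0, by omega⟩ = DihedralGroup.r 1 := by simp [hgdef]
  have hg1 : g ⟨1, by omega⟩ = DihedralGroup.sr 0 := by simp [hgdef]
  have hg2 : g ⟨2, by omega⟩ = DihedralGroup.sr (-1) := by simp [hgdef]
  have hgge : ∀ i : Fin n, 3 ≤ (i : ℕ) → g i = 1 := by
    intro i hi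
    rw [hgdef]
    simp only
    rw [if_neg (by omega), if_neg (by omega), if_neg (by omega)]
  -- cycle lengths kill the weights
  have hgcyc : ∀ i : Fin n, ∀ ℓ ∈ fullCycleType (τ i), (g i) ^ ℓ = 1 := by
    intro i ℓ hℓ
    rcases Nat.lt_or_ge (i : ℕ) 3 with hi | hi
    · interval_cases h : (i : ℕ)
      · have hie : i = ⟨0, by omega⟩ := Fin.ext h
        rw [hie, hfct] at hℓ
        rw [hie]
        obtain ⟨t, rfl⟩ := h1 ℓ hℓ
        rw [hg0, DihedralGroup.r_one_pow]
        have : ((k * t : ℕ) : ZMod k) = 0 := by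
          push_cast
          simp [ZMod.natCast_self]
        rw [this, DihedralGroup.one_def]
      · have hie : i = ⟨1, by omega⟩ := Fin.ext h
        rw [hie, hfct] at hℓ
        rw [hie]
        obtain ⟨t, rfl⟩ := h2 ℓ hℓ
        rw [hg1, ← two_mul, pow_mul, sq, DihedralGroup.sr_mul_self, one_pow]
      · have hie : i = ⟨2, by omega⟩ := Fin.ext h
        rw [hie, hfct] at hℓ
        rw [hie]
        obtain ⟨t, rfl⟩ := h3 ℓ hℓ
        rw [hg2, ← two_mul, pow_mul, sq, DihedralGroup.sr_mul_self, one_pow]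
    · rw [hgge i hi, one_pow]
  -- product of the weights is 1
  have hgprod : (List.ofFn g).prod = 1 := by
    obtain ⟨m, rfl⟩ : ∃ m, n = m + 3 := ⟨n - 3, by omega⟩
    rw [List.ofFn_succ, List.ofFn_succ, List.ofFn_succ, List.prod_cons, List.prod_cons,
      List.prod_cons]
    have hrest : (List.ofFn fun i : Fin m => g i.succ.succ.succ).prod = 1 := by
      apply List.prod_eq_one
      intro x hx
      rw [List.mem_ofFn] at hx
      obtain ⟨i, rfl⟩ := hx
      apply hgge
      simp [Fin.val_succ]
    rw [hrest, mul_one]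
    have e0 : g 0 = DihedralGroup.r 1 := hg0
    have e1 : g (Fin.succ 0) = DihedralGroup.sr 0 := by
      have : (Fin.succ 0 : Fin (m + 3)) = ⟨1, by omega⟩ := rfl
      rw [this]; exact hg1
    have e2 : g (Fin.succ (Fin.succ 0)) = DihedralGroup.sr (-1) := by
      have : (Fin.succ (Fin.succ 0) : Fin (m + 3)) = ⟨2, by omega⟩ := rfl
      rw [this]; exact hg2
    rw [e0, e1, e2, DihedralGroup.sr_mul_sr, DihedralGroup.r_mul_r]
    have : (1 + (-1 - 0) : ZMod k) = 0 := by ring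
    rw [this, DihedralGroup.one_def]
  -- lifted permutations
  set τt : Fin n → Perm (Fin d × DihedralGroup k) := fun i => liftPerm (τ i) (g i) with hτtdef
  have hτtprod : (List.ofFn τt).prod = 1 := by
    rw [hτtdef]
    rw [List.ofFn_eq_map, liftPerm_list_prod, ← List.ofFn_eq_map, ← List.ofFn_eq_map,
      hτprod, hgprod, liftPerm_one]
  -- swap decompositions of the lifts
  have hdec : ∀ i : Fin n, ∃ T : List (Perm (Fin d × DihedralGroup k)),
      (∀ t ∈ T, t.IsSwap) ∧ T.prod = τt i ∧
      T.length + cOrb (τt i) = Fintype.card (Fin d × DihedralGroup k) :=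
    fun i => exists_swap_decomp (τt i)
  choose TT hTsw hTprod hTlen using hdec
  set Tall : List (Perm (Fin d × DihedralGroup k)) := (List.ofFn TT).flatten with hTall
  have hswall : ∀ t ∈ Tall, t.IsSwap := by
    intro t ht
    rw [hTall, List.mem_flatten] at ht
    obtain ⟨l, hl, htl⟩ := ht
    rw [List.mem_ofFn] at hl
    obtain ⟨i, rfl⟩ := hl
    exact hTsw i t htl
  have hprodall : Tall.prod = 1 := by
    rw [hTall, List.prod_flatten, List.map_ofFn]
    have : (List.ofFn (List.prod ∘ TT)) = List.ofFn τt := by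
      congr 1
      funext i
      exact hTprod i
    rw [this, hτtprod]
  have hlenall : Tall.length = ∑ i : Fin n, (TT i).length := by
    rw [hTall, List.length_flatten, List.map_ofFn]
    exact List.sum_ofFn
  -- cardinalities
  have hcardβ : Fintype.card (Fin d × DihedralGroup k) = d * (2 * k) := by
    rw [Fintype.card_prod, Fintype.card_fin, DihedralGroup.card]
  -- per-index orbit-count inequality
  have hlift : ∀ i : Fin n, (2 * k) * cOrb (τ i) ≤ cOrb (τt i) := by
    intro i
    have := cOrb_lift_ge (τ i) (g i) (g_pow_period (τ i) (g i) (hgcyc i))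
    rwa [DihedralGroup.card] at this
  have hcτ : ∀ i : Fin n, cOrb (τ i) = (parts i).card := by
    intro i
    rw [cOrb_eq_fullCycleType_card, hfct]
  -- total length bound
  have hsumlen : Tall.length + ∑ i : Fin n, cOrb (τt i) = n * (d * (2 * k)) := by
    rw [hlenall, ← Finset.sum_add_distrib]
    rw [Finset.sum_congr rfl (fun i _ => hTlen i)]
    rw [Finset.sum_const, Finset.card_univ, Fintype.card_fin, smul_eq_mul, hcardβ]
  have hSlb : (2 * k) * ((n - 2) * d + 2) ≤ ∑ i : Fin n, cOrb (τt i) := by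
    calc (2 * k) * ((n - 2) * d + 2) = (2 * k) * ∑ i : Fin n, (parts i).card := by rw [hcard]
      _ = ∑ i : Fin n, (2 * k) * (parts i).card := by rw [Finset.mul_sum]
      _ ≤ ∑ i : Fin n, cOrb (τt i) := by
          apply Finset.sum_le_sum
          intro i _
          rw [← hcτ i]
          exact hlift i
  -- genus inequality
  have hgenus := swap_list_bound Tall hswall
  rw [hprodall, cOrb_one, hcardβ] at hgenus
  -- conclude the class count bound
  have hKt : 2 * k ≤ ncls (EqvGen (stepRel Tall)) := by
    obtain ⟨m, hm⟩ : ∃ m, n = m + 2 := ⟨n - 2, by omega⟩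
    set S := ∑ i : Fin n, cOrb (τt i)
    set L := Tall.length
    set t := ncls (EqvGen (stepRel Tall))
    set B := d * (2 * k)
    have e1 : L + S = m * B + 2 * B := by
      rw [hsumlen, hm]; ring
    have e2 : 2 * B ≤ L + 2 * t := by omega
    have e3 : (2 * k) * (m * d) + (2 * k) * 2 ≤ S := by
      have : (n - 2) = m := by omega
      calc (2 * k) * (m * d) + (2 * k) * 2 = (2 * k) * ((n - 2) * d + 2) := by
            rw [this]; ring
        _ ≤ S := hSlb
    have e4 : m * B = (2 * k) * (m * d) := by rw [show B = d * (2*k) from rfl]; ring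
    omega
  -- ====== class machinery ======
  set rT := EqvGen (stepRel Tall) with hrTdef
  have erT : Equivalence rT := Relation.EqvGen.is_equivalence _
  have horb : ∀ gp ∈ Subgroup.closure (Set.range τt), ∀ p, rT p (gp p) := by
    intro gp hgp
    induction hgp using Subgroup.closure_induction with
    | mem x hx =>
      intro p
      obtain ⟨i, rfl⟩ := hx
      have hmem : ∀ τ' ∈ TT i, τ' ∈ Tall := by
        intro τ' hτ'
        rw [hTall, List.mem_flatten]
        exact ⟨TT i, List.mem_ofFn.2 ⟨i, rfl⟩, hτ'⟩
      have h1 : rT p ((TT i).prod p) := stepRel_mono hmem (eqvGen_walk (TT i) p)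
      rwa [hTprod i] at h1
    | one => intro p; simpa using erT.refl p
    | mul x y hx hy hpx hpy =>
      intro p
      exact erT.trans (hpy p) (by simpa [mul_apply] using hpx (y p))
    | inv x hx hpx =>
      intro p
      have h := hpx (x⁻¹ p)
      rw [show x (x⁻¹ p) = p from x.apply_symm_apply p] at h
      exact erT.symm h
  have hlift1 : ∀ gp ∈ Subgroup.closure (Set.range τ), ∃ g' ∈ Subgroup.closure (Set.range τt),
      ∀ p : Fin d × DihedralGroup k, (g' p).1 = gp p.1 := by
    intro gp hgp
    induction hgp using Subgroup.closure_induction with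
    | mem x hx =>
      obtain ⟨i, rfl⟩ := hx
      exact ⟨τt i, Subgroup.subset_closure ⟨i, rfl⟩, fun p => rfl⟩
    | one => exact ⟨1, one_mem _, fun p => rfl⟩
    | mul x y hx hy hex hey =>
      obtain ⟨gx, hgx, hfx⟩ := hex
      obtain ⟨gy, hgy, hfy⟩ := hey
      exact ⟨gx * gy, mul_mem hgx hgy, fun p => by
        rw [mul_apply, mul_apply, hfx, hfy]⟩
    | inv x hx hex =>
      obtain ⟨gx, hgx, hfx⟩ := hex
      refine ⟨gx⁻¹, inv_mem hgx, fun p => ?_⟩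
      have h := hfx (gx⁻¹ p)
      rw [show gx (gx⁻¹ p) = p from gx.apply_symm_apply p] at h
      have h2 := congrArg (⇑x⁻¹) h
      rw [show ∀ y, x⁻¹ (x y) = y from x.symm_apply_apply] at h2
      exact h2.symm
  have hgen : ∀ u : DihedralGroup k, u ∈ Subgroup.closure (Set.range g) := by
    intro u
    cases u with
    | r i =>
      have he : DihedralGroup.r i = (g ⟨0, by omega⟩) ^ (i.val) := by
        rw [hg0, DihedralGroup.r_one_pow]
        congr 1
        exact (ZMod.natCast_rightInverse i).symm
      rw [he]
      exact pow_mem (Subgroup.subset_closure (Set.mem_range_self _)) _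
    | sr i =>
      have he : DihedralGroup.sr i = g ⟨1, by omega⟩ * (g ⟨0, by omega⟩) ^ (i.val) := by
        rw [hg0, hg1, DihedralGroup.r_one_pow, DihedralGroup.sr_mul_r, zero_add]
        congr 1
        exact (ZMod.natCast_rightInverse i).symm
      rw [he]
      exact mul_mem (Subgroup.subset_closure (Set.mem_range_self _))
        (pow_mem (Subgroup.subset_closure (Set.mem_range_self _)) _)
  have hlift2' : ∀ u ∈ Subgroup.closure (Set.range g), ∃ g' ∈ Subgroup.closure (Set.range τt),
      ∀ p : Fin d × DihedralGroup k, (g' p).2 = u * p.2 := by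
    intro u hu
    induction hu using Subgroup.closure_induction with
    | mem x hx =>
      obtain ⟨i, rfl⟩ := hx
      exact ⟨τt i, Subgroup.subset_closure ⟨i, rfl⟩, fun p => rfl⟩
    | one => exact ⟨1, one_mem _, fun p => (one_mul p.2).symm⟩
    | mul x y hx hy hex hey =>
      obtain ⟨gx, hgx, hfx⟩ := hex
      obtain ⟨gy, hgy, hfy⟩ := hey
      exact ⟨gx * gy, mul_mem hgx hgy, fun p => by
        rw [mul_apply, hfx, hfy, mul_assoc]⟩
    | inv x hx hex =>
      obtain ⟨gx, hgx, hfx⟩ := hex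
      refine ⟨gx⁻¹, inv_mem hgx, fun p => ?_⟩
      have h := hfx (gx⁻¹ p)
      rw [show gx (gx⁻¹ p) = p from gx.apply_symm_apply p] at h
      rw [h, ← mul_assoc, inv_mul_cancel, one_mul]
  have hlift2 : ∀ u : DihedralGroup k, ∃ g' ∈ Subgroup.closure (Set.range τt),
      ∀ p : Fin d × DihedralGroup k, (g' p).2 = u * p.2 := fun u => hlift2' u (hgen u)
  have hexistfib : ∀ p : Fin d × DihedralGroup k, ∀ x : Fin d,
      ∃ h : DihedralGroup k, rT p (x, h) := by
    intro p x
    obtain ⟨gp, hgp, hgpx⟩ := htrans p.1 x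
    obtain ⟨g', hg', hfst⟩ := hlift1 gp hgp
    have h1 : rT p (g' p) := horb g' hg' p
    have h2 : g' p = (x, (g' p).2) := Prod.ext_iff.2 ⟨by rw [hfst p, hgpx], rfl⟩
    exact ⟨(g' p).2, by rwa [h2] at h1⟩
  have hclsge : ∀ S ∈ Finset.univ.image (clsFin rT), d ≤ S.card := by
    intro S hS
    obtain ⟨p, -, rfl⟩ := Finset.mem_image.1 hS
    have hle : (Finset.univ : Finset (Fin d)).card ≤ (clsFin rT p).card := by
      apply Finset.card_le_card_of_injOn (fun x => (x, Classical.choose (hexistfib p x)))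
      · intro x _
        exact mem_clsFin.2 (Classical.choose_spec (hexistfib p x))
      · intro x _ y _ hxy
        exact congrArg Prod.fst hxy
    simpa using hle
  have hsumcls := sum_card_cls (α := Fin d × DihedralGroup k) erT
  rw [hcardβ] at hsumcls
  have hKt' : 2 * k ≤ (Finset.univ.image (clsFin rT)).card := hKt
  have hclseq : ∀ S ∈ Finset.univ.image (clsFin rT), S.card = d := by
    intro S hS
    by_contra hne
    have hgt : d < S.card := lt_of_le_of_ne (hclsge S hS) (Ne.symm hne)
    have hstrict : ∑ _S' ∈ Finset.univ.image (clsFin rT), d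
        < ∑ S' ∈ Finset.univ.image (clsFin rT), S'.card :=
      Finset.sum_lt_sum (fun S' hS' => hclsge S' hS') ⟨S, hS, hgt⟩
    rw [Finset.sum_const, smul_eq_mul, hsumcls] at hstrict
    have h5 : 2 * k * d ≤ (Finset.univ.image (clsFin rT)).card * d :=
      Nat.mul_le_mul_right d hKt'
    rw [mul_comm d (2 * k)] at hstrict
    exact absurd (lt_of_le_of_lt h5 hstrict) (lt_irrefl _)
  set p₀ : Fin d × DihedralGroup k := (⟨0, by omega⟩, 1) with hp₀def
  set C₀ := clsFin rT p₀ with hC₀def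
  have hC₀mem : C₀ ∈ Finset.univ.image (clsFin rT) :=
    Finset.mem_image.2 ⟨p₀, Finset.mem_univ _, rfl⟩
  have hC₀card : C₀.card = d := hclseq _ hC₀mem
  have hinjfst : Set.InjOn Prod.fst (C₀ : Set (Fin d × DihedralGroup k)) := by
    rw [← Finset.card_image_iff]
    have himg : C₀.image Prod.fst = Finset.univ := by
      apply Finset.eq_univ_iff_forall.2
      intro x
      obtain ⟨h, hh⟩ := hexistfib p₀ x
      exact Finset.mem_image.2 ⟨(x, h), mem_clsFin.2 hh, rfl⟩
    rw [himg, hC₀card]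
    simp
  have hΨ0 : ∀ x : Fin d, ∃ h, (x, h) ∈ C₀ := fun x => by
    obtain ⟨h, hh⟩ := hexistfib p₀ x
    exact ⟨h, mem_clsFin.2 hh⟩
  set Ψ : Fin d → DihedralGroup k := fun x => Classical.choose (hΨ0 x) with hΨdef
  have hΨmem : ∀ x, (x, Ψ x) ∈ C₀ := fun x => Classical.choose_spec (hΨ0 x)
  have hΨuniq : ∀ x h, (x, h) ∈ C₀ → h = Ψ x := by
    intro x h hmem
    have heq := hinjfst (Finset.mem_coe.2 hmem) (Finset.mem_coe.2 (hΨmem x)) rfl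
    exact congrArg Prod.snd heq
  have hΨequi : ∀ (i : Fin n) (x : Fin d), Ψ (τ i x) = g i * Ψ x := by
    intro i x
    have h1 : rT (x, Ψ x) (τt i (x, Ψ x)) :=
      horb (τt i) (Subgroup.subset_closure ⟨i, rfl⟩) _
    have h2 : τt i (x, Ψ x) = (τ i x, g i * Ψ x) := rfl
    have h3 : (τ i x, g i * Ψ x) ∈ C₀ := by
      rw [hC₀def]
      apply mem_clsFin.2
      refine erT.trans (mem_clsFin.1 (hΨmem x)) ?_
      rw [← h2]
      exact h1
    exact (hΨuniq _ _ h3).symm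
  have hΨpow : ∀ (i : Fin n) (j : ℕ) (x : Fin d), Ψ ((τ i ^ j) x) = (g i) ^ j * Ψ x := by
    intro i j x
    induction j with
    | zero => simp
    | succ j ih => rw [pow_succ', pow_succ', mul_apply, hΨequi, ih, mul_assoc]
  have hfible : ∀ u v : DihedralGroup k,
      (Finset.univ.filter (fun x => Ψ x = u)).card
        ≤ (Finset.univ.filter (fun x => Ψ x = v)).card := by
    intro u v
    obtain ⟨g', hg', hsnd⟩ := hlift2 (v * u⁻¹)
    apply Finset.card_le_card_of_injOn (fun x => (g' (x, Ψ x)).1)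
    · intro x hx
      rw [Finset.mem_coe, Finset.mem_filter] at hx
      have hgm : rT (x, Ψ x) (g' (x, Ψ x)) := horb g' hg' _
      have hmemC : g' (x, Ψ x) ∈ C₀ := by
        rw [hC₀def]
        exact mem_clsFin.2 (erT.trans (mem_clsFin.1 (hΨmem x)) hgm)
      have hsnd' : (g' (x, Ψ x)).2 = v := by
        rw [hsnd, hx.2]
        group
      have hpair : g' (x, Ψ x) = ((g' (x, Ψ x)).1, v) := Prod.ext_iff.2 ⟨rfl, hsnd'⟩
      rw [Finset.mem_coe, Finset.mem_filter]
      refine ⟨Finset.mem_univ _, ?_⟩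
      exact (hΨuniq _ _ (by rw [← hpair]; exact hmemC)).symm
    · intro x hx y hy hxy
      rw [Finset.mem_coe, Finset.mem_filter] at hx hy
      have h2 : (g' (x, Ψ x)).2 = (g' (y, Ψ y)).2 := by rw [hsnd, hsnd, hx.2, hy.2]
      have h3 : g' (x, Ψ x) = g' (y, Ψ y) := Prod.ext_iff.2 ⟨hxy, h2⟩
      have h4 := g'.injective h3
      exact congrArg Prod.fst h4
  have hfibeq : ∀ u : DihedralGroup k,
      (Finset.univ.filter (fun x => Ψ x = u)).card
        = (Finset.univ.filter (fun x : Fin d => Ψ x = 1)).card :=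
    fun u => le_antisymm (hfible u 1) (hfible 1 u)
  set c0 := (Finset.univ.filter (fun x : Fin d => Ψ x = 1)).card with hc0def
  have hdc0 : d = (2 * k) * c0 := by
    have htot := Finset.card_eq_sum_card_fiberwise (f := Ψ) (s := Finset.univ)
      (t := Finset.univ) (fun x _ => Finset.mem_univ _)
    rw [Finset.card_univ, Fintype.card_fin] at htot
    rw [htot, Finset.sum_congr rfl (fun u _ => hfibeq u), Finset.sum_const,
      Finset.card_univ, DihedralGroup.card, smul_eq_mul]
  have hc0pos : 1 ≤ c0 := by
    rcases Nat.eq_zero_or_pos c0 with h | h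
    · rw [h, mul_zero] at hdc0; omega
    · exact h
  have hdiv2k : d / (2 * k) = c0 := by
    rw [hdc0]
    exact Nat.mul_div_cancel_left c0 (by omega)
  have hdivk : d / k = 2 * c0 := by
    rw [hdc0, show 2 * k * c0 = (2 * c0) * k by ring]
    exact Nat.mul_div_cancel _ (by omega)
  -- main bounds
  have hbound_inv : ∀ i : Fin n, g i * g i = 1 → ∀ xlen ∈ parts i, xlen ≤ 2 * c0 := by
    intro i hgi xlen hx
    rw [← hfct i] at hx
    rcases Multiset.mem_add.1 hx with hcy | hrep
    · rw [cycleType_def, Multiset.mem_map] at hcy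
      obtain ⟨c, hcval, hclen⟩ := hcy
      rw [Finset.mem_val] at hcval
      have hcyc := (mem_cycleFactorsFinset_iff.1 hcval).1
      obtain ⟨a, ha⟩ := hcyc.nonempty_support
      have hceq : c = (τ i).cycleOf a := cycle_is_cycleOf ha hcval
      have hsub : c.support ⊆ (Finset.univ.filter (fun x => Ψ x = Ψ a))
          ∪ (Finset.univ.filter (fun x => Ψ x = g i * Ψ a)) := by
        intro b hb
        have hsc : (τ i).SameCycle a b := by
          rw [hceq] at hb
          exact (mem_support_cycleOf_iff.1 hb).1
        obtain ⟨j, hj⟩ := sc_exists_pow.1 hsc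
        have hΨb : Ψ b = (g i) ^ j * Ψ a := by rw [← hj, hΨpow]
        rcases Nat.even_or_odd j with he | ho
        · obtain ⟨t, rfl⟩ := he
          have hgp : (g i) ^ (t + t) = 1 := by rw [← two_mul, pow_mul, sq, hgi, one_pow]
          rw [hgp, one_mul] at hΨb
          exact Finset.mem_union_left _ (Finset.mem_filter.2 ⟨Finset.mem_univ _, hΨb⟩)
        · obtain ⟨t, rfl⟩ := ho
          have hgp : (g i) ^ (2 * t + 1) = g i := by
            rw [pow_succ, pow_mul, sq, hgi, one_pow, one_mul]
          rw [hgp] at hΨb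
          exact Finset.mem_union_right _ (Finset.mem_filter.2 ⟨Finset.mem_univ _, hΨb⟩)
      have hle := Finset.card_le_card hsub
      have hle2 := Finset.card_union_le (Finset.univ.filter (fun x => Ψ x = Ψ a))
        (Finset.univ.filter (fun x => Ψ x = g i * Ψ a))
      have he1 := hfibeq (Ψ a)
      have he2 := hfibeq (g i * Ψ a)
      have hxlen : xlen = c.support.card := by
        simp only [Function.comp] at hclen
        omega
      rw [hxlen]
      omega
    · have := Multiset.eq_of_mem_replicate hrep
      omega
  have hbound_one : ∀ i : Fin n, g i = 1 → ∀ xlen ∈ parts i, xlen ≤ c0 := by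
    intro i hgi xlen hx
    rw [← hfct i] at hx
    rcases Multiset.mem_add.1 hx with hcy | hrep
    · rw [cycleType_def, Multiset.mem_map] at hcy
      obtain ⟨c, hcval, hclen⟩ := hcy
      rw [Finset.mem_val] at hcval
      have hcyc := (mem_cycleFactorsFinset_iff.1 hcval).1
      obtain ⟨a, ha⟩ := hcyc.nonempty_support
      have hceq : c = (τ i).cycleOf a := cycle_is_cycleOf ha hcval
      have hsub : c.support ⊆ Finset.univ.filter (fun x => Ψ x = Ψ a) := by
        intro b hb
        have hsc : (τ i).SameCycle a b := by
          rw [hceq] at hb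
          exact (mem_support_cycleOf_iff.1 hb).1
        obtain ⟨j, hj⟩ := sc_exists_pow.1 hsc
        have hΨb : Ψ b = (g i) ^ j * Ψ a := by rw [← hj, hΨpow]
        rw [hgi, one_pow, one_mul] at hΨb
        exact Finset.mem_filter.2 ⟨Finset.mem_univ _, hΨb⟩
      have hle := Finset.card_le_card hsub
      have he1 := hfibeq (Ψ a)
      have hxlen : xlen = c.support.card := by
        simp only [Function.comp] at hclen
        omega
      rw [hxlen]
      omega
    · have := Multiset.eq_of_mem_replicate hrep
      omega
  refine ⟨?_, ?_, ?_⟩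
  · intro x hx
    rw [hdivk]
    exact hbound_inv ⟨1, by omega⟩ (by rw [hg1]; exact DihedralGroup.sr_mul_self 0) x hx
  · intro x hx
    rw [hdivk]
    exact hbound_inv ⟨2, by omega⟩ (by rw [hg2]; exact DihedralGroup.sr_mul_self (-1)) x hx
  · intro i hi x hx
    rw [hdiv2k]
    exact hbound_one i (hgge i hi) x hx
end

section
/- Let d ≥ 2 be even and let x be an integer with 1 ≤ x ≤ d−1. Then the three partitions of d given by (max(x, d−x), min(x, d−x)), (2, 2, …, 2) (d/2 twos), and (2, 2, …, 2) (d/2 twos) are realized by permutations if and only if x = d/2. -/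
section aux
open Equiv Equiv.Perm
variable {α : Type*} [Fintype α] [DecidableEq α]

lemma exists_fixed_of_mem_cycleType (τ : Perm α) {n : ℕ} (h : n ∈ τ.cycleType) :
    ∃ p, (τ ^ n) p = p ∧ (τ.cycleOf p).support.card = n ∧ τ p ≠ p := by
  rw [Equiv.Perm.cycleType_def, Multiset.mem_map] at h
  obtain ⟨c, hc, hcard⟩ := h
  simp only [Function.comp_apply] at hcard
  have hc' : c ∈ τ.cycleFactorsFinset := hc
  have hcyc := (Equiv.Perm.mem_cycleFactorsFinset_iff.mp hc').1
  obtain ⟨p, hp⟩ := hcyc.nonempty_support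
  have hpc : c = τ.cycleOf p := Equiv.Perm.cycle_is_cycleOf hp hc'
  have hmoved : τ p ≠ p := by
    have := Equiv.Perm.mem_support.mp hp
    intro hfix
    rw [hpc, Equiv.Perm.mem_support, Equiv.Perm.cycleOf_apply_self] at hp
    exact hp hfix
  refine ⟨p, ?_, by rw [← hpc]; exact hcard, hmoved⟩
  have h1 : (τ ^ n) p = ((τ.cycleOf p) ^ n) p := (Equiv.Perm.cycleOf_pow_apply_self τ p n).symm
  have h2 : c ^ n = 1 := by rw [← hcard, ← hcyc.orderOf]; exact pow_orderOf_eq_one c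
  rw [h1, ← hpc, h2, Equiv.Perm.one_apply]

lemma exists_fixed_of_mem_fullCycleType (τ : Perm α) {n : ℕ}
    (h : n ∈ fullCycleType τ) : ∃ p, (τ ^ n) p = p := by
  rw [fullCycleType, Multiset.mem_add] at h
  rcases h with h | h
  · obtain ⟨p, hp, -, -⟩ := exists_fixed_of_mem_cycleType τ h
    exact ⟨p, hp⟩
  · have hn1 : n = 1 := Multiset.eq_of_mem_replicate h
    have hk : 0 < Fintype.card α - τ.cycleType.sum := by
      by_contra h0
      simp only [Nat.pos_iff_ne_zero, ne_eq, not_not] at h0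
      rw [h0] at h; simp at h
    have hlt : τ.support.card < Fintype.card α := by
      rw [← Equiv.Perm.sum_cycleType]; omega
    obtain ⟨p, hp⟩ : ∃ p, p ∉ τ.support := by
      by_contra hall
      push_neg at hall
      have : τ.support = Finset.univ := Finset.eq_univ_iff_forall.mpr hall
      rw [this, Finset.card_univ] at hlt; omega
    rw [Equiv.Perm.notMem_support] at hp
    exact ⟨p, by rw [hn1, pow_one, hp]⟩

lemma exists_not_fixed_of_mem_fullCycleType (τ : Perm α) {a b : ℕ}
    (h : a ∈ fullCycleType τ) (hb : 0 < b) (hba : b < a) : ∃ p, (τ ^ b) p ≠ p := by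
  have ha2 : a ∈ τ.cycleType := by
    rw [fullCycleType, Multiset.mem_add] at h
    rcases h with h | h
    · exact h
    · have := Multiset.eq_of_mem_replicate h; omega
  obtain ⟨p, -, hcard, hmoved⟩ := exists_fixed_of_mem_cycleType τ ha2
  refine ⟨p, fun hfix => ?_⟩
  have h1 : ((τ.cycleOf p) ^ b) p = p := by
    rw [Equiv.Perm.cycleOf_pow_apply_self, hfix]
  have hcyc : (τ.cycleOf p).IsCycle := τ.isCycle_cycleOf hmoved
  have hmoved' : (τ.cycleOf p) p ≠ p := by
    rw [Equiv.Perm.cycleOf_apply_self]; exact hmoved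
  have h2 : (τ.cycleOf p) ^ b = 1 := (hcyc.pow_eq_one_iff' hmoved').mpr h1
  have h3 : orderOf (τ.cycleOf p) ∣ b := orderOf_dvd_of_pow_eq_one h2
  rw [hcyc.orderOf, hcard] at h3
  have := Nat.le_of_dvd hb h3
  omega

lemma sq_eq_one_of_fullCycleType_replicate {τ : Perm α} {m : ℕ}
    (h : fullCycleType τ = Multiset.replicate m 2) :
    τ * τ = 1 := by
  have h1 : ∀ n ∈ τ.cycleType, n ∣ 2 := by
    intro n hn
    have hn2 : n ∈ fullCycleType τ := by
      rw [fullCycleType, Multiset.mem_add]; exact Or.inl hn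
    rw [h] at hn2
    rw [Multiset.eq_of_mem_replicate hn2]
  have h2 : orderOf τ ∣ 2 := by
    rw [← Equiv.Perm.lcm_cycleType]
    exact Multiset.lcm_dvd.mpr h1
  rw [← pow_two]
  exact orderOf_dvd_iff_pow_eq_one.mp h2


end aux

section aux2
open Equiv Equiv.Perm

lemma forward_dir {d : ℕ} {a b m : ℕ} (hb : 0 < b) (hba : b ≤ a)
    (τ : Fin 3 → Perm (Fin d))
    (hprod : (List.ofFn τ).prod = 1)
    (htrans : ∀ x y : Fin d, ∃ g ∈ Subgroup.closure (Set.range τ), g x = y)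
    (hct0 : fullCycleType (τ 0) = {a, b})
    (hct1 : fullCycleType (τ 1) = Multiset.replicate m 2)
    (hct2 : fullCycleType (τ 2) = Multiset.replicate m 2) :
    a = b := by
  by_contra hab
  have hba' : b < a := lt_of_le_of_ne hba (Ne.symm hab)
  have h3 : τ 0 * (τ 1 * τ 2) = 1 := by simpa [List.ofFn_succ, mul_assoc] using hprod
  have h1sq : τ 1 * τ 1 = 1 := sq_eq_one_of_fullCycleType_replicate hct1
  have h2sq : τ 2 * τ 2 = 1 := sq_eq_one_of_fullCycleType_replicate hct2
  have hinv1 : (τ 1)⁻¹ = τ 1 := inv_eq_of_mul_eq_one_right h1sq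
  have hτ2 : τ 2 = (τ 0 * τ 1)⁻¹ := by
    have h' : (τ 0 * τ 1) * τ 2 = 1 := by rw [mul_assoc]; exact h3
    exact (inv_eq_of_mul_eq_one_right h').symm
  have key : τ 1 * τ 0 * (τ 1)⁻¹ = (τ 0)⁻¹ := by
    have h : (τ 0 * τ 1)⁻¹ * (τ 0 * τ 1)⁻¹ = 1 := by rw [← hτ2]; exact h2sq
    have h5 : τ 0 * τ 1 = (τ 0 * τ 1)⁻¹ := by
      have := inv_eq_of_mul_eq_one_right h; rwa [inv_inv] at this
    have h4 : τ 0 * (τ 1 * τ 0 * τ 1) = 1 := by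
      calc τ 0 * (τ 1 * τ 0 * τ 1) = (τ 0 * τ 1) * (τ 0 * τ 1) := by
            group
        _ = (τ 0 * τ 1) * (τ 0 * τ 1)⁻¹ := by rw [← h5]
        _ = 1 := mul_inv_cancel _
    rw [hinv1]
    exact (inv_eq_of_mul_eq_one_right h4).symm
  have keyb : τ 1 * (τ 0) ^ b * (τ 1)⁻¹ = ((τ 0) ^ b)⁻¹ := by
    rw [← conj_pow, key, inv_pow]
  set P : Perm (Fin d) → Prop := fun g => ∀ p, ((τ 0) ^ b) (g p) = g p ↔ ((τ 0) ^ b) p = p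
    with hP
  have Pmul : ∀ g h, P g → P h → P (g * h) := by
    intro g h hg hh p
    rw [mul_apply]
    exact (hg (h p)).trans (hh p)
  have Pinv : ∀ g, P g → P g⁻¹ := by
    intro g hg p
    have := hg (g⁻¹ p)
    rw [Perm.coe_inv, apply_symm_apply] at this
    exact this.symm
  have P0 : P (τ 0) := by
    intro p
    have hc : ((τ 0) ^ b) ((τ 0) p) = (τ 0) (((τ 0) ^ b) p) := by
      rw [← mul_apply, ← mul_apply, ← pow_succ, ← pow_succ']
    rw [hc]
    exact (τ 0).injective.eq_iff
  have P1 : P (τ 1) := by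
    intro p
    have keyb' : τ 1 * (τ 0 ^ b) * τ 1 = (τ 0 ^ b)⁻¹ := by nth_rewrite 2 [← hinv1]; exact keyb
    have step1 : (τ 0 ^ b) ((τ 1) p) = (τ 1) p ↔ (τ 1) ((τ 0 ^ b) ((τ 1) p)) = (τ 1) ((τ 1) p) :=
      ⟨fun h => by rw [h], fun h => (τ 1).injective h⟩
    have e1 : (τ 1) ((τ 0 ^ b) ((τ 1) p)) = ((τ 0 ^ b)⁻¹) p := by
      rw [← mul_apply, ← mul_apply, keyb']
    have e2 : (τ 1) ((τ 1) p) = p := by rw [← mul_apply, h1sq, one_apply]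
    rw [step1, e1, e2, Equiv.Perm.inv_eq_iff_eq, eq_comm]
  have P2 : P (τ 2) := by
    rw [hτ2, mul_inv_rev]
    exact Pmul _ _ (Pinv _ P1) (Pinv _ P0)
  have hPall : ∀ g ∈ Subgroup.closure (Set.range τ), P g := by
    intro g hg
    induction hg using Subgroup.closure_induction with
    | mem g hgm =>
      obtain ⟨i, rfl⟩ := hgm
      fin_cases i
      · exact P0
      · exact P1
      · exact P2
    | one => intro p; rfl
    | mul g h _ _ hg hh => exact Pmul _ _ hg hh
    | inv g _ hg => exact Pinv _ hg
  obtain ⟨p, hpmoved⟩ := exists_not_fixed_of_mem_fullCycleType (τ 0)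
    (show a ∈ fullCycleType (τ 0) by rw [hct0]; simp) hb hba'
  obtain ⟨q, hqfix⟩ := exists_fixed_of_mem_fullCycleType (τ 0)
    (show b ∈ fullCycleType (τ 0) by rw [hct0]; simp)
  obtain ⟨g, hg, hgpq⟩ := htrans p q
  have := (hPall g hg p)
  rw [hgpq] at this
  exact hpmoved (this.mp hqfix)

section congr
variable {α β : Type*}

/-- `Equiv.permCongr` as a monoid hom. -/
def permCongrHom (e : α ≃ β) : Perm α →* Perm β where
  toFun := e.permCongr
  map_one' := by ext x; simp
  map_mul' f g := by ext x; simp [Equiv.permCongr_apply, Perm.mul_apply]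

lemma permCongrHom_apply (e : α ≃ β) (π : Perm α) (y : β) :
    _root_.permCongrHom e π y = e (π (e.symm y)) := rfl

variable [DecidableEq α] [DecidableEq β] [Fintype α] [Fintype β]

lemma support_permCongrHom (e : α ≃ β) (π : Perm α) :
    (_root_.permCongrHom e π).support = π.support.map e.toEmbedding := by
  ext y
  simp only [Perm.mem_support, Finset.mem_map_equiv, permCongrHom_apply]
  rw [ne_eq, ne_eq, Equiv.apply_eq_iff_eq_symm_apply]

lemma isCycle_permCongrHom (e : α ≃ β) {π : Perm α} (h : π.IsCycle) :
    (_root_.permCongrHom e π).IsCycle := by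
  obtain ⟨x, hx, hall⟩ := h
  refine ⟨e x, ?_, ?_⟩
  · simp only [permCongrHom_apply, Equiv.symm_apply_apply, ne_eq]
    intro hc
    exact hx (e.injective hc)
  · intro y hy
    have hy' : π (e.symm y) ≠ e.symm y := by
      intro hc
      apply hy
      simp [permCongrHom_apply, hc]
    obtain ⟨i, hi⟩ := hall hy'
    refine ⟨i, ?_⟩
    have : (_root_.permCongrHom e π) ^ i = _root_.permCongrHom e (π ^ i) := (map_zpow _ _ _).symm
    rw [this, permCongrHom_apply, Equiv.symm_apply_apply, hi, Equiv.apply_symm_apply]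

lemma disjoint_permCongrHom (e : α ≃ β) {f g : Perm α} (h : f.Disjoint g) :
    (_root_.permCongrHom e f).Disjoint (_root_.permCongrHom e g) := by
  intro y
  rcases h (e.symm y) with h' | h' <;>
    [left; right] <;> rw [permCongrHom_apply, h', Equiv.apply_symm_apply]

lemma cycleType_permCongrHom (e : α ≃ β) (π : Perm α) :
    (_root_.permCongrHom e π).cycleType = π.cycleType := by
  induction π using Equiv.Perm.cycle_induction_on with
  | base_one => rw [map_one]; simp
  | base_cycles c hc =>
    rw [hc.cycleType, (isCycle_permCongrHom e hc).cycleType, support_permCongrHom,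
      Finset.card_map]
  | induction_disjoint σ ρ hd hc hσ hρ =>
    rw [map_mul, Perm.Disjoint.cycleType_mul (disjoint_permCongrHom e hd), hd.cycleType_mul, hσ, hρ]

lemma fullCycleType_permCongrHom (e : α ≃ β) (π : Perm α) :
    fullCycleType (_root_.permCongrHom e π) = fullCycleType π := by
  rw [fullCycleType, fullCycleType, cycleType_permCongrHom, Fintype.card_congr e.symm]

end congr

lemma fullCycleType_involution {α : Type*} [Fintype α] [DecidableEq α] {τ : Perm α}
    (h2 : τ * τ = 1) (hf : ∀ z, τ z ≠ z) :
    fullCycleType τ = Multiset.replicate (Fintype.card α / 2) 2 := by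
  have hdvd : orderOf τ ∣ 2 := orderOf_dvd_of_pow_eq_one (by rw [pow_two]; exact h2)
  have hmem : ∀ m ∈ τ.cycleType, m = 2 := by
    intro m hm
    have h2le : 2 ≤ m := Equiv.Perm.two_le_of_mem_cycleType hm
    have : m ∣ 2 := (Multiset.dvd_lcm hm).trans (by rw [Equiv.Perm.lcm_cycleType]; exact hdvd)
    have := Nat.le_of_dvd (by norm_num) this
    omega
  have hsupp : τ.support = Finset.univ := Finset.eq_univ_iff_forall.mpr fun z => by
    rw [Equiv.Perm.mem_support]; exact hf z
  have hsum : τ.cycleType.sum = Fintype.card α := by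
    rw [Equiv.Perm.sum_cycleType, hsupp, Finset.card_univ]
  have hrep : τ.cycleType = Multiset.replicate (Multiset.card τ.cycleType) 2 :=
    Multiset.eq_replicate.mpr ⟨rfl, hmem⟩
  have hcard : Multiset.card τ.cycleType * 2 = Fintype.card α := by
    have := hsum
    rw [hrep, Multiset.sum_replicate, smul_eq_mul] at this
    omega
  have hn : Multiset.card τ.cycleType = Fintype.card α / 2 := by omega
  rw [fullCycleType, hsum, Nat.sub_self, Multiset.replicate_zero, add_zero, hrep, hn]

lemma fullCycleType_addLeft {d : ℕ} [NeZero d] {c : ZMod d} (hk : 2 ≤ addOrderOf c) :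
    fullCycleType (Equiv.addLeft c) = Multiset.replicate (d / addOrderOf c) (addOrderOf c) := by
  set σ : Perm (ZMod d) := Equiv.addLeft c with hσ
  set k := addOrderOf c with hkdef
  have hσk : σ ^ k = 1 := by
    rw [hσ, Equiv.nsmul_addLeft, addOrderOf_nsmul_eq_zero, Equiv.addLeft_zero]
  have horder : orderOf σ ∣ k := orderOf_dvd_of_pow_eq_one hσk
  have hmem : ∀ m ∈ σ.cycleType, m = k := by
    intro m hm
    obtain ⟨p, hfix, -, -⟩ := exists_fixed_of_mem_cycleType σ hm
    rw [hσ, Equiv.nsmul_addLeft] at hfix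
    have hz : m • c = 0 := by
      have : m • c + p = 0 + p := by rw [zero_add]; exact hfix
      exact add_right_cancel this
    have h1 : k ∣ m := addOrderOf_dvd_of_nsmul_eq_zero hz
    have h2 : m ∣ k := (Multiset.dvd_lcm hm).trans
      (by rw [Equiv.Perm.lcm_cycleType]; exact horder)
    exact Nat.dvd_antisymm h2 h1
  have hc0 : c ≠ 0 := by
    intro h; rw [h, addOrderOf_zero] at hkdef; omega
  have hsupp : σ.support = Finset.univ := Finset.eq_univ_iff_forall.mpr fun z => by
    rw [Equiv.Perm.mem_support, hσ, Equiv.coe_addLeft]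
    intro hcz
    apply hc0
    have h0 : c + z = 0 + z := by rw [zero_add]; exact hcz
    exact add_right_cancel h0
  have hsum : σ.cycleType.sum = d := by
    rw [Equiv.Perm.sum_cycleType, hsupp, Finset.card_univ, ZMod.card]
  have hrep : σ.cycleType = Multiset.replicate (Multiset.card σ.cycleType) k :=
    Multiset.eq_replicate.mpr ⟨rfl, hmem⟩
  have hcard : Multiset.card σ.cycleType * k = d := by
    have := hsum
    rw [hrep, Multiset.sum_replicate, smul_eq_mul] at this
    omega
  have hn : Multiset.card σ.cycleType = d / k :=
    (Nat.div_eq_of_eq_mul_left (by omega) hcard.symm).symm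
  rw [fullCycleType, hsum, ZMod.card, Nat.sub_self, Multiset.replicate_zero, add_zero, hrep, hn]

lemma backward_dir {d : ℕ} (hd : 2 ≤ d) (hev : Even d) :
    realizable d 3
      ![({d / 2, d / 2} : Multiset ℕ),
        Multiset.replicate (d / 2) 2, Multiset.replicate (d / 2) 2] := by
  haveI : NeZero d := ⟨by omega⟩
  have hd2 : d % 2 = 0 := Nat.even_iff.mp hev
  set τz : Fin 3 → Perm (ZMod d) :=
    ![Equiv.addLeft (-2 : ZMod d), Equiv.subLeft (1 : ZMod d), Equiv.subLeft (-1 : ZMod d)]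
    with hτz
  have hτz0 : τz 0 = Equiv.addLeft (-2 : ZMod d) := rfl
  have hτz1 : τz 1 = Equiv.subLeft (1 : ZMod d) := rfl
  have hτz2 : τz 2 = Equiv.subLeft (-1 : ZMod d) := rfl
  -- the cast to ZMod 2
  have f := ZMod.castHom (Even.two_dvd hev) (ZMod 2)
  have hdouble : ∀ z : ZMod d, z + z ≠ 1 := by
    intro z hz
    have := congrArg (ZMod.castHom (Even.two_dvd hev) (ZMod 2)) hz
    rw [map_add, map_one] at this
    have h0 : ∀ y : ZMod 2, y + y = 0 := by decide
    rw [h0] at this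
    exact one_ne_zero this.symm
  have hdouble' : ∀ z : ZMod d, z + z ≠ -1 := by
    intro z hz
    have := congrArg (ZMod.castHom (Even.two_dvd hev) (ZMod 2)) hz
    rw [map_add, map_neg, map_one] at this
    have h0 : ∀ y : ZMod 2, y + y = 0 := by decide
    have h1 : (-1 : ZMod 2) = 1 := by decide
    rw [h0, h1] at this
    exact one_ne_zero this.symm
  -- involutions
  have hsq1 : τz 1 * τz 1 = 1 := by
    ext z; simp [hτz1, Perm.mul_apply, sub_sub_cancel]
  have hsq2 : τz 2 * τz 2 = 1 := by
    ext z; simp [hτz2, Perm.mul_apply, sub_sub_cancel]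
  have hfp1 : ∀ z : ZMod d, (τz 1) z ≠ z := by
    intro z hz
    rw [hτz1, Equiv.subLeft_apply] at hz
    exact hdouble z (by linear_combination -hz)
  have hfp2 : ∀ z : ZMod d, (τz 2) z ≠ z := by
    intro z hz
    rw [hτz2, Equiv.subLeft_apply] at hz
    exact hdouble' z (by linear_combination -hz)
  -- full cycle types over ZMod d
  have hct1 : fullCycleType (τz 1) = Multiset.replicate (d / 2) 2 := by
    rw [fullCycleType_involution hsq1 hfp1, ZMod.card]
  have hct2 : fullCycleType (τz 2) = Multiset.replicate (d / 2) 2 := by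
    rw [fullCycleType_involution hsq2 hfp2, ZMod.card]
  have hct0 : fullCycleType (τz 0) = ({d / 2, d / 2} : Multiset ℕ) := by
    rcases eq_or_lt_of_le hd with hd2' | hd4
    · -- d = 2
      have hdeq : d = 2 := hd2'.symm
      subst hdeq
      have hz : (-2 : ZMod 2) = 0 := by decide
      rw [hτz0, hz, Equiv.addLeft_zero]
      have : fullCycleType (1 : Perm (ZMod 2)) = Multiset.replicate 2 1 := by
        rw [fullCycleType, Equiv.Perm.cycleType_one, ZMod.card]
        simp
      rw [this]
      rfl
    · -- d ≥ 4 (d ≥ 3 and even)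
      have hd4' : 4 ≤ d := by omega
      have hord : addOrderOf (-2 : ZMod d) = d / 2 := by
        have hneg : (-2 : ZMod d) = -(2 : ZMod d) := by norm_num
        have hcast : (2 : ZMod d) = ((2 : ℕ) : ZMod d) := by norm_num
        rw [hneg, addOrderOf_neg, hcast, ZMod.addOrderOf_coe 2 (by omega),
          Nat.gcd_comm, Nat.gcd_eq_left (Even.two_dvd hev)]
      have hk : 2 ≤ addOrderOf (-2 : ZMod d) := by rw [hord]; omega
      rw [hτz0, fullCycleType_addLeft hk, hord]
      have hquot : d / (d / 2) = 2 := by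
        obtain ⟨k, hk2⟩ := hev
        rw [show d / 2 = k by omega, show d = 2 * k by omega,
          Nat.mul_div_cancel _ (by omega)]
      rw [hquot]
      rfl
  -- product is the identity
  have hprodz : τz 0 * (τz 1 * τz 2) = 1 := by
    ext z
    simp only [hτz0, hτz1, hτz2, Perm.mul_apply, Equiv.coe_addLeft, Equiv.subLeft_apply,
      Perm.one_apply]
    ring
  -- transitivity over ZMod d
  set H := Subgroup.closure (Set.range τz) with hH
  have h0H : τz 0 ∈ H := Subgroup.subset_closure ⟨0, rfl⟩
  have h1H : τz 1 ∈ H := Subgroup.subset_closure ⟨1, rfl⟩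
  have hreach : ∀ n : ℕ, ∃ g ∈ H, g (0 : ZMod d) = (n : ZMod d) := by
    intro n
    rcases Nat.even_or_odd n with ⟨m, hm⟩ | ⟨m, hm⟩
    · refine ⟨((τz 0)⁻¹) ^ m, pow_mem (inv_mem h0H) m, ?_⟩
      rw [hτz0, Equiv.neg_addLeft, neg_neg, Equiv.nsmul_addLeft]
      show m • (2 : ZMod d) + 0 = (n : ZMod d)
      rw [add_zero, nsmul_eq_mul, hm]
      push_cast
      ring
    · refine ⟨((τz 0)⁻¹) ^ m * τz 1, mul_mem (pow_mem (inv_mem h0H) m) h1H, ?_⟩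
      rw [Perm.mul_apply, hτz1, hτz0, Equiv.neg_addLeft, neg_neg, Equiv.nsmul_addLeft]
      show m • (2 : ZMod d) + ((1 : ZMod d) - 0) = (n : ZMod d)
      rw [nsmul_eq_mul, hm]
      push_cast
      ring
  have hreachall : ∀ u v : ZMod d, ∃ g ∈ H, g u = v := by
    intro u v
    obtain ⟨gu, hgu, hgu0⟩ := hreach u.val
    obtain ⟨gv, hgv, hgv0⟩ := hreach v.val
    rw [show ((u.val : ℕ) : ZMod d) = u from ZMod.natCast_rightInverse u] at hgu0
    rw [show ((v.val : ℕ) : ZMod d) = v from ZMod.natCast_rightInverse v] at hgv0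
    refine ⟨gv * gu⁻¹, mul_mem hgv (inv_mem hgu), ?_⟩
    rw [Perm.mul_apply]
    have h0 : gu⁻¹ u = 0 := by rw [← hgu0, Perm.coe_inv, symm_apply_apply]
    rw [h0, hgv0]
  -- transport to Fin d
  set e : ZMod d ≃ Fin d := Fintype.equivFinOfCardEq (ZMod.card d) with he
  refine ⟨fun i => _root_.permCongrHom e (τz i), ?_, ?_, ?_⟩
  · have hl : (List.ofFn fun i => _root_.permCongrHom e (τz i)).prod
        = _root_.permCongrHom e (τz 0) * (_root_.permCongrHom e (τz 1) * _root_.permCongrHom e (τz 2)) := by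
      simp [List.ofFn_succ, mul_assoc]
    rw [hl, ← map_mul, ← map_mul, hprodz, map_one]
  · intro p q
    obtain ⟨g, hg, hguv⟩ := hreachall (e.symm p) (e.symm q)
    refine ⟨_root_.permCongrHom e g, ?_, ?_⟩
    · have hr : Set.range (fun i => _root_.permCongrHom e (τz i)) = (_root_.permCongrHom e) '' Set.range τz := by
        rw [← Set.range_comp]
        rfl
      rw [hr, ← MonoidHom.map_closure]
      exact Subgroup.mem_map_of_mem _ hg
    · rw [permCongrHom_apply, hguv, Equiv.apply_symm_apply]
  · intro i
    fin_cases i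
    · rw [fullCycleType_permCongrHom]
      simpa using hct0
    · rw [fullCycleType_permCongrHom]
      simpa using hct1
    · rw [fullCycleType_permCongrHom]
      simpa using hct2

end aux2

/-- Proposition 2.8, due to Edmonds–Kulkarni–Stong.
For even `d`, the partitions `(x, d-x)`, `(2,…,2)`, `(2,…,2)` are realized by
permutations iff `x = d/2`. -/
theorem stmt9 (d x : ℕ) (hd : 2 ≤ d) (hev : Even d) (hx1 : 1 ≤ x)
    (hxd : x ≤ d - 1) :
    realizable d 3
      ![({max x (d - x), min x (d - x)} : Multiset ℕ),
        Multiset.replicate (d / 2) 2,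
        Multiset.replicate (d / 2) 2] ↔
    x = d / 2 := by
  have hd2 : d % 2 = 0 := Nat.even_iff.mp hev
  constructor
  · intro hr
    obtain ⟨τ, hprod, htrans, hct⟩ := hr
    have hct0 : fullCycleType (τ 0) = {max x (d - x), min x (d - x)} := by simpa using hct 0
    have hct1 : fullCycleType (τ 1) = Multiset.replicate (d / 2) 2 := by simpa using hct 1
    have hct2 : fullCycleType (τ 2) = Multiset.replicate (d / 2) 2 := by simpa using hct 2
    have hb : 0 < min x (d - x) := lt_min (by omega) (by omega)
    have hab : max x (d - x) = min x (d - x) :=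
      forward_dir hb min_le_max τ hprod htrans hct0 hct1 hct2
    rcases le_total x (d - x) with h | h
    · rw [max_eq_right h, min_eq_left h] at hab; omega
    · rw [max_eq_left h, min_eq_right h] at hab; omega
  · intro hx
    have h1 : d - x = d / 2 := by omega
    rw [h1, hx, max_self, min_self]
    exact backward_dir hd hev
end

section
/- Let 1 < k < d with k dividing d, and let τ ∈ S_d have cycle lengths d₁, …, d_m (counting each fixed point as a cycle of length 1). Then τ admits a block decomposition of order k if and only if the index set {1, …, m} can be partitioned into nonempty sets D₁, …, D_t for which there exist positive integers p₁, …, p_t such that for every j, p_j divides d_i for all i ∈ D_j and Σ_{i ∈ D_j} d_i / p_j = k. Moreover, in that case there is a block decomposition of order k for which the induced permutation τ̂ of the d/k blocks has multiset of cycle lengths exactly {p₁, …, p_t}, and conversely, for every block decomposition of order k of τ there exist such D₁, …, D_t and p₁, …, p_t for which the induced permutation τ̂ has multiset of cycle lengths {p₁, …, p_t}. -/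
/-- A block decomposition of order `k` for a permutation `τ` of `{1,…,d}`:
a partition of `{1,…,d}` into `d/k` blocks, each of cardinality `k`, such that
`τ` maps each block onto a block. -/
structure BlockDecomp (d k : ℕ) (τ : Equiv.Perm (Fin d)) where
  blocks : Finset (Finset (Fin d))
  card_blocks : blocks.card = d / k
  card_each : ∀ B ∈ blocks, B.card = k
  covers : ∀ x : Fin d, ∃ B ∈ blocks, x ∈ B
  pairwise_disjoint : ∀ B ∈ blocks, ∀ C ∈ blocks, B ≠ C → Disjoint B C
  image_mem : ∀ B ∈ blocks, B.image τ ∈ blocks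

/-- `σ` is the permutation of the blocks of `D` induced by `τ`. -/
def IsInduced {d k : ℕ} {τ : Equiv.Perm (Fin d)} (D : BlockDecomp d k τ)
    (σ : Equiv.Perm {B // B ∈ D.blocks}) : Prop :=
  ∀ B : {B // B ∈ D.blocks}, (σ B : Finset (Fin d)) = (B : Finset (Fin d)).image τ

/-- The combinatorial condition of Lemma 5.2: the multiset of cycle lengths of
`τ` is partitioned into nonempty multisets `D₁, …, D_t` with positive integers
`p₁, …, p_t` such that `p_j` divides every element of `D_j` and
`∑_{x ∈ D_j} x / p_j = k`. -/
def IsBlockData {d : ℕ} (τ : Equiv.Perm (Fin d)) (k t : ℕ)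
    (D : Fin t → Multiset ℕ) (p : Fin t → ℕ) : Prop :=
  (∑ j, D j) = fullCycleType τ ∧
  ∀ j, D j ≠ 0 ∧ 0 < p j ∧ (∀ x ∈ D j, p j ∣ x) ∧
    ((D j).map (fun x => x / p j)).sum = k

open Equiv Finset

namespace Stmt12

variable {α : Type*} [Fintype α] [DecidableEq α]

/-- The orbit (cycle) of `x` under `τ`, as a finset. -/
def orbitOf (τ : Perm α) (x : α) : Finset α := Finset.univ.filter (τ.SameCycle x)

lemma mem_orbitOf {τ : Perm α} {x y : α} : y ∈ orbitOf τ x ↔ τ.SameCycle x y := by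
  simp [orbitOf]

lemma self_mem_orbitOf (τ : Perm α) (x : α) : x ∈ orbitOf τ x :=
  mem_orbitOf.2 (Equiv.Perm.SameCycle.refl _ _)

lemma zpow_mem_orbitOf (τ : Perm α) (x : α) (i : ℤ) : (τ ^ i) x ∈ orbitOf τ x :=
  mem_orbitOf.2 ⟨i, rfl⟩

lemma pow_mem_orbitOf (τ : Perm α) (x : α) (n : ℕ) : (τ ^ n) x ∈ orbitOf τ x := by
  simpa using zpow_mem_orbitOf τ x (n : ℤ)

lemma orbitOf_nonempty (τ : Perm α) (x : α) : (orbitOf τ x).Nonempty :=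
  ⟨x, self_mem_orbitOf τ x⟩

lemma orbitOf_eq_of_mem {τ : Perm α} {x y : α} (h : y ∈ orbitOf τ x) :
    orbitOf τ y = orbitOf τ x := by
  ext z
  simp only [mem_orbitOf] at *
  exact ⟨fun hz => h.trans hz, fun hz => h.symm.trans hz⟩

lemma orbitOf_singleton {τ : Perm α} {x : α} (h : τ x = x) : orbitOf τ x = {x} := by
  ext y
  simp only [mem_orbitOf, Finset.mem_singleton]
  constructor
  · rintro ⟨i, rfl⟩
    exact (Equiv.Perm.zpow_apply_eq_self_of_apply_eq_self h i)
  · rintro rfl; exact Equiv.Perm.SameCycle.refl _ _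

lemma orbitOf_eq_support_cycleOf {τ : Perm α} {x : α} (h : x ∈ τ.support) :
    orbitOf τ x = (τ.cycleOf x).support := by
  ext y
  rw [mem_orbitOf, Equiv.Perm.mem_support_cycleOf_iff, and_iff_left h]

lemma pow_orbitOf_card_apply (τ : Perm α) (x : α) : (τ ^ (orbitOf τ x).card) x = x := by
  by_cases h : x ∈ τ.support
  · rw [orbitOf_eq_support_cycleOf h]
    have hc : (τ.cycleOf x).IsCycle := Equiv.Perm.isCycle_cycleOf τ (Equiv.Perm.mem_support.1 h)
    have := hc.orderOf
    have h1 : (τ.cycleOf x) ^ (τ.cycleOf x).support.card = 1 := by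
      rw [← this]; exact pow_orderOf_eq_one _
    have h2 := Equiv.Perm.cycleOf_pow_apply_self τ x (τ.cycleOf x).support.card
    rw [h1] at h2
    exact h2.symm ▸ rfl
  · have hx : τ x = x := by simpa using h
    rw [orbitOf_singleton hx, Finset.card_singleton, pow_one]
    exact hx

lemma zpow_mod_orbitOf_card (τ : Perm α) (x : α) (i : ℤ) :
    (τ ^ i) x = (τ ^ (i % ((orbitOf τ x).card : ℤ))) x := by
  set ℓ : ℤ := ((orbitOf τ x).card : ℤ)
  have hfix : (τ ^ ℓ) x = x := by
    simpa [ℓ, zpow_natCast] using pow_orbitOf_card_apply τ x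
  have hfixq : ∀ q : ℤ, ((τ ^ ℓ) ^ q) x = x :=
    fun q => Equiv.Perm.zpow_apply_eq_self_of_apply_eq_self hfix q
  conv_lhs => rw [← Int.emod_add_mul_ediv i ℓ]
  rw [zpow_add, Equiv.Perm.mul_apply, zpow_mul]
  rw [hfixq (i / ℓ)]

lemma mem_orbitOf_iff_pow {τ : Perm α} {x y : α} :
    y ∈ orbitOf τ x ↔ ∃ n < (orbitOf τ x).card, (τ ^ n) x = y := by
  constructor
  · intro h
    obtain ⟨i, hi⟩ := mem_orbitOf.1 h
    have hpos : (0 : ℤ) < ((orbitOf τ x).card : ℤ) := by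
      exact_mod_cast (orbitOf_nonempty τ x).card_pos
    have h0 : (0:ℤ) ≤ i % ((orbitOf τ x).card : ℤ) := Int.emod_nonneg i (by omega)
    have hlt := Int.emod_lt_of_pos i hpos
    set n := (i % ((orbitOf τ x).card : ℤ)).toNat with hn
    have heq : (n : ℤ) = i % ((orbitOf τ x).card : ℤ) := by omega
    refine ⟨n, by omega, ?_⟩
    rw [← hi, zpow_mod_orbitOf_card τ x i, ← heq, zpow_natCast]
  · rintro ⟨n, _, rfl⟩
    exact pow_mem_orbitOf τ x n

lemma sameCycle_iff_pow {τ : Perm α} {x y : α} :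
    τ.SameCycle x y ↔ ∃ n : ℕ, (τ ^ n) x = y := by
  rw [← mem_orbitOf]
  constructor
  · intro h; obtain ⟨n, _, hn⟩ := mem_orbitOf_iff_pow.1 h; exact ⟨n, hn⟩
  · rintro ⟨n, rfl⟩; exact pow_mem_orbitOf τ x n

lemma pow_injOn_orbitOf (τ : Perm α) (x : α) :
    ∀ a < (orbitOf τ x).card, ∀ b < (orbitOf τ x).card, (τ ^ a) x = (τ ^ b) x → a = b := by
  set ℓ := (orbitOf τ x).card with hℓ
  have himg : (Finset.range ℓ).image (fun n => (τ ^ n) x) = orbitOf τ x := by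
    ext y
    simp only [Finset.mem_image, Finset.mem_range]
    rw [mem_orbitOf_iff_pow]
  have hcard : ((Finset.range ℓ).image (fun n => (τ ^ n) x)).card = (Finset.range ℓ).card := by
    rw [himg, Finset.card_range]
  have hinj := Finset.injOn_of_card_image_eq hcard
  intro a ha b hb hab
  exact hinj (Finset.mem_coe.2 (Finset.mem_range.2 ha)) (Finset.mem_coe.2 (Finset.mem_range.2 hb)) hab

lemma pow_apply_eq_iff_mod (τ : Perm α) (x : α) (a b : ℕ) :
    (τ ^ a) x = (τ ^ b) x ↔ a % (orbitOf τ x).card = b % (orbitOf τ x).card := by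
  set ℓ := (orbitOf τ x).card with hℓ
  have hpos : 0 < ℓ := (orbitOf_nonempty τ x).card_pos
  have hmod : ∀ n : ℕ, (τ ^ n) x = (τ ^ (n % ℓ)) x := by
    intro n
    have := zpow_mod_orbitOf_card τ x (n : ℤ)
    rwa [show ((n : ℤ) % (ℓ : ℤ)) = ((n % ℓ : ℕ) : ℤ) by push_cast; rfl, zpow_natCast, zpow_natCast] at this
  constructor
  · intro h
    rw [hmod a, hmod b] at h
    exact pow_injOn_orbitOf τ x _ (Nat.mod_lt _ hpos) _ (Nat.mod_lt _ hpos) h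
  · intro h
    rw [hmod a, hmod b, h]


lemma apply_mem_orbitOf {τ : Perm α} {x y : α} (h : y ∈ orbitOf τ x) : τ y ∈ orbitOf τ x :=
  mem_orbitOf.2 ((mem_orbitOf.1 h).trans ⟨1, by simp⟩)

/-- The finset of orbits of `τ`. -/
def orbits (τ : Perm α) : Finset (Finset α) := Finset.univ.image (orbitOf τ)

lemma orbitOf_mem_orbits (τ : Perm α) (x : α) : orbitOf τ x ∈ orbits τ :=
  Finset.mem_image_of_mem _ (Finset.mem_univ x)

lemma eq_orbitOf_of_mem_orbits {τ : Perm α} {O : Finset α} (hO : O ∈ orbits τ) {x : α}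
    (hx : x ∈ O) : O = orbitOf τ x := by
  obtain ⟨y, -, rfl⟩ := Finset.mem_image.1 hO
  exact (orbitOf_eq_of_mem hx).symm

lemma orbits_nonempty {τ : Perm α} {O : Finset α} (hO : O ∈ orbits τ) : O.Nonempty := by
  obtain ⟨y, -, rfl⟩ := Finset.mem_image.1 hO
  exact orbitOf_nonempty τ y

lemma orbits_disjoint {τ : Perm α} {O O' : Finset α} (hO : O ∈ orbits τ) (hO' : O' ∈ orbits τ)
    (h : O ≠ O') : Disjoint O O' := by
  rw [Finset.disjoint_left]
  intro a ha ha'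
  exact h ((eq_orbitOf_of_mem_orbits hO ha).trans (eq_orbitOf_of_mem_orbits hO' ha').symm)

lemma filterA (τ : Perm α) :
    (orbits τ).filter (fun O => ¬ O.card = 1) = τ.cycleFactorsFinset.image Equiv.Perm.support := by
  ext O
  simp only [Finset.mem_filter, Finset.mem_image]
  constructor
  · rintro ⟨hO, hcard⟩
    obtain ⟨x, -, rfl⟩ := Finset.mem_image.1 hO
    have hx : x ∈ τ.support := by
      by_contra hx
      have : τ x = x := Equiv.Perm.notMem_support.1 hx
      rw [orbitOf_singleton this, Finset.card_singleton] at hcard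
      exact hcard rfl
    exact ⟨τ.cycleOf x, Equiv.Perm.cycleOf_mem_cycleFactorsFinset_iff.2 hx,
      (orbitOf_eq_support_cycleOf hx).symm⟩
  · rintro ⟨c, hc, rfl⟩
    have hcyc : c.IsCycle := (Equiv.Perm.mem_cycleFactorsFinset_iff.1 hc).1
    have h2 : 2 ≤ c.support.card := hcyc.two_le_card_support
    obtain ⟨x, hx⟩ := Finset.card_pos.1 (show 0 < c.support.card by omega)
    have hceq : c = τ.cycleOf x := Equiv.Perm.cycle_is_cycleOf hx hc
    have hxs : x ∈ τ.support := by
      rw [← Equiv.Perm.cycleOf_mem_cycleFactorsFinset_iff, ← hceq]; exact hc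
    refine ⟨?_, ?_⟩
    · rw [hceq, ← orbitOf_eq_support_cycleOf hxs]; exact orbitOf_mem_orbits τ x
    · omega

lemma support_injOn_cff (τ : Perm α) :
    Set.InjOn Equiv.Perm.support (τ.cycleFactorsFinset : Set (Perm α)) := by
  intro c hc c' hc' h
  by_contra hne
  have hdisj := τ.cycleFactorsFinset_pairwise_disjoint hc hc' hne
  have hsd := Equiv.Perm.Disjoint.disjoint_support hdisj
  rw [h] at hsd
  have hcyc : (c' : Perm α).IsCycle :=
    (Equiv.Perm.mem_cycleFactorsFinset_iff.1 (Finset.mem_coe.1 hc')).1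
  have h2 : 2 ≤ (c' : Perm α).support.card := hcyc.two_le_card_support
  obtain ⟨x, hx⟩ := Finset.card_pos.1 (show 0 < (c' : Perm α).support.card by omega)
  exact (Finset.disjoint_left.1 hsd) hx hx

lemma filterB (τ : Perm α) :
    (orbits τ).filter (fun O => O.card = 1) = τ.supportᶜ.image (fun x => ({x} : Finset α)) := by
  ext O
  simp only [Finset.mem_filter, Finset.mem_image, Finset.mem_compl]
  constructor
  · rintro ⟨hO, hcard⟩
    obtain ⟨x, -, rfl⟩ := Finset.mem_image.1 hO
    refine ⟨x, ?_, ?_⟩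
    · intro hx
      have hne : τ x ≠ x := Equiv.Perm.mem_support.1 hx
      obtain ⟨a, ha⟩ := Finset.card_eq_one.1 hcard
      have h1 : x ∈ orbitOf τ x := self_mem_orbitOf τ x
      have h2 : τ x ∈ orbitOf τ x := apply_mem_orbitOf h1
      rw [ha, Finset.mem_singleton] at h1 h2
      exact hne (h2.trans h1.symm)
    · obtain ⟨a, ha⟩ := Finset.card_eq_one.1 hcard
      have h1 : x ∈ orbitOf τ x := self_mem_orbitOf τ x
      rw [ha, Finset.mem_singleton] at h1
      rw [ha, h1]
  · rintro ⟨x, hx, rfl⟩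
    have hfix : τ x = x := Equiv.Perm.notMem_support.1 hx
    refine ⟨?_, Finset.card_singleton x⟩
    rw [← orbitOf_singleton hfix]
    exact orbitOf_mem_orbits τ x

lemma fullCycleType_eq_orbits (τ : Perm α) :
    fullCycleType τ = (orbits τ).val.map Finset.card := by
  have hsplit : (orbits τ).val.map Finset.card
      = (((orbits τ).filter (fun O => ¬ O.card = 1)).val.map Finset.card)
        + (((orbits τ).filter (fun O => O.card = 1)).val.map Finset.card) := by
    rw [Finset.filter_val, Finset.filter_val, ← Multiset.map_add, add_comm,
      Multiset.filter_add_not]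
  have hA : ((orbits τ).filter (fun O => ¬ O.card = 1)).val.map Finset.card = τ.cycleType := by
    rw [filterA, Equiv.Perm.cycleType_def]
    have hval : (τ.cycleFactorsFinset.image Equiv.Perm.support).val
        = τ.cycleFactorsFinset.val.map Equiv.Perm.support := by
      rw [Finset.image_val, Multiset.dedup_eq_self.2]
      exact Multiset.Nodup.map_on (fun c hc c' hc' h => support_injOn_cff τ hc hc' h)
        τ.cycleFactorsFinset.nodup
    rw [hval, Multiset.map_map]
  have hB : ((orbits τ).filter (fun O => O.card = 1)).val.map Finset.card
      = Multiset.replicate (Fintype.card α - τ.cycleType.sum) 1 := by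
    rw [filterB]
    have hval : (τ.supportᶜ.image (fun x => ({x} : Finset α))).val
        = τ.supportᶜ.val.map (fun x => ({x} : Finset α)) := by
      rw [Finset.image_val, Multiset.dedup_eq_self.2]
      exact Multiset.Nodup.map_on
        (fun c hc c' hc' h => Finset.singleton_injective h) τ.supportᶜ.nodup
    rw [hval, Multiset.map_map]
    have : (Finset.card ∘ fun x : α => ({x} : Finset α)) = fun _ => 1 := by
      funext x; simp
    rw [this, Multiset.map_const', Equiv.Perm.sum_cycleType]
    congr 1
    rw [← Finset.card_def, Finset.card_compl]
  rw [hsplit, hA, hB, fullCycleType]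


lemma multiset_partition {β : Type*} {t : ℕ} (f : β → Fin t) (m : Multiset β) :
    (∑ j : Fin t, m.filter (fun a => f a = j)) = m := by
  induction m using Multiset.induction with
  | empty => simp
  | cons a m ih =>
    have h1 : ∀ j : Fin t, (a ::ₘ m).filter (fun b => f b = j)
        = (if f a = j then ({a} : Multiset β) else 0) + m.filter (fun b => f b = j) :=
      fun j => Multiset.filter_cons _
    simp only [h1, Finset.sum_add_distrib, ih]
    rw [Finset.sum_ite_eq Finset.univ (f a) (fun _ => ({a} : Multiset β))]
    simp [Multiset.singleton_add]

end Stmt12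

section BlockLemmas

open Stmt12 Equiv Finset

variable {d k : ℕ} {τ : Equiv.Perm (Fin d)}

lemma exists_induced (B : BlockDecomp d k τ) : ∃ σ, IsInduced B σ := by
  have himg : ∀ C : {S // S ∈ B.blocks}, (C : Finset (Fin d)).image τ ∈ B.blocks :=
    fun C => B.image_mem C C.2
  set f : {S // S ∈ B.blocks} → {S // S ∈ B.blocks} :=
    fun C => ⟨(C : Finset (Fin d)).image τ, himg C⟩ with hf
  have hinj : Function.Injective f := by
    intro C C' h
    apply Subtype.ext
    exact Finset.image_injective τ.injective (congrArg Subtype.val h)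
  refine ⟨Equiv.ofBijective f (Finite.injective_iff_bijective.1 hinj), fun C => ?_⟩
  rw [Equiv.ofBijective_apply]

noncomputable def blk (B : BlockDecomp d k τ) (x : Fin d) : {S // S ∈ B.blocks} :=
  ⟨(B.covers x).choose, (B.covers x).choose_spec.1⟩

lemma mem_blk (B : BlockDecomp d k τ) (x : Fin d) : x ∈ (blk B x : Finset (Fin d)) :=
  (B.covers x).choose_spec.2

lemma blk_eq (B : BlockDecomp d k τ) {x : Fin d} {C : {S // S ∈ B.blocks}}
    (h : x ∈ (C : Finset (Fin d))) : blk B x = C := by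
  by_contra hne
  have hd := B.pairwise_disjoint _ (blk B x).2 _ C.2 (fun he => hne (Subtype.ext he))
  exact (Finset.disjoint_left.1 hd) (mem_blk B x) h

lemma blk_apply (B : BlockDecomp d k τ) {σ : Perm {S // S ∈ B.blocks}} (hσ : IsInduced B σ)
    (x : Fin d) : blk B (τ x) = σ (blk B x) := by
  apply blk_eq
  rw [hσ (blk B x)]
  exact Finset.mem_image_of_mem τ (mem_blk B x)

lemma blk_pow_apply (B : BlockDecomp d k τ) {σ : Perm {S // S ∈ B.blocks}} (hσ : IsInduced B σ)
    (x : Fin d) (n : ℕ) : blk B ((τ ^ n) x) = (σ ^ n) (blk B x) := by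
  induction n with
  | zero => simp
  | succ n ih =>
    rw [pow_succ', pow_succ', Equiv.Perm.mul_apply, Equiv.Perm.mul_apply, ← ih,
      blk_apply B hσ]

end BlockLemmas

section Part3

open Stmt12 Equiv Finset

variable {d k : ℕ} {τ : Equiv.Perm (Fin d)}

lemma map_finsum' {β γ ι : Type*} (f : β → γ) (s : Finset ι) (g : ι → Multiset β) :
    (∑ i ∈ s, g i).map f = ∑ i ∈ s, (g i).map f :=
  map_sum (Multiset.mapAddMonoidHom f) g s

lemma part3 (hd : 0 < d) (hk : 0 < k) (B : BlockDecomp d k τ)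
    (σ : Perm {S // S ∈ B.blocks}) (hσ : IsInduced B σ) :
    ∃ (t : ℕ) (D : Fin t → Multiset ℕ) (p : Fin t → ℕ),
      IsBlockData τ k t D p ∧
      fullCycleType σ = (Finset.univ.val : Multiset (Fin t)).map p := by
  classical
  set t := (orbits σ).card with ht
  set e : Fin t ≃ {O // O ∈ orbits σ} := (orbits σ).equivFin.symm with he
  set q : Fin d → Fin t :=
    fun x => (orbits σ).equivFin ⟨orbitOf σ (blk B x), orbitOf_mem_orbits σ (blk B x)⟩ with hq
  have heq : ∀ x : Fin d, (e (q x) : Finset {S // S ∈ B.blocks}) = orbitOf σ (blk B x) := by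
    intro x
    simp only [hq, he, Equiv.symm_apply_apply]
  have hqiff : ∀ (j : Fin t) (x : Fin d),
      q x = j ↔ orbitOf σ (blk B x) = (e j : Finset {S // S ∈ B.blocks}) := by
    intro j x
    constructor
    · intro h; rw [← h, heq]
    · intro h
      apply e.injective
      apply Subtype.ext
      rw [heq, h]
  have hqconst : ∀ x y : Fin d, τ.SameCycle x y → q x = q y := by
    intro x y hxy
    obtain ⟨n, rfl⟩ := sameCycle_iff_pow.1 hxy
    have hb : blk B ((τ ^ n) x) = (σ ^ n) (blk B x) := blk_pow_apply B hσ x n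
    have horb : orbitOf σ (blk B ((τ ^ n) x)) = orbitOf σ (blk B x) := by
      rw [hb]; exact orbitOf_eq_of_mem (pow_mem_orbitOf σ (blk B x) n)
    symm
    rw [hqiff (q x) ((τ ^ n) x), horb, heq]
  have x0 : Fin d := ⟨0, hd⟩
  set f : Finset (Fin d) → Fin t := fun O => if h : O.Nonempty then q h.choose else q x0
    with hfdef
  have hf : ∀ O ∈ orbits τ, ∀ x ∈ O, f O = q x := by
    intro O hO x hx
    have hne : O.Nonempty := ⟨x, hx⟩
    have hc : hne.choose ∈ O := hne.choose_spec
    have h1 : f O = q hne.choose := by rw [hfdef]; exact dif_pos hne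
    rw [h1]
    apply hqconst
    have h2 := eq_orbitOf_of_mem_orbits hO hx
    have hc' : hne.choose ∈ orbitOf τ x := by rw [← h2]; exact hc
    exact (mem_orbitOf.1 hc').symm
  set D : Fin t → Multiset ℕ :=
    fun j => ((orbits τ).filter (fun O => f O = j)).val.map Finset.card with hD
  set p : Fin t → ℕ := fun j => (e j : Finset {S // S ∈ B.blocks}).card with hp
  have hsum : (∑ j, D j) = fullCycleType τ := by
    rw [fullCycleType_eq_orbits]
    simp only [hD, Finset.filter_val]
    conv_rhs => rw [← multiset_partition f (orbits τ).val]
    rw [map_finsum']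
  have hdvd : ∀ (j : Fin t) (y : Fin d), q y = j → p j ∣ (orbitOf τ y).card := by
    intro j y hy
    have horb' : orbitOf σ (blk B y) = (e j : Finset _) := (hqiff j y).1 hy
    have hcard : (orbitOf σ (blk B y)).card = p j := congrArg Finset.card horb'
    have hfix : (τ ^ (orbitOf τ y).card) y = y := pow_orbitOf_card_apply τ y
    have hb : (σ ^ (orbitOf τ y).card) (blk B y) = (σ ^ 0) (blk B y) := by
      rw [← blk_pow_apply B hσ, hfix, pow_zero]; rfl
    have hmod := (pow_apply_eq_iff_mod σ (blk B y) _ 0).1 hb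
    rw [Nat.zero_mod, hcard] at hmod
    exact Nat.dvd_of_mod_eq_zero hmod
  have hmain : ∀ j : Fin t, D j ≠ 0 ∧ 0 < p j ∧ (∀ x ∈ D j, p j ∣ x) ∧
      ((D j).map (fun x => x / p j)).sum = k := by
    intro j
    have hOj : (e j : Finset {S // S ∈ B.blocks}) ∈ orbits σ := (e j).2
    obtain ⟨b₀, hb₀⟩ := orbits_nonempty hOj
    have horb : (e j : Finset {S // S ∈ B.blocks}) = orbitOf σ b₀ :=
      eq_orbitOf_of_mem_orbits hOj hb₀
    have hpj : p j = (orbitOf σ b₀).card := congrArg Finset.card horb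
    have hppos : 0 < p j := by rw [hpj]; exact (orbitOf_nonempty σ b₀).card_pos
    have hCcard : (b₀ : Finset (Fin d)).card = k := B.card_each _ b₀.2
    have hCne : (b₀ : Finset (Fin d)).Nonempty := Finset.card_pos.1 (by omega)
    have hqmem : ∀ x : Fin d, x ∈ (b₀ : Finset (Fin d)) → q x = j := by
      intro x hx
      rw [hqiff j x, blk_eq B hx, horb]
    have hpb : (orbitOf σ b₀).card = p j := hpj.symm
    have hσb : ∀ m : ℕ, p j ∣ m → (σ ^ m) b₀ = b₀ := by
      intro m hm
      obtain ⟨c, rfl⟩ := hm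
      have h0 : (σ ^ (p j * c)) b₀ = (σ ^ 0) b₀ := by
        rw [pow_apply_eq_iff_mod σ b₀ _ 0, hpb, Nat.zero_mod, Nat.mul_mod_right]
      simpa using h0
    have hinter : ∀ O ∈ (orbits τ).filter (fun O => f O = j),
        (O ∩ (b₀ : Finset (Fin d))).card = O.card / p j := by
      intro O hO'
      obtain ⟨hOmem, hfO⟩ := Finset.mem_filter.1 hO'
      obtain ⟨z, -, hz⟩ := Finset.mem_image.1 hOmem
      have hzO : z ∈ O := by rw [← hz]; exact self_mem_orbitOf τ z
      have hqz : q z = j := (hf O hOmem z hzO).symm.trans hfO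
      have hbz : orbitOf σ (blk B z) = (e j : Finset _) := (hqiff j z).1 hqz
      have hb₀z : b₀ ∈ orbitOf σ (blk B z) := by rw [hbz]; exact hb₀
      obtain ⟨n, -, hn⟩ := mem_orbitOf_iff_pow.1 hb₀z
      have hblky : blk B ((τ ^ n) z) = b₀ := by rw [blk_pow_apply B hσ, hn]
      set y : Fin d := (τ ^ n) z with hy
      have hyO : y ∈ O := by rw [← hz, hy]; exact pow_mem_orbitOf τ z n
      have hyC : y ∈ (b₀ : Finset (Fin d)) := by rw [← hblky]; exact mem_blk B y
      have hOy : O = orbitOf τ y := eq_orbitOf_of_mem_orbits hOmem hyO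
      have hqy : q y = j := (hf O hOmem y hyO).symm.trans hfO
      have hpdvd : p j ∣ O.card := by rw [hOy]; exact hdvd j y hqy
      set ℓ := O.card with hℓ
      have hℓy : (orbitOf τ y).card = ℓ := by rw [hℓ, hOy]
      have hblk_pow : ∀ m : ℕ, blk B ((τ ^ m) y) = (σ ^ m) b₀ := by
        intro m; rw [blk_pow_apply B hσ, hblky]
      have hset : O ∩ (b₀ : Finset (Fin d))
          = (Finset.range (ℓ / p j)).image (fun a => (τ ^ (p j * a)) y) := by
        ext x
        simp only [Finset.mem_inter, Finset.mem_image, Finset.mem_range]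
        constructor
        · rintro ⟨hxO, hxC⟩
          rw [hOy] at hxO
          obtain ⟨n', hn', hx'⟩ := mem_orbitOf_iff_pow.1 hxO
          rw [hℓy] at hn'
          have hblkx : blk B x = b₀ := blk_eq B hxC
          have hσn : (σ ^ n') b₀ = b₀ := by rw [← hblk_pow n', hx', hblkx]
          have hmod : n' % p j = 0 := by
            have h0 : (σ ^ n') b₀ = (σ ^ 0) b₀ := by simpa using hσn
            have h1 := (pow_apply_eq_iff_mod σ b₀ n' 0).1 h0
            rwa [hpb, Nat.zero_mod] at h1
          obtain ⟨a, rfl⟩ := Nat.dvd_of_mod_eq_zero hmod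
          refine ⟨a, ?_, hx'⟩
          have hℓeq : ℓ = p j * (ℓ / p j) := (Nat.mul_div_cancel' hpdvd).symm
          rw [hℓeq] at hn'
          exact lt_of_mul_lt_mul_left hn' (Nat.zero_le _)
        · rintro ⟨a, ha, rfl⟩
          constructor
          · rw [hOy]; exact pow_mem_orbitOf τ y _
          · have hblkx : blk B ((τ ^ (p j * a)) y) = b₀ := by
              rw [hblk_pow, hσb _ ⟨a, rfl⟩]
            rw [← hblkx]; exact mem_blk B _
      have hinj : Set.InjOn (fun a => (τ ^ (p j * a)) y) (Finset.range (ℓ / p j)) := by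
        intro a ha b hb hab
        simp only [Finset.coe_range, Set.mem_Iio] at ha hb
        have h1 := (pow_apply_eq_iff_mod τ y _ _).1 hab
        rw [hℓy] at h1
        have hℓeq : ℓ = p j * (ℓ / p j) := (Nat.mul_div_cancel' hpdvd).symm
        have hlt1 : p j * a < ℓ := by rw [hℓeq]; exact mul_lt_mul_of_pos_left ha hppos
        have hlt2 : p j * b < ℓ := by rw [hℓeq]; exact mul_lt_mul_of_pos_left hb hppos
        rw [Nat.mod_eq_of_lt hlt1, Nat.mod_eq_of_lt hlt2] at h1
        exact Nat.eq_of_mul_eq_mul_left hppos h1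
      rw [hset, Finset.card_image_of_injOn hinj, Finset.card_range]
    have hcover : (b₀ : Finset (Fin d))
        = ((orbits τ).filter (fun O => f O = j)).biUnion
            (fun O => O ∩ (b₀ : Finset (Fin d))) := by
      ext x
      simp only [Finset.mem_biUnion, Finset.mem_filter, Finset.mem_inter]
      constructor
      · intro hx
        exact ⟨orbitOf τ x,
          ⟨orbitOf_mem_orbits τ x,
            (hf _ (orbitOf_mem_orbits τ x) x (self_mem_orbitOf τ x)).trans (hqmem x hx)⟩,
          self_mem_orbitOf τ x, hx⟩
      · rintro ⟨O, -, -, hx⟩; exact hx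
    have hcard2 : (b₀ : Finset (Fin d)).card
        = ∑ O ∈ (orbits τ).filter (fun O => f O = j), (O ∩ (b₀ : Finset (Fin d))).card := by
      conv_lhs => rw [hcover]
      exact Finset.card_biUnion (fun O₁ h₁ O₂ h₂ hne =>
        ((orbits_disjoint (Finset.mem_filter.1 h₁).1 (Finset.mem_filter.1 h₂).1 hne).mono
          Finset.inter_subset_left Finset.inter_subset_left))
    have hsum' : ((D j).map (fun x => x / p j)).sum = k := by
      have h1 : (D j).map (fun x => x / p j)
          = ((orbits τ).filter (fun O => f O = j)).val.map
              (fun O => (O ∩ (b₀ : Finset (Fin d))).card) := by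
        rw [hD]
        simp only [Multiset.map_map]
        apply Multiset.map_congr rfl
        intro O hO'
        simp only [Function.comp]
        exact (hinter O (Finset.mem_val.mp hO')).symm
      rw [h1, ← Finset.sum_eq_multiset_sum, ← hcard2, hCcard]
    have hDne : D j ≠ 0 := by
      obtain ⟨x₁, hx₁⟩ := hCne
      have hmem : orbitOf τ x₁ ∈ (orbits τ).filter (fun O => f O = j) :=
        Finset.mem_filter.2 ⟨orbitOf_mem_orbits τ x₁,
          (hf _ (orbitOf_mem_orbits τ x₁) x₁ (self_mem_orbitOf τ x₁)).trans (hqmem x₁ hx₁)⟩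
      intro h0
      rw [hD] at h0
      simp only [Multiset.map_eq_zero, Finset.val_eq_zero] at h0
      rw [h0] at hmem
      simp at hmem
    have hdvd' : ∀ x ∈ D j, p j ∣ x := by
      intro x hx
      rw [hD] at hx
      obtain ⟨O, hO', rfl⟩ := Multiset.mem_map.1 hx
      obtain ⟨hOmem, hfO⟩ := Finset.mem_filter.1 (Finset.mem_val.mp hO')
      obtain ⟨z, -, hz⟩ := Finset.mem_image.1 hOmem
      have hzO : z ∈ O := by rw [← hz]; exact self_mem_orbitOf τ z
      have hqz : q z = j := (hf O hOmem z hzO).symm.trans hfO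
      have := hdvd j z hqz
      rwa [hz] at this
    exact ⟨hDne, hppos, hdvd', hsum'⟩
  have hcyc : fullCycleType σ = (Finset.univ.val : Multiset (Fin t)).map p := by
    rw [fullCycleType_eq_orbits]
    have h2 : (Finset.univ.val : Multiset (Fin t)).map (fun j => e j)
        = (Finset.univ.val : Multiset {O // O ∈ orbits σ}) := by
      rw [← Finset.map_univ_equiv e, Finset.map_val]
      rfl
    have h1 : (Finset.univ.val : Multiset (Fin t)).map
        (fun j => (e j : Finset {S // S ∈ B.blocks})) = (orbits σ).val := by
      calc (Finset.univ.val : Multiset (Fin t)).map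
            (fun j => (e j : Finset {S // S ∈ B.blocks}))
          = ((Finset.univ.val : Multiset (Fin t)).map (fun j => e j)).map Subtype.val := by
            rw [Multiset.map_map]; rfl
        _ = (Finset.univ.val : Multiset {O // O ∈ orbits σ}).map Subtype.val := by rw [h2]
        _ = (orbits σ).val := by
            rw [Finset.univ_eq_attach, Finset.attach_val, Multiset.attach_map_val]
    rw [← h1, Multiset.map_map]
    rfl
  exact ⟨t, D, p, ⟨hsum, hmain⟩, hcyc⟩

end Part3

section Split

lemma exists_le_map {β γ : Type*} [DecidableEq γ] :
    ∀ (m : Multiset β) {s : Multiset γ} {f : β → γ}, s ≤ m.map f → ∃ m₀ ≤ m, m₀.map f = s := by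
  intro m
  induction m using Multiset.induction with
  | empty =>
    intro s f h
    simp only [Multiset.map_zero, Multiset.le_zero] at h
    exact ⟨0, le_refl _, by simp [h]⟩
  | cons a m ih =>
    intro s f h
    rw [Multiset.map_cons] at h
    by_cases hfa : f a ∈ s
    · have hle : s.erase (f a) ≤ m.map f := by
        rw [Multiset.le_iff_count]
        intro g
        have hc := Multiset.le_iff_count.1 h g
        rw [Multiset.count_cons] at hc
        by_cases hg : g = f a
        · subst hg
          rw [Multiset.count_erase_self]
          rw [if_pos rfl] at hc
          omega
        · rw [Multiset.count_erase_of_ne hg]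
          simp only [if_neg hg] at hc
          omega
      obtain ⟨m₀, hm₀le, hm₀⟩ := ih hle
      refine ⟨a ::ₘ m₀, Multiset.cons_le_cons a hm₀le, ?_⟩
      rw [Multiset.map_cons, hm₀, Multiset.cons_erase hfa]
    · have hle : s ≤ m.map f := by
        rw [Multiset.le_iff_count]
        intro g
        have hc := Multiset.le_iff_count.1 h g
        rw [Multiset.count_cons] at hc
        by_cases hg : g = f a
        · subst hg
          have h2 : Multiset.count (f a) s = 0 := Multiset.count_eq_zero.2 hfa
          rw [if_pos rfl] at hc
          omega
        · simp only [if_neg hg] at hc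
          omega
      obtain ⟨m₀, hm₀le, hm₀⟩ := ih hle
      exact ⟨m₀, le_trans hm₀le (Multiset.le_cons_self m a), hm₀⟩

lemma multiset_split {β γ : Type*} [DecidableEq β] [DecidableEq γ] :
    ∀ (t : ℕ) (D : Fin t → Multiset γ) (m : Multiset β) (f : β → γ),
      (∑ j, D j) = m.map f →
      ∃ G : Fin t → Multiset β, (∑ j, G j) = m ∧ ∀ j, (G j).map f = D j := by
  intro t
  induction t with
  | zero =>
    intro D m f h
    refine ⟨fun _ => 0, ?_, fun j => j.elim0⟩
    have h0 : m.map f = 0 := by rw [← h]; simp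
    have hm : m = 0 := Multiset.map_eq_zero.1 h0
    simp [hm]
  | succ n ih =>
    intro D m f h
    rw [Fin.sum_univ_succ] at h
    have h0 : D 0 ≤ m.map f := by
      rw [← h]; exact Multiset.le_add_right _ _
    obtain ⟨m₀, hm₀le, hm₀⟩ := exists_le_map m h0
    have hmm : m₀ + (m - m₀) = m := add_tsub_cancel_of_le hm₀le
    have hrest : (∑ j : Fin n, D j.succ) = (m - m₀).map f := by
      have hmap : m.map f = D 0 + (m - m₀).map f := by
        conv_lhs => rw [← hmm]
        rw [Multiset.map_add, hm₀]
      rw [hmap] at h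
      exact add_left_cancel h
    obtain ⟨G', hG'sum, hG'⟩ := ih (fun j => D j.succ) (m - m₀) f hrest
    refine ⟨Fin.cases m₀ G', ?_, ?_⟩
    · rw [Fin.sum_univ_succ]
      simp only [Fin.cases_zero, Fin.cases_succ]
      rw [hG'sum, hmm]
    · intro j
      refine Fin.cases ?_ ?_ j
      · simpa using hm₀
      · intro i; simpa using hG' i

lemma sum_multiset_sum {ι : Type*} (s : Finset ι) (f : ι → Multiset ℕ) :
    (∑ i ∈ s, f i).sum = ∑ i ∈ s, (f i).sum := by
  induction s using Finset.cons_induction with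
  | empty => simp
  | cons a s ha ih => simp [Finset.sum_cons, ih]

end Split

section Part2

open Stmt12 Equiv Finset

variable {d k : ℕ} {τ : Equiv.Perm (Fin d)}

lemma sum_fullCycleType' {α : Type*} [Fintype α] [DecidableEq α] (τ : Equiv.Perm α) :
    (fullCycleType τ).sum = Fintype.card α := by
  rw [fullCycleType, Multiset.sum_add, Multiset.sum_replicate, smul_eq_mul, mul_one,
    Equiv.Perm.sum_cycleType]
  have h := Finset.card_le_univ τ.support
  omega

lemma part2 (hd : 0 < d) (hk : 0 < k) {t : ℕ}
    {D : Fin t → Multiset ℕ} {p : Fin t → ℕ} (hdata : IsBlockData τ k t D p) :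
    ∃ (B : BlockDecomp d k τ) (σ : Equiv.Perm {S // S ∈ B.blocks}),
      IsInduced B σ ∧
      fullCycleType σ = (Finset.univ.val : Multiset (Fin t)).map p := by
  classical
  obtain ⟨hsum, hprop⟩ := hdata
  have hsum' : (∑ j, D j) = (orbits τ).val.map Finset.card := by
    rw [hsum, fullCycleType_eq_orbits]
  obtain ⟨G, hGsum, hGmap⟩ := multiset_split t D (orbits τ).val Finset.card hsum'
  have hGle : ∀ j, G j ≤ (orbits τ).val := fun j => by
    rw [← hGsum]
    exact Finset.single_le_sum (f := G) (fun i _ => Multiset.zero_le _) (Finset.mem_univ j)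
  have hGnodup : ∀ j, (G j).Nodup := fun j => Multiset.nodup_of_le (hGle j) (orbits τ).nodup
  have hGmem : ∀ j, ∀ O ∈ G j, O ∈ orbits τ := fun j O hO =>
    Multiset.mem_of_le (hGle j) hO
  have hGdisj : ∀ j j' : Fin t, j ≠ j' → ∀ O, O ∈ G j → O ∈ G j' → False := by
    intro j j' hne O hj hj'
    have hcount : Multiset.count O (∑ i : Fin t, G i) = ∑ i : Fin t, Multiset.count O (G i) :=
      Multiset.count_sum'
    have hle1 : (1:ℕ) ≤ Multiset.count O (G j) := Multiset.one_le_count_iff_mem.2 hj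
    have hle2 : (1:ℕ) ≤ Multiset.count O (G j') := Multiset.one_le_count_iff_mem.2 hj'
    have h2 : 2 ≤ ∑ i : Fin t, Multiset.count O (G i) := by
      calc 2 ≤ Multiset.count O (G j) + Multiset.count O (G j') := by omega
        _ = ∑ i ∈ ({j, j'} : Finset (Fin t)), Multiset.count O (G i) := (Finset.sum_pair (f := fun i => Multiset.count O (G i)) hne).symm
        _ ≤ ∑ i : Fin t, Multiset.count O (G i) :=
            Finset.sum_le_sum_of_subset (Finset.subset_univ _)
    rw [← hcount, hGsum] at h2
    have hc1 : Multiset.count O (orbits τ).val ≤ 1 :=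
      Multiset.nodup_iff_count_le_one.1 (orbits τ).nodup O
    omega
  set pt : Finset (Fin d) → Fin d := fun O => if h : O.Nonempty then h.choose else ⟨0, hd⟩
    with hptdef
  have hpt : ∀ O : Finset (Fin d), O.Nonempty → pt O ∈ O := by
    intro O h
    have h1 : pt O = h.choose := by rw [hptdef]; exact dif_pos h
    rw [h1]; exact h.choose_spec
  have hOorb : ∀ j, ∀ O ∈ G j, O = orbitOf τ (pt O) := by
    intro j O hO
    exact eq_orbitOf_of_mem_orbits (hGmem j O hO) (hpt O (orbits_nonempty (hGmem j O hO)))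
  have hOdvd : ∀ j, ∀ O ∈ G j, p j ∣ O.card := by
    intro j O hO
    exact (hprop j).2.2.1 O.card (by rw [← hGmap j]; exact Multiset.mem_map_of_mem _ hO)
  have hppos : ∀ j, 0 < p j := fun j => (hprop j).2.1
  have hq1 : ∀ j, ∀ O ∈ G j, 1 ≤ O.card / p j := by
    intro j O hO
    have h1 : 0 < O.card := (orbits_nonempty (hGmem j O hO)).card_pos
    exact Nat.div_pos (Nat.le_of_dvd h1 (hOdvd j O hO)) (hppos j)
  have hptpow : ∀ j, ∀ O ∈ G j, ∀ n : ℕ, (τ ^ n) (pt O) ∈ O := by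
    intro j O hO n
    have h := pow_mem_orbitOf τ (pt O) n
    rwa [← hOorb j O hO] at h
  have hOcard : ∀ j, ∀ O ∈ G j, (orbitOf τ (pt O)).card = O.card := by
    intro j O hO; rw [← hOorb j O hO]
  have hτℓ : ∀ j, ∀ O ∈ G j, (τ ^ (p j * (O.card / p j))) (pt O) = pt O := by
    intro j O hO
    rw [Nat.mul_div_cancel' (hOdvd j O hO)]
    have h := pow_orbitOf_card_apply τ (pt O)
    rwa [← hOorb j O hO] at h
  set Bk : Fin t → ℕ → Finset (Fin d) := fun j r =>
    (⟨G j, hGnodup j⟩ : Finset (Finset (Fin d))).biUnion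
      (fun O => (Finset.range (O.card / p j)).image (fun a => (τ ^ (r + p j * a)) (pt O)))
    with hBkdef
  have hBkmem' : ∀ j r x, x ∈ Bk j r ↔
      ∃ O, O ∈ G j ∧ ∃ a, a < O.card / p j ∧ (τ ^ (r + p j * a)) (pt O) = x := by
    intro j r x
    simp only [hBkdef, Finset.mem_biUnion, Finset.mem_image, Finset.mem_range, Finset.mem_mk]
  have hBkorb : ∀ j r x, x ∈ Bk j r → ∃ O, O ∈ G j ∧ x ∈ O := by
    intro j r x hx
    obtain ⟨O, hO, a, ha, rfl⟩ := (hBkmem' j r x).1 hx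
    exact ⟨O, hO, hptpow j O hO _⟩
  have hpartcard : ∀ j (r : ℕ), ∀ O ∈ G j,
      ((Finset.range (O.card / p j)).image (fun a => (τ ^ (r + p j * a)) (pt O))).card
        = O.card / p j := by
    intro j r O hO
    rw [Finset.card_image_of_injOn, Finset.card_range]
    intro a ha b hb hab
    simp only [Finset.coe_range, Set.mem_Iio] at ha hb
    have h1 := (pow_apply_eq_iff_mod τ (pt O) _ _).1 hab
    rw [hOcard j O hO] at h1
    have h2 : p j * a ≡ p j * b [MOD O.card] := Nat.ModEq.add_left_cancel' r h1
    have hℓeq : O.card = p j * (O.card / p j) := (Nat.mul_div_cancel' (hOdvd j O hO)).symm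
    have hlt1 : p j * a < O.card := by rw [hℓeq]; exact mul_lt_mul_of_pos_left ha (hppos j)
    have hlt2 : p j * b < O.card := by rw [hℓeq]; exact mul_lt_mul_of_pos_left hb (hppos j)
    have h3 : p j * a = p j * b := by
      have := h2
      unfold Nat.ModEq at this
      rwa [Nat.mod_eq_of_lt hlt1, Nat.mod_eq_of_lt hlt2] at this
    exact Nat.eq_of_mul_eq_mul_left (hppos j) h3
  have hBkcard : ∀ j r, (Bk j r).card = k := by
    intro j r
    rw [hBkdef]
    rw [Finset.card_biUnion]
    · rw [Finset.sum_congr rfl (fun O hO => hpartcard j r O (by simpa using hO))]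
      rw [Finset.sum_eq_multiset_sum]
      have hval : (⟨G j, hGnodup j⟩ : Finset (Finset (Fin d))).val = G j := rfl
      rw [hval]
      have hmm : Multiset.map (fun O : Finset (Fin d) => O.card / p j) (G j)
          = (D j).map (fun x => x / p j) := by
        rw [← hGmap j, Multiset.map_map]
        rfl
      rw [hmm]
      exact (hprop j).2.2.2
    · intro O₁ h₁ O₂ h₂ hne
      have h₁' : O₁ ∈ G j := by simpa using h₁
      have h₂' : O₂ ∈ G j := by simpa using h₂
      have hsub1 : (Finset.range (O₁.card / p j)).image (fun a => (τ ^ (r + p j * a)) (pt O₁)) ⊆ O₁ := by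
        intro x hx
        obtain ⟨a, -, rfl⟩ := Finset.mem_image.1 hx
        exact hptpow j O₁ h₁' _
      have hsub2 : (Finset.range (O₂.card / p j)).image (fun a => (τ ^ (r + p j * a)) (pt O₂)) ⊆ O₂ := by
        intro x hx
        obtain ⟨a, -, rfl⟩ := Finset.mem_image.1 hx
        exact hptpow j O₂ h₂' _
      exact Finset.disjoint_of_subset_left hsub1 (Finset.disjoint_of_subset_right hsub2
        (orbits_disjoint (hGmem j O₁ h₁') (hGmem j O₂ h₂') hne))
  have hBkrot : ∀ j r, Bk j (r + p j) = Bk j r := by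
    intro j r
    ext x
    rw [hBkmem', hBkmem']
    constructor
    · rintro ⟨O, hO, a, ha, rfl⟩
      by_cases hlt : a + 1 < O.card / p j
      · refine ⟨O, hO, a + 1, hlt, ?_⟩
        have he : r + p j * (a + 1) = r + p j + p j * a := by ring
        rw [he]
      · have ha1 : a + 1 = O.card / p j := by omega
        refine ⟨O, hO, 0, hq1 j O hO, ?_⟩
        have he : r + p j + p j * a = r + p j * (a + 1) := by ring
        simp only [Nat.mul_zero, Nat.add_zero]
        rw [he, ha1, pow_add, Equiv.Perm.mul_apply, hτℓ j O hO]
    · rintro ⟨O, hO, a, ha, rfl⟩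
      rcases Nat.eq_zero_or_pos a with rfl | hapos
      · refine ⟨O, hO, O.card / p j - 1, by omega, ?_⟩
        have hq := hq1 j O hO
        have he : r + p j + p j * (O.card / p j - 1) = r + p j * (O.card / p j) := by
          have h5 : p j + p j * (O.card / p j - 1) = p j * (O.card / p j) := by
            have : O.card / p j - 1 + 1 = O.card / p j := by omega
            calc p j + p j * (O.card / p j - 1) = p j * (O.card / p j - 1 + 1) := by ring
              _ = p j * (O.card / p j) := by rw [this]
          omega
        simp only [Nat.mul_zero, Nat.add_zero]
        rw [he, pow_add, Equiv.Perm.mul_apply, hτℓ j O hO]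
      · obtain ⟨a', rfl⟩ : ∃ a', a = a' + 1 := ⟨a - 1, by omega⟩
        refine ⟨O, hO, a', by omega, ?_⟩
        have he : r + p j + p j * a' = r + p j * (a' + 1) := by ring
        rw [he]
  have hBkimg : ∀ j r, (Bk j r).image τ = Bk j (r + 1) := by
    intro j r
    ext x
    rw [Finset.mem_image]
    constructor
    · rintro ⟨y, hy, rfl⟩
      obtain ⟨O, hO, a, ha, rfl⟩ := (hBkmem' j r y).1 hy
      refine (hBkmem' j (r + 1) _).2 ⟨O, hO, a, ha, ?_⟩
      have he : r + 1 + p j * a = (r + p j * a) + 1 := by ring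
      rw [he, pow_succ', Equiv.Perm.mul_apply]
    · intro hx
      obtain ⟨O, hO, a, ha, rfl⟩ := (hBkmem' j (r + 1) x).1 hx
      refine ⟨(τ ^ (r + p j * a)) (pt O), (hBkmem' j r _).2 ⟨O, hO, a, ha, rfl⟩, ?_⟩
      have he : r + 1 + p j * a = (r + p j * a) + 1 := by ring
      rw [he, pow_succ', Equiv.Perm.mul_apply]
  have hBkmodaux : ∀ j (c r : ℕ), Bk j (r + p j * c) = Bk j r := by
    intro j c
    induction c with
    | zero => intro r; simp
    | succ c ih =>
      intro r
      have he : r + p j * (c + 1) = (r + p j * c) + p j := by ring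
      rw [he, hBkrot, ih]
  have hBkmod : ∀ j r, Bk j r = Bk j (r % p j) := by
    intro j r
    conv_lhs => rw [← Nat.mod_add_div r (p j)]
    exact hBkmodaux j (r / p j) (r % p j)
  have hBkne : ∀ j r, (Bk j r).Nonempty := by
    intro j r
    rw [← Finset.card_pos, hBkcard]
    exact hk
  have hBkdisj : ∀ j r j' r', r < p j → r' < p j' → (j ≠ j' ∨ r ≠ r') →
      Disjoint (Bk j r) (Bk j' r') := by
    intro j r j' r' hr hr' hne
    rw [Finset.disjoint_left]
    intro x hx hx'
    obtain ⟨O, hO, a, ha, hxa⟩ := (hBkmem' j r x).1 hx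
    obtain ⟨O', hO', a', ha', hxa'⟩ := (hBkmem' j' r' x).1 hx'
    have hxO : x ∈ O := by rw [← hxa]; exact hptpow j O hO _
    have hxO' : x ∈ O' := by rw [← hxa']; exact hptpow j' O' hO' _
    have hOO : O = O' := by
      rw [eq_orbitOf_of_mem_orbits (hGmem j O hO) hxO,
        eq_orbitOf_of_mem_orbits (hGmem j' O' hO') hxO']
    have hjj : j = j' := by
      by_contra hj
      exact hGdisj j j' hj O hO (hOO ▸ hO')
    subst hjj
    subst hOO
    have hrr : r ≠ r' := by tauto
    have heq : (τ ^ (r + p j * a)) (pt O) = (τ ^ (r' + p j * a')) (pt O) := by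
      rw [hxa, hxa']
    have h1 := (pow_apply_eq_iff_mod τ (pt O) _ _).1 heq
    rw [hOcard j O hO] at h1
    have h2 : (r + p j * a) % p j = (r' + p j * a') % p j := by
      have hd1 := Nat.mod_mod_of_dvd (r + p j * a) (hOdvd j O hO)
      have hd2 := Nat.mod_mod_of_dvd (r' + p j * a') (hOdvd j O hO)
      rw [← hd1, ← hd2, h1]
    rw [Nat.add_mul_mod_self_left, Nat.add_mul_mod_self_left,
      Nat.mod_eq_of_lt hr, Nat.mod_eq_of_lt hr'] at h2
    exact hrr h2
  have hBkinj : ∀ j r j' r', r < p j → r' < p j' → Bk j r = Bk j' r' → j = j' ∧ r = r' := by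
    intro j r j' r' hr hr' heq
    by_contra hne
    have hne' : j ≠ j' ∨ r ≠ r' := by tauto
    have := hBkdisj j r j' r' hr hr' hne'
    rw [heq] at this
    exact (hBkne j' r').ne_empty (by simpa using disjoint_self.1 this)
  -- total blocks
  set Blk : Finset (Finset (Fin d)) :=
    Finset.univ.biUnion (fun j : Fin t => (Finset.range (p j)).image (fun r => Bk j r))
    with hBlkdef
  have hBlkmem : ∀ S, S ∈ Blk ↔ ∃ j, ∃ r, r < p j ∧ Bk j r = S := by
    intro S
    simp only [hBlkdef, Finset.mem_biUnion, Finset.mem_univ, true_and, Finset.mem_image,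
      Finset.mem_range]
  have hBkmemBlk : ∀ j r, Bk j r ∈ Blk := by
    intro j r
    rw [hBlkmem]
    exact ⟨j, r % p j, Nat.mod_lt _ (hppos j), (hBkmod j r).symm⟩
  -- sum of p equals d / k
  have hDsum : ∀ j, (D j).sum = p j * k := by
    intro j
    have h1 : D j = (D j).map (fun x => p j * (x / p j)) := by
      conv_lhs => rw [← Multiset.map_id (D j)]
      apply Multiset.map_congr rfl
      intro x hx
      exact (Nat.mul_div_cancel' ((hprop j).2.2.1 x hx)).symm
    conv_lhs => rw [h1]
    rw [Multiset.sum_map_mul_left, (hprop j).2.2.2]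
  have hdsum : (∑ j, p j) * k = d := by
    have h1 : (∑ j, D j).sum = d := by
      rw [hsum, sum_fullCycleType', Fintype.card_fin]
    rw [sum_multiset_sum] at h1
    calc (∑ j, p j) * k = ∑ j, p j * k := by rw [Finset.sum_mul]
      _ = ∑ j, (D j).sum := by
          apply Finset.sum_congr rfl
          intro j _
          rw [hDsum j]
      _ = d := h1
  have hBlkcard : Blk.card = d / k := by
    rw [hBlkdef, Finset.card_biUnion]
    · have h1 : ∀ j : Fin t, ((Finset.range (p j)).image (fun r => Bk j r)).card = p j := by
        intro j
        rw [Finset.card_image_of_injOn, Finset.card_range]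
        intro r hr r' hr' hrr
        simp only [Finset.coe_range, Set.mem_Iio] at hr hr'
        exact (hBkinj j r j r' hr hr' hrr).2
      rw [Finset.sum_congr rfl (fun j _ => h1 j)]
      rw [← hdsum, Nat.mul_div_cancel _ hk]
    · intro j₁ h₁ j₂ h₂ hne
      rw [Function.onFun, Finset.disjoint_left]
      intro S hS1 hS2
      obtain ⟨r₁, hr₁, hSe₁⟩ := by simpa using hS1
      obtain ⟨r₂, hr₂, hSe₂⟩ := by simpa using hS2
      exact hne ((hBkinj j₁ r₁ j₂ r₂ hr₁ hr₂ (hSe₁.trans hSe₂.symm)).1)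
  have hcovers : ∀ x : Fin d, ∃ S ∈ Blk, x ∈ S := by
    intro x
    have h1 : orbitOf τ x ∈ (orbits τ).val := orbitOf_mem_orbits τ x
    rw [← hGsum] at h1
    obtain ⟨j, -, hj⟩ := Multiset.mem_sum.1 h1
    have hOx : x ∈ orbitOf τ x := self_mem_orbitOf τ x
    have horb := hOorb j _ hj
    rw [horb] at hOx
    obtain ⟨n, hn, hnx⟩ := mem_orbitOf_iff_pow.1 hOx
    rw [← horb] at hn
    refine ⟨Bk j (n % p j), hBkmemBlk j _, ?_⟩
    rw [hBkmem']
    refine ⟨orbitOf τ x, hj, n / p j, ?_, ?_⟩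
    · rw [horb]  -- careful
      rw [← horb]
      exact Nat.div_lt_div_of_lt_of_dvd (hOdvd j _ hj) hn
    · rw [show n % p j + p j * (n / p j) = n from Nat.mod_add_div n (p j)]
      exact hnx
  -- the block decomposition
  set Bdec : BlockDecomp d k τ :=
    { blocks := Blk
      card_blocks := hBlkcard
      card_each := by
        intro S hS
        obtain ⟨j, r, hr, rfl⟩ := (hBlkmem S).1 hS
        exact hBkcard j r
      covers := hcovers
      pairwise_disjoint := by
        intro S hS C hC hne
        obtain ⟨j, r, hr, rfl⟩ := (hBlkmem S).1 hS
        obtain ⟨j', r', hr', rfl⟩ := (hBlkmem C).1 hC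
        apply hBkdisj j r j' r' hr hr'
        by_contra hcon
        push_neg at hcon
        obtain ⟨rfl, rfl⟩ := hcon
        exact hne rfl
      image_mem := by
        intro S hS
        obtain ⟨j, r, hr, rfl⟩ := (hBlkmem S).1 hS
        rw [hBkimg]
        exact hBkmemBlk j (r + 1) } with hBdec
  obtain ⟨σ, hσ⟩ := exists_induced Bdec
  have hBlkeq : Bdec.blocks = Blk := rfl
  -- basic blocks as subtype elements
  have hmem' : ∀ j r, Bk j r ∈ Bdec.blocks := fun j r => hBkmemBlk j r
  set bo : Fin t → {S // S ∈ Bdec.blocks} := fun j => ⟨Bk j 0, hmem' j 0⟩ with hbo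
  have hσval : ∀ (b : {S // S ∈ Bdec.blocks}) j r, (b : Finset (Fin d)) = Bk j r →
      ((σ b : {S // S ∈ Bdec.blocks}) : Finset (Fin d)) = Bk j (r + 1) := by
    intro b j r hb
    rw [hσ b, hb, hBkimg]
  have hσpow : ∀ j n, (((σ ^ n) (bo j) : {S // S ∈ Bdec.blocks}) : Finset (Fin d)) = Bk j n := by
    intro j n
    induction n with
    | zero => simp [hbo]
    | succ n ih =>
      rw [pow_succ', Equiv.Perm.mul_apply]
      exact hσval _ j n ih
  set Tj : Fin t → Finset {S // S ∈ Bdec.blocks} := fun j =>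
    (Finset.range (p j)).image (fun r => (⟨Bk j r, hmem' j r⟩ : {S // S ∈ Bdec.blocks}))
    with hTj
  have horbT : ∀ j, orbitOf σ (bo j) = Tj j := by
    intro j
    ext b
    rw [hTj]
    simp only [Finset.mem_image, Finset.mem_range]
    constructor
    · intro hb
      obtain ⟨n, -, hn⟩ := mem_orbitOf_iff_pow.1 hb
      refine ⟨n % p j, Nat.mod_lt _ (hppos j), ?_⟩
      apply Subtype.ext
      rw [← hn, hσpow j n]
      exact (hBkmod j n).symm
    · rintro ⟨r, hr, rfl⟩
      have : (σ ^ r) (bo j) = ⟨Bk j r, hmem' j r⟩ := Subtype.ext (hσpow j r)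
      rw [← this]
      exact pow_mem_orbitOf σ (bo j) r
  have hTcard : ∀ j, (Tj j).card = p j := by
    intro j
    rw [hTj]
    rw [Finset.card_image_of_injOn, Finset.card_range]
    intro r hr r' hr' hrr
    simp only [Finset.coe_range, Set.mem_Iio] at hr hr'
    have := congrArg Subtype.val hrr
    exact (hBkinj j r j r' hr hr' this).2
  have horbits : orbits σ = Finset.univ.image Tj := by
    ext O
    constructor
    · intro hO
      obtain ⟨b, -, rfl⟩ := Finset.mem_image.1 hO
      obtain ⟨j, r, hr, hb⟩ := (hBlkmem (b : Finset (Fin d))).1 b.2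
      have hbeq : b = (σ ^ r) (bo j) := Subtype.ext (by rw [hσpow j r, hb])
      have h1 : orbitOf σ b = orbitOf σ (bo j) := by
        rw [hbeq]
        exact orbitOf_eq_of_mem (pow_mem_orbitOf σ (bo j) r)
      rw [h1, horbT]
      exact Finset.mem_image_of_mem Tj (Finset.mem_univ j)
    · intro hO
      obtain ⟨j, -, rfl⟩ := Finset.mem_image.1 hO
      rw [← horbT]
      exact orbitOf_mem_orbits σ (bo j)
  have hTinj : Function.Injective Tj := by
    intro j j' hT
    have h1 : (⟨Bk j 0, hmem' j 0⟩ : {S // S ∈ Bdec.blocks}) ∈ Tj j := by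
      rw [hTj]
      exact Finset.mem_image_of_mem _ (Finset.mem_range.2 (hppos j))
    rw [hT, hTj] at h1
    obtain ⟨r, hr, hre⟩ := by simpa using h1
    exact ((hBkinj j' r j 0 hr (hppos j) hre).1).symm
  have hcyc : fullCycleType σ = (Finset.univ.val : Multiset (Fin t)).map p := by
    rw [fullCycleType_eq_orbits, horbits]
    have hval : (Finset.univ.image Tj).val = (Finset.univ.val : Multiset (Fin t)).map Tj := by
      rw [Finset.image_val, Multiset.dedup_eq_self.2]
      exact Multiset.Nodup.map hTinj Finset.univ.nodup
    rw [hval, Multiset.map_map]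
    apply Multiset.map_congr rfl
    intro j _
    exact hTcard j
  exact ⟨Bdec, σ, hσ, hcyc⟩

end Part2


/-- Lemma 5.2. `τ` admits a block decomposition of order `k`
iff its cycle lengths admit a grouping as in `IsBlockData`; moreover the cycle
structure of the induced permutation `τ̂` on the blocks is `(p₁, …, p_t)`, in
both directions. -/
theorem stmt12 (d k : ℕ) (hk1 : 1 < k) (hkd : k < d) (hdvd : k ∣ d)
    (τ : Equiv.Perm (Fin d)) :
    (Nonempty (BlockDecomp d k τ) ↔
      ∃ (t : ℕ) (D : Fin t → Multiset ℕ) (p : Fin t → ℕ), IsBlockData τ k t D p) ∧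
    (∀ (t : ℕ) (D : Fin t → Multiset ℕ) (p : Fin t → ℕ), IsBlockData τ k t D p →
      ∃ (B : BlockDecomp d k τ) (σ : Equiv.Perm {S // S ∈ B.blocks}),
        IsInduced B σ ∧
        fullCycleType σ = (Finset.univ.val : Multiset (Fin t)).map p) ∧
    (∀ (B : BlockDecomp d k τ) (σ : Equiv.Perm {S // S ∈ B.blocks}),
      IsInduced B σ →
      ∃ (t : ℕ) (D : Fin t → Multiset ℕ) (p : Fin t → ℕ),
        IsBlockData τ k t D p ∧
        fullCycleType σ = (Finset.univ.val : Multiset (Fin t)).map p) := by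
  have hd : 0 < d := by omega
  have hk : 0 < k := by omega
  refine ⟨?_, ?_, ?_⟩
  · constructor
    · rintro ⟨B⟩
      obtain ⟨σ, hσ⟩ := exists_induced B
      obtain ⟨t, D, p, hdata, -⟩ := part3 hd hk B σ hσ
      exact ⟨t, D, p, hdata⟩
    · rintro ⟨t, D, p, hdata⟩
      obtain ⟨B, -⟩ := part2 hd hk hdata
      exact ⟨B⟩
  · intro t D p hdata
    exact part2 hd hk hdata
  · intro B σ hσ
    exact part3 hd hk B σ hσ
end

section
/- Let d be even, let n ≥ 3, and let τ₁, …, τₙ ∈ S_d be permutations of {1, …, d} such that τ₁τ₂⋯τₙ = id, the subgroup generated by τ₁, …, τₙ acts transitively on {1, …, d}, the total number of cycles of τ₁, …, τₙ (counting each fixed point as a cycle of length 1) equals (n−2)d + 2, and every cycle of τ₁ and every cycle of τ₂ has even length. Then there is a partition {1, …, d} = B ⊔ W with |B| = |W| = d/2 such that τ₁ and τ₂ each map B onto W and W onto B, while each of τ₃, …, τₙ maps B onto B and W onto W. -/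
set_option linter.unusedSectionVars false
open Equiv Equiv.Perm

section Counting
variable {β : Type*} [Fintype β] [DecidableEq β]

/-- Setoid of the `SameCycle` relation. -/
def scSetoid (σ : Perm β) : Setoid β :=
  ⟨σ.SameCycle, ⟨SameCycle.refl σ, SameCycle.symm, SameCycle.trans⟩⟩

/-- Number of cycles of `σ` (fixed points included). -/
noncomputable def cyc (σ : Perm β) : ℕ := Nat.card (Quotient (scSetoid σ))

/-- Setoid of the orbit relation of the subgroup generated by a set of permutations. -/
def orbSetoid (T : Set (Perm β)) : Setoid β where
  r x y := ∃ g ∈ Subgroup.closure T, g x = y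
  iseqv := by
    constructor
    · exact fun x => ⟨1, Subgroup.one_mem _, rfl⟩
    · rintro x y ⟨g, hg, rfl⟩
      exact ⟨g⁻¹, Subgroup.inv_mem _ hg, by simp⟩
    · rintro x y z ⟨g, hg, rfl⟩ ⟨g', hg', rfl⟩
      exact ⟨g' * g, Subgroup.mul_mem _ hg' hg, rfl⟩

/-- Number of orbits of the subgroup generated by a set of permutations. -/
noncomputable def orbCount (T : Set (Perm β)) : ℕ := Nat.card (Quotient (orbSetoid T))

theorem card_quot_le {r s : Setoid β} (h : ∀ x y, r.r x y → s.r x y) :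
    Nat.card (Quotient s) ≤ Nat.card (Quotient r) := by
  apply Nat.card_le_card_of_surjective
    (fun q : Quotient r => Quotient.map id (fun x y hr => h x y hr) q)
  intro q
  obtain ⟨x, rfl⟩ := Quotient.exists_rep q
  exact ⟨Quotient.mk _ x, rfl⟩

/-- The coarsening of `r` merging the classes of `a` and `b`. -/
def mergeSetoid (r : Setoid β) (a b : β) : Setoid β where
  r x y := r.r x y ∨ (r.r x a ∧ r.r b y) ∨ (r.r x b ∧ r.r a y)
  iseqv := by
    constructor
    · exact fun x => Or.inl (r.refl x)
    · rintro x y (h | ⟨h1, h2⟩ | ⟨h1, h2⟩)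
      · exact Or.inl (r.symm h)
      · exact Or.inr (Or.inr ⟨r.symm h2, r.symm h1⟩)
      · exact Or.inr (Or.inl ⟨r.symm h2, r.symm h1⟩)
    · rintro x y z (h | ⟨h1, h2⟩ | ⟨h1, h2⟩) (h' | ⟨h1', h2'⟩ | ⟨h1', h2'⟩)
      · exact Or.inl (r.trans h h')
      · exact Or.inr (Or.inl ⟨r.trans h h1', h2'⟩)
      · exact Or.inr (Or.inr ⟨r.trans h h1', h2'⟩)
      · exact Or.inr (Or.inl ⟨h1, r.trans h2 h'⟩)
      · exact Or.inr (Or.inl ⟨h1, h2'⟩)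
      · exact Or.inl (r.trans h1 h2')
      · exact Or.inr (Or.inr ⟨h1, r.trans h2 h'⟩)
      · exact Or.inl (r.trans h1 h2')
      · exact Or.inr (Or.inr ⟨h1, h2'⟩)

theorem mergeSetoid_le (r : Setoid β) (a b : β) : ∀ x y, r.r x y → (mergeSetoid r a b).r x y :=
  fun _ _ h => Or.inl h

theorem mergeSetoid_rel (r : Setoid β) (a b : β) : (mergeSetoid r a b).r a b :=
  Or.inr (Or.inl ⟨r.refl a, r.refl b⟩)

private theorem mk_eq_of_rel_out {s : Setoid β} (q : Quotient s) (x : β)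
    (h : s.r x q.out) : Quotient.mk s x = q := by
  rw [← q.out_eq]; exact Quotient.sound h


theorem nat_card_option (X : Type u) [Finite X] : Nat.card (Option X) = Nat.card X + 1 := by
  have e : Option X ≃ X ⊕ (ULift.{u,0} (Fin 1)) :=
    (Equiv.optionEquivSumPUnit.{u,u} X).trans
      (Equiv.sumCongr (Equiv.refl X) (Equiv.ofUnique PUnit.{u+1} (ULift.{u,0} (Fin 1))))
  rw [Nat.card_congr e, Nat.card_sum]
  simp

/-- Merging loses at most one class. -/
theorem card_quot_merge (r : Setoid β) (a b : β) :
    Nat.card (Quotient r) ≤ Nat.card (Quotient (mergeSetoid r a b)) + 1 := by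
  classical
  set m := mergeSetoid r a b with hm
  have hcard := nat_card_option (Quotient m)
  rw [← hcard]
  apply Nat.card_le_card_of_injective
    (fun q : Quotient r => if r.r q.out a then none else some (Quotient.mk m q.out))
  intro q q' hqq'
  by_cases h1 : r.r q.out a <;> by_cases h2 : r.r q'.out a <;> simp [h1, h2] at hqq'
  · rw [← q.out_eq, ← q'.out_eq]
    exact Quotient.sound (r.trans h1 (r.symm h2))
  · rw [← q.out_eq, ← q'.out_eq]
    apply Quotient.sound
    rcases (Quotient.exact hqq' : m.r q.out q'.out) with h | ⟨ha, hb⟩ | ⟨hb, ha⟩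
    · exact h
    · exact absurd ha h1
    · exact absurd (r.symm ha) h2

/-- If the coarser setoid `s` really merges two `r`-classes, it has strictly fewer classes. -/
theorem card_quot_lt {r s : Setoid β} (hle : ∀ x y, r.r x y → s.r x y)
    {a b : β} (hs : s.r a b) (hr : ¬ r.r a b) :
    Nat.card (Quotient s) + 1 ≤ Nat.card (Quotient r) := by
  classical
  have hcard := nat_card_option (Quotient s)
  rw [← hcard]
  apply Nat.card_le_card_of_injective
    (fun o : Option (Quotient s) => o.elim (Quotient.mk r a)
      (fun q => if q = Quotient.mk s a then Quotient.mk r b else Quotient.mk r q.out))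
  rintro (_ | q) (_ | q') h
  · rfl
  · simp only [Option.elim] at h
    by_cases hq' : q' = Quotient.mk s a
    · rw [if_pos hq'] at h
      exact absurd (Quotient.exact h) hr
    · rw [if_neg hq'] at h
      exact absurd ((mk_eq_of_rel_out q' a (hle _ _ (Quotient.exact h))).symm) hq'
  · simp only [Option.elim] at h
    by_cases hq : q = Quotient.mk s a
    · rw [if_pos hq] at h
      exact absurd (r.symm (Quotient.exact h)) hr
    · rw [if_neg hq] at h
      exact absurd ((mk_eq_of_rel_out q a (hle _ _ (Quotient.exact h.symm))).symm) hq
  · simp only [Option.elim] at h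
    congr 1
    by_cases hq : q = Quotient.mk s a <;> by_cases hq' : q' = Quotient.mk s a
    · exact hq.trans hq'.symm
    · rw [if_pos hq, if_neg hq'] at h
      exact absurd ((mk_eq_of_rel_out q' a (s.trans hs (hle _ _ (Quotient.exact h)))).symm) hq'
    · rw [if_neg hq, if_pos hq'] at h
      exact absurd ((mk_eq_of_rel_out q a (s.symm (s.trans (hle _ _ (Quotient.exact h)) (s.symm hs)))).symm) hq
    · rw [if_neg hq, if_neg hq'] at h
      rw [← q.out_eq, ← q'.out_eq]
      exact Quotient.sound (hle _ _ (Quotient.exact h))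

end Counting

section SwapCycles
variable {β : Type*} [Fintype β] [DecidableEq β]

/-- If a setoid is stable under single application of `u`, it absorbs `SameCycle u`. -/
theorem sameCycle_le_of_step {u : Perm β} {s : Setoid β} (h : ∀ x, s.r x (u x)) :
    ∀ x y, u.SameCycle x y → s.r x y := by
  have key : ∀ (i : ℕ) (x : β), s.r x ((u ^ i) x) := by
    intro i
    induction i with
    | zero => intro x; simpa using s.refl x
    | succ i ih =>
      intro x
      have : (u ^ (i+1)) x = (u ^ i) (u x) := by rw [pow_succ]; rfl
      rw [this]
      exact s.trans (h x) (ih (u x))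
  intro x y hxy
  obtain ⟨i, _, rfl⟩ := hxy.exists_pow_eq'
  exact key i x

theorem sameCycle_fixed {u : Perm β} {a y : β} (ha : u a = a) (h : u.SameCycle a y) : y = a := by
  obtain ⟨i, _, rfl⟩ := h.exists_pow_eq'
  exact pow_apply_eq_self_of_apply_eq_self ha i

theorem sameCycle_apply_self (σ : Perm β) (x : β) : σ.SameCycle x (σ x) := ⟨1, by simp⟩

/-- Multiplying by a swap loses at most one cycle. -/
theorem cyc_le_swap_mul (ρ : Perm β) {a b : β} (hab : a ≠ b) :
    cyc ρ ≤ cyc (Equiv.swap a b * ρ) + 1 := by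
  set t := Equiv.swap a b with ht
  set m := mergeSetoid (scSetoid ρ) a b with hm
  have hstep : ∀ x, m.r x ((t * ρ) x) := by
    intro x
    have happ : (t * ρ) x = t (ρ x) := rfl
    rcases eq_or_ne (ρ x) a with h | h
    · rw [happ, h, Equiv.swap_apply_left]
      exact Or.inr (Or.inl ⟨h ▸ sameCycle_apply_self ρ x, SameCycle.refl _ _⟩)
    rcases eq_or_ne (ρ x) b with h' | h'
    · rw [happ, h', Equiv.swap_apply_right]
      exact Or.inr (Or.inr ⟨h' ▸ sameCycle_apply_self ρ x, SameCycle.refl _ _⟩)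
    · rw [happ, Equiv.swap_apply_of_ne_of_ne h h']
      exact Or.inl (sameCycle_apply_self ρ x)
  have hle : ∀ x y, (scSetoid (t * ρ)).r x y → m.r x y := sameCycle_le_of_step hstep
  calc cyc ρ ≤ Nat.card (Quotient m) + 1 := card_quot_merge _ a b
  _ ≤ cyc (t * ρ) + 1 := by
      exact Nat.add_le_add_right (card_quot_le hle) 1

/-- Multiplying by a swap gains at most one cycle. -/
theorem swap_mul_cyc_le (ρ : Perm β) {a b : β} (hab : a ≠ b) :
    cyc (Equiv.swap a b * ρ) ≤ cyc ρ + 1 := by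
  have := cyc_le_swap_mul (Equiv.swap a b * ρ) hab
  rwa [← mul_assoc, Equiv.swap_mul_self, one_mul] at this

/-- Period facts through `cycleOf` support card. -/
theorem period_facts (σ : Perm β) (z : β) (hz : σ z ≠ z) :
    (σ ^ ((σ.cycleOf z).support.card)) z = z ∧
    (∀ i, 0 < i → i < (σ.cycleOf z).support.card → (σ ^ i) z ≠ z) ∧
    2 ≤ (σ.cycleOf z).support.card := by
  classical
  set q := (σ.cycleOf z).support.card with hq
  have hcyc : (σ.cycleOf z).IsCycle := σ.isCycle_cycleOf hz
  have horder : orderOf (σ.cycleOf z) = q := hcyc.orderOf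
  refine ⟨?_, ?_, ?_⟩
  · have := σ.pow_mod_card_support_cycleOf_self_apply q z
    rwa [Nat.mod_self, pow_zero, Equiv.Perm.one_apply, eq_comm] at this
  · intro i hi hiq hzi
    have h1 : (σ.cycleOf z ^ i) z = z := by rw [cycleOf_pow_apply_self]; exact hzi
    have h2 : σ.cycleOf z ^ i = 1 := by
      rw [hcyc.pow_eq_one_iff]
      exact ⟨z, by rwa [cycleOf_apply_self], h1⟩
    have := orderOf_dvd_of_pow_eq_one h2
    rw [horder] at this
    exact absurd (Nat.le_of_dvd hi this) (not_le.2 hiq)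
  · exact hcyc.two_le_card_support
end SwapCycles

section SwapCycles2
variable {β : Type*} [Fintype β] [DecidableEq β]


theorem pow_succ_apply_left (ρ : Perm β) (n : ℕ) (x : β) :
    (ρ ^ (n+1)) x = ρ ((ρ ^ n) x) := by
  rw [pow_succ' ρ n]; rfl

theorem pow_succ_apply_right (ρ : Perm β) (n : ℕ) (x : β) :
    (ρ ^ (n+1)) x = (ρ ^ n) (ρ x) := by
  rw [pow_succ ρ n]; rfl

/-- If `a` and `b` are in different cycles of `ρ`, then `swap a b * ρ` joins them. -/
theorem sameCycle_swap_mul {ρ : Perm β} {a b : β} (hab : a ≠ b)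
    (h : ¬ ρ.SameCycle a b) : (Equiv.swap a b * ρ).SameCycle a b := by
  classical
  set t := Equiv.swap a b with ht
  set u := t * ρ with hu
  have hnotb : ∀ j : ℕ, (ρ ^ j) a ≠ b := fun j hj => h ⟨(j : ℤ), by rw [zpow_natCast]; exact hj⟩
  rcases eq_or_ne (ρ a) a with hfix | hmove
  · exact ⟨1, by simp [hu, ht, hfix, Equiv.swap_apply_left]⟩
  obtain ⟨hper, hmin, h2q⟩ := period_facts ρ a hmove
  set q := (ρ.cycleOf a).support.card with hq
  have hne_a : ∀ i, 0 < i → i < q → (ρ ^ i) a ≠ a := hmin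
  -- walk along the cycle
  have walk : ∀ i, i ≤ q - 2 → (u ^ i) (ρ a) = (ρ ^ (i + 1)) a := by
    intro i
    induction i with
    | zero => intro _; simp
    | succ i ih =>
      intro hi
      have hi' : i ≤ q - 2 := by omega
      rw [pow_succ_apply_left u i (ρ a), ih hi']
      have happ : u ((ρ ^ (i+1)) a) = t (ρ ((ρ ^ (i+1)) a)) := rfl
      have hcollapse : ρ ((ρ ^ (i+1)) a) = (ρ ^ ((i+1)+1)) a :=
        (pow_succ_apply_left ρ (i+1) a).symm
      rw [happ, hcollapse, ht]
      have h1 : (ρ ^ ((i+1)+1)) a ≠ a := hne_a _ (by omega) (by omega)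
      have h2 : (ρ ^ ((i+1)+1)) a ≠ b := hnotb _
      rw [Equiv.swap_apply_of_ne_of_ne h1 h2]
  have hstep0 : u a = ρ a := by
    have hb1 : ρ a ≠ b := by simpa using hnotb 1
    have : u a = t (ρ a) := rfl
    rw [this, ht, Equiv.swap_apply_of_ne_of_ne hmove hb1]
  have hlast : (u ^ (q - 1)) (ρ a) = b := by
    have hsplit : q - 1 = (q - 2) + 1 := by omega
    rw [hsplit, pow_succ_apply_left u (q-2) (ρ a), walk (q-2) le_rfl]
    have hcollapse : (ρ ^ (q - 2 + 1)) a = (ρ ^ (q-1)) a := by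
      have hqq : q - 2 + 1 = q - 1 := by omega
      rw [hqq]
    have happ : u ((ρ ^ (q-1)) a) = t (ρ ((ρ ^ (q-1)) a)) := rfl
    have hfin : ρ ((ρ ^ (q-1)) a) = (ρ ^ q) a := by
      have := pow_succ_apply_left ρ (q-1) a
      rw [show (q-1)+1 = q by omega] at this
      exact this.symm
    rw [hcollapse, happ, hfin, hper, ht, Equiv.swap_apply_left]
  refine ⟨(q : ℤ), ?_⟩
  rw [zpow_natCast]
  have h' := pow_succ_apply_right u (q-1) a
  rw [show (q-1)+1 = q by omega] at h'
  rw [h', hstep0, hlast]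

/-- Exact merge: joining two distinct cycles decreases the cycle count. -/
theorem swap_mul_cyc_lt {ρ : Perm β} {a b : β} (hab : a ≠ b)
    (h : ¬ ρ.SameCycle a b) : cyc (Equiv.swap a b * ρ) + 1 ≤ cyc ρ := by
  classical
  set t := Equiv.swap a b with ht
  set u := t * ρ with hu
  have hii : u.SameCycle a b := sameCycle_swap_mul hab h
  have hstep : ∀ x, (scSetoid u).r x (ρ x) := by
    intro x
    rcases eq_or_ne (ρ x) a with hxa | hxa
    · have h0 : u x = b := by show t (ρ x) = b; rw [hxa, ht, Equiv.swap_apply_left]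
      have h1 : u.SameCycle x b := h0 ▸ sameCycle_apply_self u x
      have h2 : u.SameCycle x a := h1.trans hii.symm
      rwa [← hxa] at h2
    rcases eq_or_ne (ρ x) b with hxb | hxb
    · have h0 : u x = a := by rw [hu]; show t (ρ x) = a; rw [hxb, ht, Equiv.swap_apply_right]
      have h1 : u.SameCycle x a := h0 ▸ sameCycle_apply_self u x
      have h2 : u.SameCycle x b := h1.trans hii
      rwa [← hxb] at h2
    · have h0 : u x = ρ x := by rw [hu]; show t (ρ x) = ρ x; rw [ht, Equiv.swap_apply_of_ne_of_ne hxa hxb]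
      exact h0 ▸ sameCycle_apply_self u x
  have hle : ∀ x y, (scSetoid ρ).r x y → (scSetoid u).r x y := sameCycle_le_of_step hstep
  exact card_quot_lt hle hii h

/-- Exact split: `swap a (ρ a) * ρ` has strictly more cycles. -/
theorem cyc_lt_split {ρ : Perm β} {a : β} (ha : ρ a ≠ a) :
    cyc ρ + 1 ≤ cyc (Equiv.swap a (ρ a) * ρ) := by
  classical
  set t := Equiv.swap a (ρ a) with ht
  set u := t * ρ with hu
  have hfix : u a = a := by
    show t (ρ a) = a
    rw [ht, Equiv.swap_apply_right]
  have hstep : ∀ x, (scSetoid ρ).r x (u x) := by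
    intro x
    rcases eq_or_ne (ρ x) a with hxa | hxa
    · have h0 : u x = ρ a := by show t (ρ x) = ρ a; rw [hxa, ht, Equiv.swap_apply_left]
      have h1 : ρ.SameCycle x a := hxa ▸ sameCycle_apply_self ρ x
      exact h0 ▸ h1.trans (sameCycle_apply_self ρ a)
    rcases eq_or_ne (ρ x) (ρ a) with hxb | hxb
    · have hxa' : x = a := ρ.injective hxb
      rw [hxa', hfix]
    · have h0 : u x = ρ x := by show t (ρ x) = ρ x; rw [ht, Equiv.swap_apply_of_ne_of_ne hxa hxb]
      exact h0 ▸ sameCycle_apply_self ρ x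
  have hle : ∀ x y, (scSetoid u).r x y → (scSetoid ρ).r x y := sameCycle_le_of_step hstep
  have hnotrel : ¬ (scSetoid u).r a (ρ a) := by
    intro hrel
    exact ha (sameCycle_fixed hfix hrel)
  exact card_quot_lt hle (sameCycle_apply_self ρ a) hnotrel

theorem cyc_one : cyc (1 : Perm β) = Fintype.card β := by
  have : ∀ x y : β, (1 : Perm β).SameCycle x y ↔ x = y := by
    intro x y
    constructor
    · intro h
      obtain ⟨i, _, rfl⟩ := h.exists_pow_eq'
      simp
    · rintro rfl; exact SameCycle.refl _ _
  rw [cyc, ← Nat.card_eq_fintype_card]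
  apply Nat.card_congr
  refine Equiv.ofBijective (Quotient.lift id ?_) ⟨?_, ?_⟩
  · intro x y h
    exact (this x y).1 h
  · intro q q' h
    obtain ⟨x, rfl⟩ := Quotient.exists_rep q
    obtain ⟨y, rfl⟩ := Quotient.exists_rep q'
    exact Quotient.sound ((this x y).2 h)
  · intro x
    exact ⟨Quotient.mk _ x, rfl⟩

/-- Every permutation is a product of at most `card β - cyc σ` swaps. -/
theorem exists_swap_factorization (σ : Perm β) :
    ∃ L : List (Perm β), (∀ t ∈ L, t.IsSwap) ∧ L.prod = σ ∧
      L.length + cyc σ ≤ Fintype.card β := by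
  classical
  generalize hn : σ.support.card = n
  induction n using Nat.strong_induction_on generalizing σ with
  | _ n ih =>
    rcases eq_or_ne σ 1 with rfl | hσ
    · exact ⟨[], by simp, by simp, by rw [cyc_one]; simp⟩
    · obtain ⟨a, ha⟩ : ∃ a, σ a ≠ a := by
        by_contra hc
        push_neg at hc
        exact hσ (Equiv.ext hc)
      set t := Equiv.swap a (σ a) with htdef
      set σ' := t * σ with hσ'
      have hcard : σ'.support.card < n := hn ▸ card_support_swap_mul ha
      obtain ⟨L', hL'swap, hL'prod, hL'len⟩ := ih _ hcard σ' rfl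
      refine ⟨t :: L', ?_, ?_, ?_⟩
      · intro s hs
        rcases List.mem_cons.1 hs with rfl | hs'
        · exact ⟨a, σ a, Ne.symm ha, rfl⟩
        · exact hL'swap _ hs' 
      · rw [List.prod_cons, hL'prod, hσ', ← mul_assoc, htdef, Equiv.swap_mul_self, one_mul]
      · have hsplit : cyc σ + 1 ≤ cyc σ' := cyc_lt_split ha
        simp only [List.length_cons]
        omega
end SwapCycles2

section Core
variable {β : Type*} [Fintype β] [DecidableEq β]

theorem card_quot_eq_card_of_rel_iff_eq {r : Setoid β} (h : ∀ x y, r.r x y ↔ x = y) :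
    Nat.card (Quotient r) = Fintype.card β := by
  rw [← Nat.card_eq_fintype_card]
  apply Nat.card_congr
  refine Equiv.ofBijective (Quotient.lift id ?_) ⟨?_, ?_⟩
  · intro x y hxy; exact (h x y).1 hxy
  · intro q q' hq
    obtain ⟨x, rfl⟩ := Quotient.exists_rep q
    obtain ⟨y, rfl⟩ := Quotient.exists_rep q'
    exact Quotient.sound ((h x y).2 hq)
  · intro x; exact ⟨Quotient.mk _ x, rfl⟩

theorem orb_empty : orbCount (∅ : Set (Perm β)) = Fintype.card β := by
  apply card_quot_eq_card_of_rel_iff_eq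
  intro x y
  constructor
  · rintro ⟨g, hg, rfl⟩
    rw [Subgroup.closure_empty, Subgroup.mem_bot] at hg
    rw [hg]; rfl
  · rintro rfl; exact ⟨1, Subgroup.one_mem _, rfl⟩

theorem orb_le_of_subset {S S' : Set (Perm β)} (h : S' ⊆ S) : orbCount S ≤ orbCount S' := by
  apply card_quot_le
  rintro x y ⟨g, hg, rfl⟩
  exact ⟨g, Subgroup.closure_mono h hg, rfl⟩

theorem orb_closure_step {S : Set (Perm β)} {m : Setoid β}
    (hgen : ∀ g ∈ S, ∀ x, m.r x (g x)) :
    ∀ g ∈ Subgroup.closure S, ∀ x, m.r x (g x) := by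
  intro g hg
  refine Subgroup.closure_induction (p := fun g _ => ∀ x, m.r x (g x)) hgen
    (fun x => by simpa using m.refl x) ?_ ?_ hg
  · intro g g' _ _ hgmem hg'mem x
    have h1 : m.r x (g' x) := hg'mem x
    have h2 : m.r (g' x) (g (g' x)) := hgmem (g' x)
    exact m.trans h1 h2
  · intro g _ hgmem x
    have := hgmem (g⁻¹ x)
    simp only [Equiv.Perm.inv_def, Equiv.apply_symm_apply] at this
    exact m.symm this

theorem orb_insert_swap (S' : Set (Perm β)) (a b : β) :
    orbCount S' ≤ orbCount (insert (Equiv.swap a b) S') + 1 := by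
  classical
  set r := orbSetoid S' with hr
  set m := mergeSetoid r a b with hm
  have hincl : ∀ x y, (orbSetoid (insert (Equiv.swap a b) S')).r x y → m.r x y := by
    rintro x y ⟨g, hg, rfl⟩
    refine orb_closure_step ?_ g hg x
    intro g' hg' z
    rcases Set.mem_insert_iff.1 hg' with rfl | hmem
    · rcases eq_or_ne z a with hza | hza
      · rw [hza, Equiv.swap_apply_left]
        exact mergeSetoid_rel r a b
      rcases eq_or_ne z b with hzb | hzb
      · rw [hzb, Equiv.swap_apply_right]
        exact m.symm (mergeSetoid_rel r a b)
      · rw [Equiv.swap_apply_of_ne_of_ne hza hzb]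
    · exact mergeSetoid_le r a b _ _ ⟨g', Subgroup.subset_closure hmem, rfl⟩
  calc orbCount S' ≤ Nat.card (Quotient m) + 1 := card_quot_merge r a b
  _ ≤ orbCount (insert (Equiv.swap a b) S') + 1 := Nat.add_le_add_right (card_quot_le hincl) 1

theorem orb_insert_swap_eq_of_rel {S' : Set (Perm β)} {a b : β}
    (hrel : (orbSetoid S').r a b) :
    orbCount S' ≤ orbCount (insert (Equiv.swap a b) S') := by
  apply card_quot_le
  rintro x y ⟨g, hg, rfl⟩
  refine orb_closure_step ?_ g hg x
  intro g' hg' z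
  rcases Set.mem_insert_iff.1 hg' with rfl | hmem
  · rcases eq_or_ne z a with hza | hza
    · rw [hza, Equiv.swap_apply_left]; exact hrel
    rcases eq_or_ne z b with hzb | hzb
    · rw [hzb, Equiv.swap_apply_right]; exact (orbSetoid S').symm hrel
    · rw [Equiv.swap_apply_of_ne_of_ne hza hzb]
  · exact ⟨g', Subgroup.subset_closure hmem, rfl⟩

/-- Core Riemann–Hurwitz inequality for products of transpositions. -/
theorem core_ineq (L : List (Perm β)) (hswap : ∀ t ∈ L, t.IsSwap) :
    Fintype.card β + cyc L.prod ≤ L.length + 2 * orbCount {g | g ∈ L} := by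
  classical
  induction L with
  | nil =>
    have hset : {g : Perm β | g ∈ ([] : List (Perm β))} = ∅ := by ext g; simp
    rw [List.prod_nil, cyc_one, List.length_nil, hset, orb_empty]
    omega
  | cons t L' ih =>
    obtain ⟨a, b, hab, rfl⟩ := hswap t List.mem_cons_self
    have hswap' : ∀ s ∈ L', s.IsSwap := fun s hs => hswap s (List.mem_cons_of_mem _ hs)
    have IH := ih hswap'
    have hset : {g : Perm β | g ∈ Equiv.swap a b :: L'} = insert (Equiv.swap a b) {g | g ∈ L'} := by
      ext g; simp [List.mem_cons]
    rw [List.prod_cons, List.length_cons, hset]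
    set S' : Set (Perm β) := {g | g ∈ L'} with hS'
    set π' := L'.prod with hπ'
    by_cases hrel : (orbSetoid S').r a b
    · have h1 : orbCount S' ≤ orbCount (insert (Equiv.swap a b) S') := orb_insert_swap_eq_of_rel hrel
      have h2 : cyc (Equiv.swap a b * π') ≤ cyc π' + 1 := swap_mul_cyc_le π' hab
      omega
    · have hsc : ¬ π'.SameCycle a b := by
        intro hsc
        obtain ⟨i, hi⟩ := hsc
        have hπmem : π' ∈ Subgroup.closure S' :=
          Subgroup.list_prod_mem _ (fun g hg => Subgroup.subset_closure hg)
        exact hrel ⟨π' ^ i, Subgroup.zpow_mem _ hπmem i, hi⟩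
      have h1 : orbCount S' ≤ orbCount (insert (Equiv.swap a b) S') + 1 := orb_insert_swap S' a b
      have h2 : cyc (Equiv.swap a b * π') + 1 ≤ cyc π' := swap_mul_cyc_lt hab hsc
      omega
end Core


section Bridge
variable {β : Type*} [Fintype β] [DecidableEq β]

theorem cyc_eq_sum (σ : Perm β) :
    cyc σ = σ.cycleFactorsFinset.card + (Fintype.card β - σ.support.card) := by
  classical
  let T := (↥σ.cycleFactorsFinset) ⊕ {z : β // σ z = z}
  let f : β → T := fun x => if h : σ x = x then Sum.inr ⟨x, h⟩ else
    Sum.inl ⟨σ.cycleOf x, cycleOf_mem_cycleFactorsFinset_iff.2 (mem_support.2 h)⟩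
  have hresp : ∀ x y, σ.SameCycle x y → f x = f y := by
    intro x y hxy
    by_cases hx : σ x = x
    · have hyx : y = x := sameCycle_fixed hx hxy
      rw [hyx]
    · have hy : σ y ≠ y := by
        intro hy
        have hxy' : x = y := sameCycle_fixed hy hxy.symm
        exact hx (by rw [hxy']; exact hy)
      simp only [f, dif_neg hx, dif_neg hy]
      exact congrArg Sum.inl (Subtype.ext hxy.cycleOf_eq)
  have hbij : Function.Bijective (Quotient.lift f hresp : Quotient (scSetoid σ) → T) := by
    constructor
    · intro q q' hq
      obtain ⟨x, rfl⟩ := Quotient.exists_rep q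
      obtain ⟨y, rfl⟩ := Quotient.exists_rep q'
      apply Quotient.sound
      show σ.SameCycle x y
      have hq' : f x = f y := hq
      by_cases hx : σ x = x
      · by_cases hy : σ y = y
        · simp only [f, dif_pos hx, dif_pos hy] at hq'
          have hxy : x = y := congrArg Subtype.val (Sum.inr.inj hq')
          rw [hxy]
        · simp only [f, dif_pos hx, dif_neg hy] at hq'
          exact absurd hq' (by simp)
      · by_cases hy : σ y = y
        · simp only [f, dif_neg hx, dif_pos hy] at hq'
          exact absurd hq' (by simp)
        · simp only [f, dif_neg hx, dif_neg hy] at hq'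
          have hcyceq : σ.cycleOf x = σ.cycleOf y := congrArg Subtype.val (Sum.inl.inj hq')
          have hyy : y ∈ (σ.cycleOf y).support := (mem_support_cycleOf_iff' hy).2 (SameCycle.refl _ _)
          rw [← hcyceq] at hyy
          exact (mem_support_cycleOf_iff' hx).1 hyy
    · rintro (⟨c, hc⟩ | ⟨z, hz⟩)
      · have hcyc : c.IsCycle := (mem_cycleFactorsFinset_iff.1 hc).1
        obtain ⟨x, hx1, -⟩ := hcyc
        have hxs : x ∈ c.support := mem_support.2 hx1
        have hceq : c = σ.cycleOf x := cycle_is_cycleOf hxs hc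
        have hσx : σ x ≠ x := by
          have := (mem_cycleFactorsFinset_iff.1 hc).2 x hxs
          rw [← this]; exact hx1
        refine ⟨Quotient.mk _ x, ?_⟩
        show f x = _
        simp only [Quotient.lift_mk, f, dif_neg hσx]
        subst hceq; rfl
      · exact ⟨Quotient.mk _ z, by show f z = _; simp only [Quotient.lift_mk, f, dif_pos hz]⟩
  have hcount : cyc σ = Nat.card T := Nat.card_congr (Equiv.ofBijective _ hbij)
  rw [hcount]
  have h1 : Nat.card T = Nat.card (↥σ.cycleFactorsFinset) + Nat.card {z : β // σ z = z} :=
    Nat.card_sum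
  rw [h1, Nat.card_eq_fintype_card, Nat.card_eq_fintype_card, Fintype.card_coe,
    Fintype.card_subtype]
  congr 1
  have hs : σ.support = Finset.univ.filter fun z => ¬ σ z = z := by
    ext z; simp [Equiv.Perm.mem_support]
  have := Finset.card_filter_add_card_filter_not (s := Finset.univ)
    (p := fun z : β => σ z = z)
  rw [← hs] at this
  rw [Finset.card_univ] at this
  omega

theorem fullCycleType_card (σ : Perm β) : (fullCycleType σ).card = cyc σ := by
  rw [fullCycleType, Multiset.card_add, Multiset.card_replicate, cyc_eq_sum, sum_cycleType]
  congr 1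
  rw [cycleType_def, Multiset.card_map]
  rfl

theorem heven_of_fullCycleType {σ : Perm β} (h : ∀ x ∈ fullCycleType σ, Even x) :
    ∀ z, σ z ≠ z ∧ Even ((σ.cycleOf z).support.card) := by
  classical
  intro z
  have hfix : σ z ≠ z := by
    intro hz
    have hzs : z ∉ σ.support := by simp [Equiv.Perm.mem_support, hz]
    have hlt : σ.support.card < Fintype.card β := by
      have : σ.support ⊂ Finset.univ := ⟨Finset.subset_univ _, fun hsub => hzs (hsub (Finset.mem_univ z))⟩
      simpa [Finset.card_univ] using Finset.card_lt_card this
    have h1 : (1:ℕ) ∈ fullCycleType σ := by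
      rw [fullCycleType]
      refine Multiset.mem_add.2 (Or.inr ?_)
      rw [Multiset.mem_replicate]
      exact ⟨by rw [sum_cycleType]; omega, rfl⟩
    simpa using h 1 h1
  refine ⟨hfix, ?_⟩
  apply h
  rw [fullCycleType]
  refine Multiset.mem_add.2 (Or.inl ?_)
  rw [cycleType_def]
  refine Multiset.mem_map.2 ⟨σ.cycleOf z, ?_, rfl⟩
  rw [Finset.mem_val]
  exact cycleOf_mem_cycleFactorsFinset_iff.2 (mem_support.2 hfix)
end Bridge

section Lift
variable {d : ℕ}

/-- The lift of `σ` to the double cover, shifting the sheet by `e`. -/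
def lift2 (σ : Perm (Fin d)) (e : ZMod 2) : Perm (Fin d × ZMod 2) :=
  Equiv.prodCongr σ (Equiv.addRight e)

theorem lift2_apply (σ : Perm (Fin d)) (e : ZMod 2) (x : Fin d) (s : ZMod 2) :
    lift2 σ e (x, s) = (σ x, s + e) := rfl

theorem lift2_mul (σ σ' : Perm (Fin d)) (e e' : ZMod 2) :
    lift2 σ e * lift2 σ' e' = lift2 (σ * σ') (e + e') := by
  apply Equiv.ext
  rintro ⟨x, s⟩
  show lift2 σ e (lift2 σ' e' (x, s)) = _
  rw [lift2_apply, lift2_apply, lift2_apply]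
  refine Prod.ext rfl ?_
  show s + e' + e = s + (e + e')
  ring

theorem lift2_one : lift2 (1 : Perm (Fin d)) 0 = 1 := by
  apply Equiv.ext
  rintro ⟨x, s⟩
  rw [lift2_apply]
  simp

theorem lift2_pow (σ : Perm (Fin d)) (e : ZMod 2) (k : ℕ) :
    (lift2 σ e) ^ k = lift2 (σ ^ k) ((k : ZMod 2) * e) := by
  induction k with
  | zero => simpa using lift2_one.symm
  | succ k ih =>
    rw [pow_succ, ih, lift2_mul, ← pow_succ]
    congr 1
    push_cast
    ring

theorem lift2_list_prod (l : List (Perm (Fin d) × ZMod 2)) :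
    (l.map fun p => lift2 p.1 p.2).prod = lift2 (l.map Prod.fst).prod (l.map Prod.snd).sum := by
  induction l with
  | nil => simpa using lift2_one.symm
  | cons p l ih =>
    simp only [List.map_cons, List.prod_cons, List.sum_cons, ih, lift2_mul]

theorem zmod2_add_self' : ∀ z : ZMod 2, z + z = 0 := by decide
theorem zmod2_add_self (z : ZMod 2) : z + z = 0 := zmod2_add_self' z

theorem zmod2_neg' : ∀ z : ZMod 2, -z = z := by decide
theorem zmod2_neg (z : ZMod 2) : -z = z := zmod2_neg' z

theorem zmod2_cases' : ∀ a b : ZMod 2, a = b ∨ a = b + 1 := by decide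
theorem zmod2_cases (a b : ZMod 2) : a = b ∨ a = b + 1 := zmod2_cases' a b

theorem zmod2_ne_add_one' : ∀ a : ZMod 2, a ≠ a + 1 := by decide
theorem zmod2_ne_add_one (a : ZMod 2) : a ≠ a + 1 := zmod2_ne_add_one' a

/-- Generic doubling of the cycle count for lifts admitting a potential `φ`. -/
theorem cyc_lift2 (σ : Perm (Fin d)) (e : ZMod 2) (φ : Fin d → ZMod 2)
    (hstep : ∀ x, φ (σ x) = φ x + e)
    (hcomp : ∀ x y s u, σ.SameCycle x y → s + φ x = u + φ y →
      (lift2 σ e).SameCycle (x,s) (y,u)) :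
    cyc (lift2 σ e) = 2 * cyc σ := by
  classical
  have hphipow : ∀ (k : ℕ) (x : Fin d), φ ((σ^k) x) = φ x + (k : ZMod 2) * e := by
    intro k
    induction k with
    | zero => intro x; simp
    | succ k ih =>
      intro x
      rw [pow_succ_apply_left, hstep, ih]
      push_cast
      ring
  let F : Fin d × ZMod 2 → Quotient (scSetoid σ) × ZMod 2 :=
    fun p => (Quotient.mk (scSetoid σ) p.1, p.2 + φ p.1)
  have hresp : ∀ p q, (lift2 σ e).SameCycle p q → F p = F q := by
    rintro ⟨x, s⟩ ⟨y, u⟩ h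
    obtain ⟨k, -, hk⟩ := h.exists_pow_eq'
    rw [lift2_pow] at hk
    rw [lift2_apply] at hk
    have h1 : (σ^k) x = y := congrArg Prod.fst hk
    have h2 : s + (k : ZMod 2) * e = u := congrArg Prod.snd hk
    have hsc : σ.SameCycle x y := ⟨(k : ℤ), by rw [zpow_natCast]; exact h1⟩
    refine Prod.ext (Quotient.sound hsc) ?_
    show s + φ x = u + φ y
    rw [← h2, ← h1, hphipow]
    have := zmod2_add_self ((k : ZMod 2) * e)
    calc s + φ x = s + φ x + ((k:ZMod 2)*e + (k:ZMod 2)*e) := by rw [this, add_zero]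
    _ = s + (k:ZMod 2)*e + (φ x + (k:ZMod 2)*e) := by ring
  have hbij : Function.Bijective
      (Quotient.lift F hresp : Quotient (scSetoid (lift2 σ e)) → Quotient (scSetoid σ) × ZMod 2) := by
    constructor
    · intro q q' hq
      obtain ⟨⟨x, s⟩, rfl⟩ := Quotient.exists_rep q
      obtain ⟨⟨y, u⟩, rfl⟩ := Quotient.exists_rep q'
      have hq' : F (x, s) = F (y, u) := hq
      have h1 : σ.SameCycle x y := Quotient.exact (congrArg Prod.fst hq')
      have h2 : s + φ x = u + φ y := congrArg Prod.snd hq'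
      exact Quotient.sound (hcomp x y s u h1 h2)
    · rintro ⟨q, v⟩
      obtain ⟨x, rfl⟩ := Quotient.exists_rep q
      refine ⟨Quotient.mk _ (x, v + φ x), ?_⟩
      show F (x, v + φ x) = _
      refine Prod.ext rfl ?_
      show v + φ x + φ x = v
      rw [add_assoc, zmod2_add_self, add_zero]
  have hcount : cyc (lift2 σ e) = Nat.card (Quotient (scSetoid σ) × ZMod 2) :=
    Nat.card_congr (Equiv.ofBijective _ hbij)
  rw [hcount, Nat.card_prod, Nat.card_eq_fintype_card (α := ZMod 2), ZMod.card]
  rw [cyc]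
  ring

theorem cyc_lift2_zero (σ : Perm (Fin d)) : cyc (lift2 σ 0) = 2 * cyc σ := by
  refine cyc_lift2 σ 0 (fun _ => 0) (fun x => by simp) ?_
  intro x y s u hxy hsu
  obtain ⟨k, -, hk⟩ := hxy.exists_pow_eq'
  refine ⟨(k : ℤ), ?_⟩
  rw [zpow_natCast, lift2_pow, lift2_apply]
  have hu : u = s := by simpa using hsu.symm
  rw [hk, hu]
  simp

theorem cyc_lift2_one (σ : Perm (Fin d))
    (heven : ∀ z, σ z ≠ z ∧ Even ((σ.cycleOf z).support.card)) :
    cyc (lift2 σ 1) = 2 * cyc σ := by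
  classical
  -- congruence of exponents modulo 2
  have hcong : ∀ (z : Fin d) (i j : ℕ), (σ^i) z = (σ^j) z → ((i : ZMod 2) = (j : ZMod 2)) := by
    intro z i j hij
    obtain ⟨hz, hev⟩ := heven z
    set q := (σ.cycleOf z).support.card with hqdef
    obtain ⟨hper, hmin, h2q⟩ := period_facts σ z hz
    have hmod : ∀ n : ℕ, (σ ^ (n % q)) z = (σ ^ n) z :=
      fun n => σ.pow_mod_card_support_cycleOf_self_apply n z
    have hij' : (σ ^ (i % q)) z = (σ ^ (j % q)) z := by rw [hmod, hmod, hij]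
    have heq : i % q = j % q := by
      by_contra hne
      -- wlog i % q < j % q
      rcases Nat.lt_or_ge (i % q) (j % q) with hlt | hge
      · have key : (σ ^ (j % q - i % q)) ((σ ^ (i % q)) z) = (σ ^ (i % q)) z := by
          have : (σ ^ (j % q - i % q)) * (σ ^ (i % q)) = σ ^ (j % q) := by
            rw [← pow_add]
            congr 1
            omega
          calc (σ ^ (j % q - i % q)) ((σ ^ (i % q)) z)
              = ((σ ^ (j % q - i % q)) * (σ ^ (i % q))) z := rfl
          _ = (σ ^ (j % q)) z := by rw [this]
          _ = (σ ^ (i % q)) z := hij'.symm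
        -- period of w equals q
        set w := (σ ^ (i % q)) z with hw
        have hsczw : σ.SameCycle z w := ⟨((i % q : ℕ) : ℤ), by rw [zpow_natCast]⟩
        have hwz : σ w ≠ w := by
          intro hfw
          have hzw : z = w := sameCycle_fixed hfw hsczw.symm
          exact hz (by rw [hzw]; exact hfw)
        obtain ⟨hperw, hminw, -⟩ := period_facts σ w hwz
        have hqw : (σ.cycleOf w).support.card = q := by
          rw [hqdef, hsczw.cycleOf_eq]
        rw [hqw] at hminw
        exact hminw _ (by omega) (by have := Nat.mod_lt j (show 0 < q by omega); omega) key
      · have hlt : j % q < i % q := by omega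
        have key : (σ ^ (i % q - j % q)) ((σ ^ (j % q)) z) = (σ ^ (j % q)) z := by
          have : (σ ^ (i % q - j % q)) * (σ ^ (j % q)) = σ ^ (i % q) := by
            rw [← pow_add]
            congr 1
            omega
          calc (σ ^ (i % q - j % q)) ((σ ^ (j % q)) z)
              = ((σ ^ (i % q - j % q)) * (σ ^ (j % q))) z := rfl
          _ = (σ ^ (i % q)) z := by rw [this]
          _ = (σ ^ (j % q)) z := hij'
        set w := (σ ^ (j % q)) z with hw
        have hsczw : σ.SameCycle z w := ⟨((j % q : ℕ) : ℤ), by rw [zpow_natCast]⟩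
        have hwz : σ w ≠ w := by
          intro hfw
          have hzw : z = w := sameCycle_fixed hfw hsczw.symm
          exact hz (by rw [hzw]; exact hfw)
        obtain ⟨hperw, hminw, -⟩ := period_facts σ w hwz
        have hqw : (σ.cycleOf w).support.card = q := by
          rw [hqdef, hsczw.cycleOf_eq]
        rw [hqw] at hminw
        exact hminw _ (by omega) (by have := Nat.mod_lt i (show 0 < q by omega); omega) key
    -- i ≡ j [MOD q] and q even
    have hmodeq : i ≡ j [MOD q] := heq
    have h2 : (2 : ℕ) ∣ q := hev.two_dvd
    exact (ZMod.natCast_eq_natCast_iff i j 2).2 (hmodeq.of_dvd h2)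
  -- representative and exponent
  have hex : ∀ x : Fin d, ∃ k : ℕ, (σ ^ k) ((Quotient.mk (scSetoid σ) x).out) = x := by
    intro x
    have hsc : σ.SameCycle ((Quotient.mk (scSetoid σ) x).out) x :=
      Quotient.exact ((Quotient.mk (scSetoid σ) x).out_eq)
    obtain ⟨i, -, hi⟩ := hsc.exists_pow_eq'
    exact ⟨i, hi⟩
  set rep : Fin d → Fin d := fun x => (Quotient.mk (scSetoid σ) x).out with hrep
  set kk : Fin d → ℕ := fun x => (hex x).choose with hkk
  have hk : ∀ x, (σ ^ (kk x)) (rep x) = x := fun x => (hex x).choose_spec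
  set φ : Fin d → ZMod 2 := fun x => ((kk x : ℕ) : ZMod 2) with hφ
  have hrepeq : ∀ x y, σ.SameCycle x y → rep x = rep y := by
    intro x y hxy
    show (Quotient.mk (scSetoid σ) x).out = (Quotient.mk (scSetoid σ) y).out
    rw [Quotient.sound hxy]
  refine cyc_lift2 σ 1 φ ?_ ?_
  · -- step
    intro x
    have h1 : rep (σ x) = rep x := hrepeq (σ x) x (sameCycle_apply_self σ x).symm
    have h2 : (σ ^ (kk (σ x))) (rep (σ x)) = (σ ^ (kk x + 1)) (rep (σ x)) := by
      rw [hk (σ x), h1, pow_succ_apply_left, hk x]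
    have := hcong (rep (σ x)) (kk (σ x)) (kk x + 1) h2
    rw [hφ]
    show ((kk (σ x) : ℕ) : ZMod 2) = _
    rw [this]
    push_cast
    ring
  · -- completeness
    intro x y s u hxy hsu
    have hrxy : rep x = rep y := hrepeq x y hxy
    set r := rep x with hr
    have hrmove : σ r ≠ r := (heven r).1
    obtain ⟨hper, hmin, h2q⟩ := period_facts σ r hrmove
    set q := (σ.cycleOf r).support.card with hq
    have h2q'' : 2 ≤ q := by rw [hq]; exact h2q
    have hqpos : 0 < q := by omega
    have hqpowr : ∀ j : ℕ, (σ ^ (q * j)) r = r := by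
      intro j
      induction j with
      | zero => simp
      | succ j ih =>
        have : q * (j + 1) = q * j + q := by ring
        rw [this, pow_add]
        show (σ ^ (q*j)) ((σ ^ q) r) = r
        rw [hper, ih]
    set A := kk x % q with hA
    set Bq := q * (kk x / q) with hB
    have hX : A + Bq = kk x := Nat.mod_add_div (kk x) q
    have hAq : A < q := by rw [hA]; exact Nat.mod_lt _ hqpos
    set m := (q - A) + kk y with hm
    have hmkx : m + kk x = kk y + (q + Bq) := by omega
    have hqpowr' : ∀ j : ℕ, (σ ^ (q + q * j)) r = r := by
      intro j
      rw [pow_add]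
      show (σ ^ q) ((σ ^ (q * j)) r) = r
      rw [hqpowr, hper]
    have hσm : (σ ^ m) x = y := by
      have e1 : (σ ^ m) x = (σ ^ (m + kk x)) r := by
        conv_lhs => rw [← hk x]
        conv_rhs => rw [pow_add]
        rfl
      rw [e1, hmkx, pow_add]
      show (σ ^ (kk y)) ((σ ^ (q + Bq)) r) = y
      rw [hB, hqpowr', hrxy]
      exact hk y
    have hpar : (m : ZMod 2) = φ x + φ y := by
      have hdvd : (2 : ℕ) ∣ (m + (kk x + kk y)) := by
        have hev : Even q := by rw [hq]; exact (heven r).2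
        have h2q' : (2:ℕ) ∣ q := hev.two_dvd
        have h2B : (2:ℕ) ∣ Bq := by rw [hB]; exact h2q'.mul_right _
        omega
      have hzero : ((m + (kk x + kk y) : ℕ) : ZMod 2) = 0 :=
        (ZMod.natCast_eq_zero_iff _ 2).2 hdvd
      push_cast at hzero
      have : (m : ZMod 2) = -(((kk x : ZMod 2)) + (kk y : ZMod 2)) := by linear_combination hzero
      rw [this, zmod2_neg]
    have hu : u = s + (m : ZMod 2) := by
      have h1 : u + φ y + φ y = s + φ x + φ y := by rw [hsu]
      rw [add_assoc, zmod2_add_self, add_zero] at h1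
      rw [h1, hpar]
      ring
    refine ⟨(m : ℤ), ?_⟩
    rw [zpow_natCast, lift2_pow, lift2_apply, hσm, hu]
    rw [mul_one]
end Lift

/-- Proposition 5.4, block decomposition form. Let `d` be
even, `τ₁ ⋯ τₙ = 1` in `S_d` with `⟨τ₁,…,τₙ⟩` transitive, total number of
cycles `(n−2)d + 2`, and all cycles of `τ₁, τ₂` of even length. Then
`{1,…,d}` splits as `B ⊔ W` with `|B| = |W| = d/2`, `τ₁, τ₂` interchanging
`B` and `W` and `τ₃, …, τₙ` preserving them. -/
theorem stmt13 (d n : ℕ) (hd : Even d) (hn : 3 ≤ n)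
    (τ : Fin n → Equiv.Perm (Fin d))
    (hprod : (List.ofFn τ).prod = 1)
    (htrans : ∀ x y : Fin d, ∃ g ∈ Subgroup.closure (Set.range τ), g x = y)
    (hcycles : ∑ i, (fullCycleType (τ i)).card = (n - 2) * d + 2)
    (h1 : ∀ x ∈ fullCycleType (τ ⟨0, by omega⟩), Even x)
    (h2 : ∀ x ∈ fullCycleType (τ ⟨1, by omega⟩), Even x) :
    ∃ B : Finset (Fin d), B.card = d / 2 ∧
      (∀ x : Fin d, x ∈ B ↔ τ ⟨0, by omega⟩ x ∉ B) ∧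
      (∀ x : Fin d, x ∈ B ↔ τ ⟨1, by omega⟩ x ∉ B) ∧
      (∀ i : Fin n, 2 ≤ (i : ℕ) → ∀ x : Fin d, x ∈ B ↔ τ i x ∈ B) := by
  classical
  -- degenerate case d = 0
  rcases Nat.eq_zero_or_pos d with rfl | hdpos
  · exfalso
    have hzero : ∀ i : Fin n, (fullCycleType (τ i)).card = 0 := by
      intro i
      have hτ : τ i = 1 := by ext x; exact x.elim0
      rw [hτ, fullCycleType]
      simp [Equiv.Perm.cycleType_one]
    rw [Finset.sum_congr rfl (fun i _ => hzero i)] at hcycles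
    simp at hcycles
  set i0 : Fin n := ⟨0, by omega⟩ with hi0
  set i1 : Fin n := ⟨1, by omega⟩ with hi1
  have hne01 : i0 ≠ i1 := by simp [hi0, hi1, Fin.ext_iff]
  set ε : Fin n → ZMod 2 :=
    fun i => (if i = i0 then 1 else 0) + (if i = i1 then 1 else 0) with hε
  have hε0 : ε i0 = 1 := by simp [hε, hne01]
  have hε1 : ε i1 = 1 := by simp [hε, hne01.symm]
  have hεo : ∀ i : Fin n, 2 ≤ (i : ℕ) → ε i = 0 := by
    intro i hi
    have h0 : i ≠ i0 := by rw [hi0]; intro h; rw [h] at hi; simp at hi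
    have h1' : i ≠ i1 := by rw [hi1]; intro h; rw [h] at hi; simp at hi
    simp [hε, h0, h1']
  set Λ : Fin n → Perm (Fin d × ZMod 2) := fun i => lift2 (τ i) (ε i) with hΛ
  -- product of the lifts is 1
  have hprodΛ : (List.ofFn Λ).prod = 1 := by
    have hmap : List.ofFn Λ = (List.ofFn (fun i => (τ i, ε i))).map (fun p => lift2 p.1 p.2) := by
      rw [List.map_ofFn]; rfl
    rw [hmap, lift2_list_prod, List.map_ofFn, List.map_ofFn]
    have hfst : (Prod.fst ∘ fun i => (τ i, ε i)) = τ := rfl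
    have hsnd : (Prod.snd ∘ fun i => (τ i, ε i)) = ε := rfl
    rw [hfst, hsnd, hprod, List.sum_ofFn]
    have hsum : (∑ i, ε i) = 0 := by
      rw [hε]
      rw [Finset.sum_add_distrib]
      rw [Finset.sum_ite_eq' Finset.univ i0 (fun _ => (1 : ZMod 2))]
      rw [Finset.sum_ite_eq' Finset.univ i1 (fun _ => (1 : ZMod 2))]
      simp [zmod2_add_self]
    rw [hsum, lift2_one]
  -- cycle counts double
  have hcyclift : ∀ i, cyc (Λ i) = 2 * cyc (τ i) := by
    intro i
    by_cases h0 : i = i0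
    · subst h0
      show cyc (lift2 (τ i0) (ε i0)) = 2 * cyc (τ i0)
      rw [hε0]
      exact cyc_lift2_one (τ i0) (heven_of_fullCycleType h1)
    by_cases h1' : i = i1
    · subst h1'
      show cyc (lift2 (τ i1) (ε i1)) = 2 * cyc (τ i1)
      rw [hε1]
      exact cyc_lift2_one (τ i1) (heven_of_fullCycleType h2)
    · show cyc (lift2 (τ i) (ε i)) = 2 * cyc (τ i)
      have hz : ε i = 0 := by simp [hε, h0, h1']
      rw [hz]
      exact cyc_lift2_zero (τ i)
  -- swap factorizations
  have hfact := fun i => exists_swap_factorization (Λ i)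
  choose LL hLswap hLprod hLlen using hfact
  set L : List (Perm (Fin d × ZMod 2)) := (List.ofFn LL).flatten with hL
  have hall : ∀ t ∈ L, t.IsSwap := by
    intro t ht
    rw [hL, List.mem_flatten] at ht
    obtain ⟨l, hl, htl⟩ := ht
    obtain ⟨i, rfl⟩ := List.mem_ofFn.1 hl
    exact hLswap i t htl
  have hLprodall : L.prod = 1 := by
    rw [hL, List.prod_flatten, List.map_ofFn]
    have : (List.prod ∘ LL) = Λ := funext fun i => hLprod i
    rw [this, hprodΛ]
  have hcard2d : Fintype.card (Fin d × ZMod 2) = 2 * d := by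
    rw [Fintype.card_prod, Fintype.card_fin, ZMod.card]
    ring
  have hLlength : L.length = ∑ i, (LL i).length := by
    rw [hL, List.length_flatten, List.map_ofFn, List.sum_ofFn]
    rfl
  -- apply the core inequality
  have hcore := core_ineq L hall
  rw [hLprodall, cyc_one, hcard2d] at hcore
  -- numerical bound on lengths
  have hsum_len : L.length + ∑ i, cyc (Λ i) ≤ n * (2 * d) := by
    rw [hLlength, ← Finset.sum_add_distrib]
    calc (∑ i, ((LL i).length + cyc (Λ i)))
        ≤ ∑ _i : Fin n, 2 * d := Finset.sum_le_sum (fun i _ => by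
          have := hLlen i
          rwa [hcard2d] at this)
    _ = n * (2 * d) := by rw [Finset.sum_const, Finset.card_univ, Fintype.card_fin, smul_eq_mul]
  have hScyc : ∑ i, cyc (Λ i) = 2 * ((n-2)*d + 2) := by
    have e1 : ∑ i, cyc (Λ i) = ∑ i, 2 * cyc (τ i) :=
      Finset.sum_congr rfl (fun i _ => hcyclift i)
    have e2 : ∑ i, cyc (τ i) = ∑ i, (fullCycleType (τ i)).card :=
      Finset.sum_congr rfl (fun i _ => (fullCycleType_card (τ i)).symm)
    rw [e1, ← Finset.mul_sum, e2, hcycles]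
  have hnd : n * (2*d) = (n-2)*(2*d) + 4*d := by
    have h2 : n = (n-2) + 2 := by omega
    calc n * (2*d) = ((n-2)+2) * (2*d) := by rw [← h2]
    _ = (n-2)*(2*d) + 4*d := by ring
  have hfactor : (n-2)*(2*d) = 2*((n-2)*d) := by ring
  have hOrbL : 2 ≤ orbCount {g : Perm (Fin d × ZMod 2) | g ∈ L} := by
    set M := (n-2)*d
    omega
  -- orbits of the lifted group
  set R := orbSetoid (Set.range Λ) with hR
  have hmemcl : ∀ i, Λ i ∈ Subgroup.closure {g : Perm (Fin d × ZMod 2) | g ∈ L} := by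
    intro i
    rw [← hLprod i]
    refine Subgroup.list_prod_mem _ (fun t ht => Subgroup.subset_closure ?_)
    show t ∈ L
    rw [hL, List.mem_flatten]
    exact ⟨LL i, List.mem_ofFn.2 ⟨i, rfl⟩, ht⟩
  have hOrbR : 2 ≤ Nat.card (Quotient R) := by
    refine le_trans hOrbL (card_quot_le ?_)
    rintro x y ⟨g, hg, rfl⟩
    refine ⟨g, ?_, rfl⟩
    have hle : Subgroup.closure (Set.range Λ) ≤
        Subgroup.closure {g : Perm (Fin d × ZMod 2) | g ∈ L} := by
      rw [Subgroup.closure_le]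
      rintro g' ⟨i, rfl⟩
      exact hmemcl i
    exact hle hg
  -- transport of transitivity
  have hproj : ∀ g ∈ Subgroup.closure (Set.range τ),
      ∃ g' ∈ Subgroup.closure (Set.range Λ), ∀ p : Fin d × ZMod 2, (g' p).1 = g p.1 := by
    intro g hg
    refine Subgroup.closure_induction
      (p := fun g _ => ∃ g' ∈ Subgroup.closure (Set.range Λ), ∀ p : Fin d × ZMod 2, (g' p).1 = g p.1)
      ?_ ?_ ?_ ?_ hg
    · rintro g' ⟨i, rfl⟩
      exact ⟨Λ i, Subgroup.subset_closure ⟨i, rfl⟩, fun p => rfl⟩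
    · exact ⟨1, Subgroup.one_mem _, fun p => rfl⟩
    · rintro a b _ _ ⟨a', ha', hafst⟩ ⟨b', hb', hbfst⟩
      refine ⟨a' * b', Subgroup.mul_mem _ ha' hb', fun p => ?_⟩
      show (a' (b' p)).1 = a (b p.1)
      rw [hafst, hbfst]
    · rintro a _ ⟨a', ha', hafst⟩
      refine ⟨a'⁻¹, Subgroup.inv_mem _ ha', fun p => ?_⟩
      have := hafst (a'⁻¹ p)
      simp only [Equiv.Perm.inv_def, Equiv.apply_symm_apply] at this
      rw [this]
      simp only [Equiv.Perm.inv_def, Equiv.symm_apply_apply]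
  have hfiber : ∀ (p : Fin d × ZMod 2) (y : Fin d), ∃ u, R.r p (y, u) := by
    intro p y
    obtain ⟨g, hg, hgeq⟩ := htrans p.1 y
    obtain ⟨g', hg', hfst⟩ := hproj g hg
    refine ⟨(g' p).2, ⟨g', hg', ?_⟩⟩
    have h1' : (g' p).1 = y := by rw [hfst p, hgeq]
    exact Prod.ext h1' rfl
  -- the sheet swap
  set J : Perm (Fin d × ZMod 2) := lift2 1 1 with hJ
  have hJap : ∀ y u, J (y, u) = (y, u + 1) := fun y u => rfl
  have hJcomm : ∀ g ∈ Subgroup.closure (Set.range Λ), Commute g J := by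
    intro g hg
    refine Subgroup.closure_induction (p := fun g _ => Commute g J) ?_ (Commute.one_left J)
      (fun a b _ _ ha hb => ha.mul_left hb) (fun a _ ha => ha.inv_left) hg
    rintro g' ⟨i, rfl⟩
    show Λ i * J = J * Λ i
    rw [hΛ, hJ, lift2_mul, lift2_mul, mul_one, one_mul, add_comm]
  have hJrel : ∀ g ∈ Subgroup.closure (Set.range Λ), ∀ p, g (J p) = J (g p) := by
    intro g hg p
    have := hJcomm g hg
    calc g (J p) = (g * J) p := rfl
    _ = (J * g) p := by rw [this]
    _ = J (g p) := rfl
  have hJpush : ∀ (p p' : Fin d × ZMod 2), R.r p p' → R.r (J p) (J p') := by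
    rintro p p' ⟨g, hg, rfl⟩
    exact ⟨g, hg, hJrel g hg p⟩
  set p₀ : Fin d × ZMod 2 := (⟨0, hdpos⟩, 0) with hp₀
  have hnotall : ∃ z, ¬ R.r p₀ z := by
    by_contra hcon
    push_neg at hcon
    have hsub : ∀ q q' : Quotient R, q = q' := by
      intro q q'
      obtain ⟨z, rfl⟩ := Quotient.exists_rep q
      obtain ⟨z', rfl⟩ := Quotient.exists_rep q'
      exact Quotient.sound (R.trans (R.symm (hcon z)) (hcon z'))
    have hle1 : Nat.card (Quotient R) ≤ 1 := by
      have : Function.Injective (fun _ : Quotient R => (0 : Fin 1)) := fun a b _ => hsub a b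
      have h := Nat.card_le_card_of_injective _ this
      simpa using h
    omega
  have hnotboth : ∀ y u, R.r p₀ (y, u) → R.r p₀ (y, u + 1) → False := by
    intro y u hu hu1
    have hJp : R.r (J p₀) (y, u + 1) := by
      have := hJpush p₀ (y, u) hu
      rwa [hJap] at this
    have hp0J : R.r p₀ (J p₀) := R.trans hu1 (R.symm hJp)
    obtain ⟨z, hz⟩ := hnotall
    apply hz
    obtain ⟨w, v⟩ := z
    obtain ⟨v', hv'⟩ := hfiber p₀ w
    rcases zmod2_cases v v' with rfl | rfl
    · exact hv'
    · have := hJpush p₀ (w, v') hv'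
      rw [hJap] at this
      exact R.trans hp0J this
  have hatleast : ∀ y u, R.r p₀ (y, u) ∨ R.r p₀ (y, u + 1) := by
    intro y u
    obtain ⟨v', hv'⟩ := hfiber p₀ y
    rcases zmod2_cases v' u with rfl | h
    · exact Or.inl hv'
    · rw [h] at hv'
      exact Or.inr hv'
  -- relation transport along the generators
  have happly : ∀ (i : Fin n) (x : Fin d) (s : ZMod 2),
      R.r p₀ (x, s) → R.r p₀ (τ i x, s + ε i) := by
    rintro i x s ⟨g, hg, hgp⟩
    refine ⟨Λ i * g, Subgroup.mul_mem _ (Subgroup.subset_closure ⟨i, rfl⟩) hg, ?_⟩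
    show (Λ i) (g p₀) = _
    rw [hgp]
    rfl
  have hinv : ∀ (i : Fin n) (x : Fin d) (s : ZMod 2),
      R.r p₀ (τ i x, s + ε i) → R.r p₀ (x, s) := by
    rintro i x s ⟨g, hg, hgp⟩
    refine ⟨(Λ i)⁻¹ * g, Subgroup.mul_mem _
      (Subgroup.inv_mem _ (Subgroup.subset_closure ⟨i, rfl⟩)) hg, ?_⟩
    show (Λ i)⁻¹ (g p₀) = _
    rw [hgp]
    have : (τ i x, s + ε i) = (Λ i) (x, s) := rfl
    rw [this, Equiv.Perm.inv_def, Equiv.symm_apply_apply]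
  set B : Finset (Fin d) := Finset.univ.filter (fun x => R.r p₀ (x, 0)) with hB
  have hmemB : ∀ x, x ∈ B ↔ R.r p₀ (x, (0 : ZMod 2)) := by
    intro x
    rw [hB]
    simp
  -- the three interchange properties
  have hswap01 : ∀ (i : Fin n), ε i = 1 → ∀ x, x ∈ B ↔ τ i x ∉ B := by
    intro i hεi x
    rw [hmemB x, hmemB (τ i x)]
    constructor
    · intro hx hmem
      have h1' : R.r p₀ (τ i x, (0:ZMod 2) + 1) := by
        have := happly i x 0 hx
        rwa [hεi] at this
      exact hnotboth (τ i x) 0 hmem h1'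
    · intro hnmem
      rcases hatleast (τ i x) 0 with hc | hc
      · exact absurd hc hnmem
      · apply hinv i x 0
        rw [hεi, zero_add]
        rwa [zero_add] at hc
  have hpres : ∀ (i : Fin n), ε i = 0 → ∀ x, x ∈ B ↔ τ i x ∈ B := by
    intro i hεi x
    rw [hmemB x, hmemB (τ i x)]
    constructor
    · intro hx
      have := happly i x 0 hx
      rwa [hεi, add_zero] at this
    · intro hx
      apply hinv i x 0
      rwa [hεi, add_zero]
  have hB0 : ∀ x, x ∈ B ↔ τ i0 x ∉ B := hswap01 i0 hε0
  have hB1 : ∀ x, x ∈ B ↔ τ i1 x ∉ B := hswap01 i1 hε1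
  -- cardinality
  have hcardB : B.card = d / 2 := by
    have hmaps1 : ∀ x ∈ B, τ i0 x ∈ Bᶜ := fun x hx => Finset.mem_compl.2 ((hB0 x).1 hx)
    have hmaps2 : ∀ x ∈ Bᶜ, τ i0 x ∈ B := by
      intro x hx
      by_contra hc
      exact (Finset.mem_compl.1 hx) ((hB0 x).2 hc)
    have hc1 : B.card ≤ Bᶜ.card :=
      Finset.card_le_card_of_injOn (τ i0) hmaps1 ((τ i0).injective.injOn)
    have hc2 : Bᶜ.card ≤ B.card :=
      Finset.card_le_card_of_injOn (τ i0) hmaps2 ((τ i0).injective.injOn)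
    have hcompl : Bᶜ.card = Fintype.card (Fin d) - B.card := Finset.card_compl B
    have hble : B.card ≤ Fintype.card (Fin d) := Finset.card_le_univ B
    rw [Fintype.card_fin] at hcompl hble
    omega
  exact ⟨B, hcardB, hB0, hB1, fun i hi x => hpres i (hεo i hi) x⟩
end
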